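/- arXiv:1011.5318 — 6 statements merged into one kernel-verified Lean document; each statement's English description precedes it below -/
import Mathlib

section
/- For all sufficiently large k one has r_{k+1}/r_k ≥ 2^k; in particular r_{k+1}/r_k → ∞ as k → ∞. -/
open Filter

/-- For all sufficiently large `k` one has `r (k+1) / r k ≥ 2 ^ k`;
in particular `r (k+1) / r k → ∞` as `k → ∞`. -/
theorem stmt_0 (N : ℕ) (C : ℂ) (hC : C ≠ 0)
    (P r : ℕ → ℝ)
    (hP : ∀ k, 1 ≤ k → 0 < P k)
    (hPlim : Tendsto (fun k : ℕ => (P k) ^ ((1 : ℝ) / k)) atTop (nhds 1))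
    (hrpos : ∀ k, 1 ≤ k → 0 < r k)
    (hr2 : ∀ᶠ k in atTop, 2 * r k ≤ r (k + 1))
    (hrec : ∀ k, 1 ≤ k →
      r (k + 1) = P k * (r k) ^ N * ∏ j ∈ Finset.Icc 1 k, (1 + r k / r j)) :
    (∀ᶠ k in atTop, (2 : ℝ) ^ k ≤ r (k + 1) / r k) ∧
      Tendsto (fun k : ℕ => r (k + 1) / r k) atTop atTop := by
  obtain ⟨a, ha⟩ := eventually_atTop.mp hr2
  set k0 := max a 1 with hk0def
  have hk01 : 1 ≤ k0 := le_max_right a 1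
  have hdb : ∀ k, k0 ≤ k → 2 * r k ≤ r (k + 1) := fun k hk => ha k ((le_max_left a 1).trans hk)
  have hrk0 : 0 < r k0 := hrpos k0 hk01
  -- iterated doubling
  have hgrow : ∀ j k, k0 ≤ j → j ≤ k → (2:ℝ) ^ (k - j) * r j ≤ r k := by
    intro j k hj hjk
    induction k, hjk using Nat.le_induction with
    | base => simp
    | succ k hk ih =>
      have h1 : (2:ℝ) ^ (k + 1 - j) * r j = 2 * ((2:ℝ) ^ (k - j) * r j) := by
        rw [Nat.succ_sub hk, pow_succ]; ring
      rw [h1]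
      calc 2 * ((2:ℝ) ^ (k - j) * r j) ≤ 2 * r k := by linarith
        _ ≤ r (k + 1) := hdb k (hj.trans hk)
  -- choose m with 1 < 2^m * r k0
  obtain ⟨m, hm⟩ := pow_unbounded_of_one_lt (1 / r k0) (one_lt_two : (1:ℝ) < 2)
  have hm' : 1 < (2:ℝ) ^ m * r k0 := by
    rw [div_lt_iff₀ hrk0] at hm; linarith
  have hr1 : ∀ k, k0 + m ≤ k → 1 ≤ r k := by
    intro k hk
    have h1 := hgrow k0 k le_rfl (by omega)
    have h2 : (2:ℝ) ^ m ≤ 2 ^ (k - k0) := pow_le_pow_right₀ one_le_two (by omega)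
    nlinarith [hrk0]
  -- choose M with r k0 ≤ 2^M
  obtain ⟨M, hM⟩ := pow_unbounded_of_one_lt (r k0) (one_lt_two : (1:ℝ) < 2)
  -- eventually P k ≥ (1/2)^k
  have hP2 : ∀ᶠ k in atTop, ((1:ℝ)/2) ^ k ≤ P k := by
    have h1 : ∀ᶠ k in atTop, (1:ℝ)/2 ≤ (P k) ^ ((1:ℝ)/k) :=
      hPlim.eventually (eventually_ge_nhds (by norm_num))
    filter_upwards [h1, eventually_ge_atTop 1] with k hk hk1
    have hPk := hP k hk1
    have hkne : (k:ℝ) ≠ 0 := by exact_mod_cast Nat.one_le_iff_ne_zero.mp hk1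
    have heq : ((P k) ^ ((1:ℝ)/k)) ^ k = P k := by
      rw [← Real.rpow_natCast ((P k) ^ ((1:ℝ)/(k:ℝ))) k, ← Real.rpow_mul hPk.le,
        one_div, inv_mul_cancel₀ hkne, Real.rpow_one]
    calc ((1:ℝ)/2) ^ k ≤ ((P k) ^ ((1:ℝ)/k)) ^ k := pow_le_pow_left₀ (by norm_num) hk k
      _ = P k := heq
  have key : ∀ᶠ k in atTop, (2:ℝ) ^ k ≤ r (k + 1) / r k := by
    filter_upwards [hP2, eventually_ge_atTop (k0 + m + 5 * k0 + 2 * M + 5)] with k hPk hk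
    have hk0k : k0 ≤ k := by omega
    have hk1 : 1 ≤ k := hk01.trans hk0k
    have hrk : 0 < r k := hrpos k hk1
    have hrk1 : 1 ≤ r k := hr1 k (by omega)
    set n := k - k0 with hn
    set S := ∑ j ∈ Finset.Ico (k0 + 1) (k + 1), (k - j) with hS
    -- sum lower bound
    have hSum : 2 * k + M ≤ S := by
      have e1 : S = ∑ i ∈ Finset.range n, i := by
        rw [hS, Finset.sum_Ico_eq_sum_range]
        have e2 : k + 1 - (k0 + 1) = n := by omega
        rw [e2]
        rw [← Finset.sum_range_reflect (fun i => i) n]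
        exact Finset.sum_congr rfl (fun i hi => by
          have := Finset.mem_range.mp hi; omega)
      have e3 := Finset.sum_range_id_mul_two n
      have hnge : 4 * k0 + 2 * M + 5 ≤ n := by omega
      have : (2 * k + M) * 2 ≤ n * (n - 1) := by
        have h4 : 4 + 4 * k0 + 2 * M ≤ n - 1 := by omega
        calc (2 * k + M) * 2 = 4 * n + (4 * k0 + 2 * M) := by omega
          _ ≤ 4 * n + n * (4 * k0 + 2 * M) := by nlinarith
          _ = n * (4 + 4 * k0 + 2 * M) := by ring
          _ ≤ n * (n - 1) := Nat.mul_le_mul_left n h4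
      omega
    -- product bound
    have hprod1 : ∀ j ∈ Finset.Ico (k0 + 1) (k + 1), (2:ℝ) ^ (k - j) ≤ 1 + r k / r j := by
      intro j hj
      rw [Finset.mem_Ico] at hj
      have hj0 : k0 ≤ j := by omega
      have hrj : 0 < r j := hrpos j (hk01.trans hj0)
      have h1 : (2:ℝ) ^ (k - j) ≤ r k / r j :=
        (le_div_iff₀ hrj).mpr (hgrow j k hj0 (by omega))
      have h2 : 0 ≤ r k / r j := div_nonneg hrk.le hrj.le
      linarith
    have hprodA : (2:ℝ) ^ S ≤ ∏ j ∈ Finset.Ico (k0 + 1) (k + 1), (1 + r k / r j) := by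
      rw [hS, ← Finset.prod_pow_eq_pow_sum]
      exact Finset.prod_le_prod (fun j _ => pow_nonneg (by norm_num) _) hprod1
    have hsplit : ∏ j ∈ Finset.Ico k0 (k + 1), (1 + r k / r j)
        = (1 + r k / r k0) * ∏ j ∈ Finset.Ico (k0 + 1) (k + 1), (1 + r k / r j) :=
      Finset.prod_eq_prod_Ico_succ_bot (by omega) _
    have hpos1 : ∀ j ∈ Finset.Icc 1 k, (0:ℝ) ≤ 1 + r k / r j := by
      intro j hj
      rw [Finset.mem_Icc] at hj
      have hrj : 0 < r j := hrpos j hj.1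
      have : 0 ≤ r k / r j := div_nonneg hrk.le hrj.le
      linarith
    have hsub : Finset.Ico k0 (k + 1) ⊆ Finset.Icc 1 k := by
      intro x hx
      rw [Finset.mem_Ico] at hx
      rw [Finset.mem_Icc]
      omega
    have hprodB : (r k / r k0) * 2 ^ S ≤ ∏ j ∈ Finset.Icc 1 k, (1 + r k / r j) := by
      have h1 : (r k / r k0) * 2 ^ S ≤ ∏ j ∈ Finset.Ico k0 (k + 1), (1 + r k / r j) := by
        rw [hsplit]
        have hc : (0:ℝ) ≤ r k / r k0 := div_nonneg hrk.le hrk0.le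
        apply mul_le_mul (by linarith) hprodA (pow_nonneg (by norm_num) _) (by linarith)
      have h2 : ∏ j ∈ Finset.Ico k0 (k + 1), (1 + r k / r j)
          ≤ ∏ j ∈ Finset.Icc 1 k, (1 + r k / r j) := by
        rw [← Finset.prod_sdiff hsub]
        have h3 : (1:ℝ) ≤ ∏ j ∈ Finset.Icc 1 k \ Finset.Ico k0 (k + 1), (1 + r k / r j) := by
          have h3' := Finset.prod_le_prod (s := Finset.Icc 1 k \ Finset.Ico k0 (k + 1))
            (f := fun _ => (1:ℝ)) (g := fun j => 1 + r k / r j)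
            (fun _ _ => zero_le_one) ?_
          · simpa using h3'
          · intro j hj
            have hj' := Finset.mem_sdiff.mp hj
            rw [Finset.mem_Icc] at hj'
            have hrj : 0 < r j := hrpos j hj'.1.1
            have : 0 ≤ r k / r j := div_nonneg hrk.le hrj.le
            linarith
        have h4 : 0 ≤ ∏ j ∈ Finset.Ico k0 (k + 1), (1 + r k / r j) :=
          Finset.prod_nonneg (fun j hj => hpos1 j (hsub hj))
        nlinarith
      linarith
    -- now assemble
    have hPk0 : 0 < P k := hP k hk1
    have hrec' := hrec k hk1
    have hstep : (2:ℝ) ^ k * r k0 * 2 ^ k ≤ 2 ^ S := by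
      have h5 : (2:ℝ) ^ (2 * k + M) ≤ 2 ^ S := pow_le_pow_right₀ one_le_two hSum
      have h6 : (2:ℝ) ^ k * r k0 * 2 ^ k ≤ 2 ^ k * 2 ^ M * 2 ^ k := by
        have h0 : (0:ℝ) ≤ 2 ^ k := by positivity
        exact mul_le_mul_of_nonneg_right (mul_le_mul_of_nonneg_left hM.le h0) h0
      calc (2:ℝ) ^ k * r k0 * 2 ^ k ≤ 2 ^ k * 2 ^ M * 2 ^ k := h6
        _ = 2 ^ (2 * k + M) := by rw [← pow_add, ← pow_add]; ring_nf
        _ ≤ 2 ^ S := h5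
    have hA : (2:ℝ) ^ k * 2 ^ k * r k ≤ r k / r k0 * 2 ^ S := by
      rw [div_mul_eq_mul_div, le_div_iff₀ hrk0]
      calc (2:ℝ) ^ k * 2 ^ k * r k * r k0 = (2 ^ k * r k0 * 2 ^ k) * r k := by ring
        _ ≤ 2 ^ S * r k := mul_le_mul_of_nonneg_right hstep hrk.le
        _ = r k * 2 ^ S := mul_comm _ _
    have hNpow : (1:ℝ) ≤ r k ^ N := by
      calc (1:ℝ) = 1 ^ N := (one_pow N).symm
        _ ≤ r k ^ N := pow_le_pow_left₀ zero_le_one hrk1 N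
    have hApos : (0:ℝ) ≤ r k / r k0 * 2 ^ S := by positivity
    have hfin : (2:ℝ) ^ k * r k ≤ P k * r k ^ N * (r k / r k0 * 2 ^ S) := by
      have heq : ((1:ℝ)/2) ^ k * (2 ^ k * 2 ^ k * r k) = 2 ^ k * r k := by
        rw [show ((1:ℝ)/2) ^ k * (2 ^ k * 2 ^ k * r k) = ((1/2) * 2) ^ k * (2 ^ k * r k) by
          rw [mul_pow]; ring]
        norm_num
      have hcd : (2:ℝ) ^ k * 2 ^ k * r k ≤ r k ^ N * (r k / r k0 * 2 ^ S) :=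
        hA.trans (le_mul_of_one_le_left hApos hNpow)
      calc (2:ℝ) ^ k * r k = ((1:ℝ)/2) ^ k * (2 ^ k * 2 ^ k * r k) := heq.symm
        _ ≤ P k * (r k ^ N * (r k / r k0 * 2 ^ S)) :=
          mul_le_mul hPk hcd (by positivity) hPk0.le
        _ = P k * r k ^ N * (r k / r k0 * 2 ^ S) := (mul_assoc _ _ _).symm
    rw [le_div_iff₀ hrk, hrec']
    calc (2:ℝ) ^ k * r k ≤ P k * r k ^ N * (r k / r k0 * 2 ^ S) := hfin
      _ ≤ P k * r k ^ N * ∏ j ∈ Finset.Icc 1 k, (1 + r k / r j) :=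
        mul_le_mul_of_nonneg_left hprodB (by positivity)
  exact ⟨key, tendsto_atTop_mono' _ key (tendsto_pow_atTop_atTop_of_one_lt one_lt_two)⟩
end

section
/- For all 0 < α < β and every ε > 0 there exists K such that for all k ≥ K and all complex w with α ≤ |w| ≤ β, (1−ε)·|w|^{k−1} ∏_{j=1}^{k−1}(1 + r_k/r_j) ≤ |∏_{j=1}^{k−1}(1 − w a_k/a_j)| ≤ (1+ε)·|w|^{k−1} ∏_{j=1}^{k−1}(1 + r_k/r_j). -/
open Filter

/-- Weierstrass-type inequality: `1 - ∑ t ≤ ∏ (1 - t)` for `t i ∈ [0, 1]`. -/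
lemma aux_one_sub_sum_le_prod (s : Finset ℕ) (f : ℕ → ℝ)
    (h0 : ∀ i ∈ s, 0 ≤ f i) (h1 : ∀ i ∈ s, f i ≤ 1) :
    1 - ∑ i ∈ s, f i ≤ ∏ i ∈ s, (1 - f i) := by
  induction s using Finset.cons_induction with
  | empty => simp
  | cons a s ha ih =>
    rw [Finset.prod_cons, Finset.sum_cons]
    have h0a : 0 ≤ f a := h0 a (Finset.mem_cons_self a s)
    have h1a : f a ≤ 1 := h1 a (Finset.mem_cons_self a s)
    have ihs : 1 - ∑ i ∈ s, f i ≤ ∏ i ∈ s, (1 - f i) :=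
      ih (fun i hi => h0 i (Finset.mem_cons_of_mem hi))
        (fun i hi => h1 i (Finset.mem_cons_of_mem hi))
    have hsum0 : 0 ≤ ∑ i ∈ s, f i := Finset.sum_nonneg (fun i hi => h0 i (Finset.mem_cons_of_mem hi))
    have hmul : (1 - f a) * (1 - ∑ i ∈ s, f i) ≤ (1 - f a) * ∏ i ∈ s, (1 - f i) :=
      mul_le_mul_of_nonneg_left ihs (by linarith)
    nlinarith [hmul]

lemma aux_factor_upper (W c x t : ℝ) (hW0 : 0 < W) (hc0 : 0 < c) (ht0 : 0 < t)
    (htx : t * x = 1) (hWc : W + 1 ≤ W * c) :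
    1 + W * x ≤ W * (1 + x) * (1 + c * t) := by
  have he : W * (1 + x) * (1 + c * t) = W + W * x + W * c * (t * x) + W * c * t := by ring
  rw [he, htx]
  nlinarith [mul_nonneg (mul_nonneg hW0.le hc0.le) ht0.le]

lemma aux_factor_lower (W c x t : ℝ) (hW0 : 0 < W) (hc0 : 0 < c) (ht0 : 0 < t)
    (htx : t * x = 1) (hWc : W + 1 ≤ W * c) :
    W * (1 + x) * (1 - c * t) ≤ W * x - 1 := by
  have he : W * (1 + x) * (1 - c * t) = W + W * x - W * c * (t * x) - W * c * t := by ring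
  rw [he, htx]
  nlinarith [mul_nonneg (mul_nonneg hW0.le hc0.le) ht0.le]

/-- uniform asymptotics for the partial products
`∏_{j=1}^{k-1} (1 - w a_k / a_j)` on annuli `α ≤ |w| ≤ β`. -/
theorem stmt_1 (N : ℕ) (C : ℂ) (hC : C ≠ 0)
    (P r : ℕ → ℝ)
    (hP : ∀ k, 1 ≤ k → 0 < P k)
    (hPlim : Tendsto (fun k : ℕ => (P k) ^ ((1 : ℝ) / k)) atTop (nhds 1))
    (hrpos : ∀ k, 1 ≤ k → 0 < r k)
    (hr2 : ∀ᶠ k in atTop, 2 * r k ≤ r (k + 1))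
    (hrec : ∀ k, 1 ≤ k →
      r (k + 1) = P k * (r k) ^ N * ∏ j ∈ Finset.Icc 1 k, (1 + r k / r j))
    (a : ℕ → ℂ) (ha : ∀ k, 1 ≤ k → ‖a k‖ = r k) :
    ∀ α β : ℝ, 0 < α → α < β → ∀ ε : ℝ, 0 < ε → ∃ K : ℕ, ∀ k, K ≤ k →
      ∀ w : ℂ, α ≤ ‖w‖ → ‖w‖ ≤ β →
        (1 - ε) * ((‖w‖) ^ (k - 1) * ∏ j ∈ Finset.Icc 1 (k - 1), (1 + r k / r j)) ≤
            ‖∏ j ∈ Finset.Icc 1 (k - 1), (1 - w * a k / a j)‖ ∧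
          ‖∏ j ∈ Finset.Icc 1 (k - 1), (1 - w * a k / a j)‖ ≤
            (1 + ε) * ((‖w‖) ^ (k - 1) * ∏ j ∈ Finset.Icc 1 (k - 1), (1 + r k / r j)) := by
  -- basic setup: a threshold K0 from which the doubling holds
  obtain ⟨K0', hK0'⟩ := eventually_atTop.mp hr2
  set K0 : ℕ := max K0' 1 with hK0def
  have hK01 : 1 ≤ K0 := le_max_right _ _
  have hK0 : ∀ k, K0 ≤ k → 2 * r k ≤ r (k + 1) := fun k hk =>
    hK0' k (le_trans (le_max_left _ _) hk)
  have hrK0 : 0 < r K0 := hrpos K0 hK01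
  -- geometric growth from K0
  have hgrow : ∀ k, K0 ≤ k → (2 : ℝ) ^ (k - K0) * r K0 ≤ r k := by
    intro k hk
    induction k, hk using Nat.le_induction with
    | base => simp
    | succ n hn ih =>
      have h2n := hK0 n hn
      have he : (2 : ℝ) ^ (n + 1 - K0) = 2 * 2 ^ (n - K0) := by
        rw [← pow_succ']
        congr 1
        omega
      rw [he]
      have : 2 * ((2 : ℝ) ^ (n - K0) * r K0) ≤ 2 * r n :=
        mul_le_mul_of_nonneg_left ih (by norm_num)
      calc 2 * (2 : ℝ) ^ (n - K0) * r K0 = 2 * ((2 : ℝ) ^ (n - K0) * r K0) := by ring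
        _ ≤ 2 * r n := this
        _ ≤ r (n + 1) := h2n
  -- r tends to infinity
  have h2pow : Tendsto (fun k : ℕ => (2 : ℝ) ^ (k - K0) * r K0) atTop atTop :=
    Tendsto.atTop_mul_const hrK0
      ((tendsto_pow_atTop_atTop_of_one_lt (by norm_num : (1:ℝ) < 2)).comp
        (tendsto_sub_atTop_nat K0))
  have hrtop : Tendsto r atTop atTop := by
    apply tendsto_atTop_mono' atTop _ h2pow
    filter_upwards [eventually_ge_atTop K0] with k hk
    exact hgrow k hk
  -- lower bound for P
  have h34 : ∀ᶠ k : ℕ in atTop, (3:ℝ)/4 ≤ (P k) ^ ((1:ℝ)/k) :=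
    hPlim.eventually (eventually_ge_nhds (by norm_num : (3:ℝ)/4 < 1))
  have hPk : ∀ᶠ k : ℕ in atTop, ((3:ℝ)/4) ^ k ≤ P k := by
    filter_upwards [h34, eventually_ge_atTop 1] with k h1 hk1
    have hPk0 : 0 < P k := hP k hk1
    have hkne : (k : ℝ) ≠ 0 := Nat.cast_ne_zero.mpr (by omega)
    have h2 : ((3:ℝ)/4) ^ k ≤ ((P k) ^ ((1:ℝ)/k)) ^ k :=
      pow_le_pow_left₀ (by norm_num) h1 k
    have h3 : ((P k) ^ ((1:ℝ)/k)) ^ k = P k := by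
      rw [← Real.rpow_natCast ((P k) ^ ((1:ℝ)/k)) k, ← Real.rpow_mul hPk0.le,
        one_div_mul_cancel hkne, Real.rpow_one]
    rwa [h3] at h2
  -- P k * r k tends to infinity
  have hPr : Tendsto (fun k => P k * r k) atTop atTop := by
    have h32 : Tendsto (fun k : ℕ => ((3:ℝ)/2) ^ k * (r K0 / 2 ^ K0)) atTop atTop :=
      Tendsto.atTop_mul_const (by positivity)
        (tendsto_pow_atTop_atTop_of_one_lt (by norm_num : (1:ℝ) < 3/2))
    apply tendsto_atTop_mono' atTop _ h32
    filter_upwards [hPk, eventually_ge_atTop K0] with k h34k hkK0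
    have hgk := hgrow k hkK0
    have h2e : (2 : ℝ) ^ (k - K0) = 2 ^ k / 2 ^ K0 := by
      rw [eq_div_iff (by positivity), ← pow_add]
      congr 1
      omega
    have hpowmul : ((3:ℝ)/4) ^ k * (2:ℝ) ^ k = ((3:ℝ)/2) ^ k := by
      rw [← mul_pow]; norm_num
    have hle : ((3:ℝ)/4) ^ k * ((2 : ℝ) ^ (k - K0) * r K0) ≤ P k * r k := by
      apply mul_le_mul h34k hgk (by positivity)
      exact le_trans (by positivity) h34k
    calc ((3:ℝ)/2) ^ k * (r K0 / 2 ^ K0)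
        = ((3:ℝ)/4) ^ k * ((2 : ℝ) ^ (k - K0) * r K0) := by
          rw [h2e, ← hpowmul]; ring
      _ ≤ P k * r k := hle
  -- the ratio r(k+1)/r(k) tends to infinity
  have hratio : ∀ M : ℝ, ∀ᶠ k in atTop, M * r k ≤ r (k + 1) := by
    intro M
    have hr1 : 0 < r 1 := hrpos 1 le_rfl
    have hr2' : 0 < r 2 := hrpos 2 (by norm_num)
    filter_upwards [eventually_ge_atTop 2, hrtop.eventually_ge_atTop 1,
      hPr.eventually_ge_atTop (M * (r 1 * r 2))] with k hk2 hrk1 hM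
    have hk1 : 1 ≤ k := by omega
    have hrk0 : 0 < r k := hrpos k hk1
    have hPk0 : 0 < P k := hP k hk1
    -- product lower bound
    have hprodge : r k / r 1 * (r k / r 2) ≤ ∏ j ∈ Finset.Icc 1 k, (1 + r k / r j) := by
      have hsub : ({1, 2} : Finset ℕ) ⊆ Finset.Icc 1 k := by
        intro x hx
        simp only [Finset.mem_insert, Finset.mem_singleton] at hx
        rcases hx with h | h <;> simp [Finset.mem_Icc, h] <;> omega
      have h12 : ∏ j ∈ ({1, 2} : Finset ℕ), (1 + r k / r j)
          = (1 + r k / r 1) * (1 + r k / r 2) := Finset.prod_pair (by norm_num)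
      have hstep : r k / r 1 * (r k / r 2) ≤ (1 + r k / r 1) * (1 + r k / r 2) := by
        have ha1 : 0 ≤ r k / r 1 := by positivity
        have ha2 : 0 ≤ r k / r 2 := by positivity
        nlinarith
      refine le_trans hstep ?_
      rw [← h12, ← Finset.prod_sdiff hsub]
      have hpairnn : 0 ≤ ∏ j ∈ ({1, 2} : Finset ℕ), (1 + r k / r j) := by
        rw [h12]; positivity
      have hone : (1:ℝ) ≤ ∏ j ∈ (Finset.Icc 1 k \ ({1, 2} : Finset ℕ)), (1 + r k / r j) := by
        have h0 := Finset.prod_le_prod (s := Finset.Icc 1 k \ ({1, 2} : Finset ℕ))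
          (f := fun _ => (1:ℝ)) (g := fun j => 1 + r k / r j)
          (fun i _ => by norm_num)
          (fun i hi => by
            have hi1 : 1 ≤ i := (Finset.mem_Icc.mp (Finset.mem_sdiff.mp hi).1).1
            have := hrpos i hi1
            have : 0 ≤ r k / r i := by positivity
            linarith)
        simpa using h0
      exact le_mul_of_one_le_left hpairnn hone
    have hprodnn : 0 ≤ ∏ j ∈ Finset.Icc 1 k, (1 + r k / r j) := by
      apply Finset.prod_nonneg
      intro i hi
      have hi1 : 1 ≤ i := (Finset.mem_Icc.mp hi).1
      have := hrpos i hi1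
      have : 0 ≤ r k / r i := by positivity
      linarith
    have h1N : 1 ≤ r k ^ N := one_le_pow₀ hrk1
    have key : M * r k ≤ P k * (r k / r 1 * (r k / r 2)) := by
      have h5 := mul_le_mul_of_nonneg_right hM hrk0.le
      rw [div_mul_div_comm, ← mul_div_assoc, le_div_iff₀ (by positivity)]
      nlinarith [h5]
    calc M * r k ≤ P k * (r k / r 1 * (r k / r 2)) := key
      _ ≤ P k * (r k ^ N * ∏ j ∈ Finset.Icc 1 k, (1 + r k / r j)) := by
          apply mul_le_mul_of_nonneg_left _ hPk0.le
          exact le_trans hprodge (le_mul_of_one_le_left hprodnn h1N)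
      _ = P k * r k ^ N * ∏ j ∈ Finset.Icc 1 k, (1 + r k / r j) := by ring
      _ = r (k + 1) := (hrec k hk1).symm
  -- partial sums of r are dominated by the last term
  have hpartial : ∀ k, K0 ≤ k →
      ∑ j ∈ Finset.Icc 1 k, r j ≤ (∑ j ∈ Finset.Icc 1 K0, r j) + 2 * r k := by
    intro k hk
    induction k, hk using Nat.le_induction with
    | base => linarith [hrK0]
    | succ n hn ih =>
      rw [Finset.sum_Icc_succ_top (by omega)]
      have h2n := hK0 n hn
      linarith
  -- smallness of the normalized partial sums
  have hS : ∀ δ : ℝ, 0 < δ → ∀ᶠ k in atTop, (∑ j ∈ Finset.Icc 1 (k - 1), r j) ≤ δ * r k := by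
    intro δ hδ
    set A0 : ℝ := ∑ j ∈ Finset.Icc 1 K0, r j with hA0
    obtain ⟨K1, hK1⟩ := eventually_atTop.mp (hratio (4 / δ))
    filter_upwards [eventually_ge_atTop (K0 + 1), eventually_ge_atTop (K1 + 1),
      hrtop.eventually_ge_atTop (2 * A0 / δ)] with k hkK0 hkK1 hrkA
    have hk1 : 1 ≤ k := by omega
    have hkm : k - 1 + 1 = k := by omega
    have hpart := hpartial (k - 1) (by omega)
    have hrat := hK1 (k - 1) (by omega)
    rw [hkm] at hrat
    have hrk0 : 0 < r k := hrpos k hk1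
    -- A0 ≤ (δ/2) * r k
    have hA : A0 ≤ δ / 2 * r k := by
      have : 2 * A0 / δ ≤ r k := hrkA
      rw [div_le_iff₀ hδ] at this
      nlinarith
    -- 2 * r (k-1) ≤ (δ/2) * r k
    have hB : 2 * r (k - 1) ≤ δ / 2 * r k := by
      have h4 : 4 / δ * r (k - 1) ≤ r k := hrat
      have hδ4 : 0 < δ / 4 := by positivity
      have h6 := mul_le_mul_of_nonneg_left h4 hδ4.le
      have heq : δ / 4 * (4 / δ * r (k - 1)) = r (k - 1) := by
        field_simp
      rw [heq] at h6
      linarith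
    linarith
  -- Now the main argument
  intro α β hα hαβ ε hε
  obtain ⟨c, hcdef⟩ : ∃ c : ℝ, c = 1 + 1 / α := ⟨_, rfl⟩
  have hc0 : 0 < c := by rw [hcdef]; positivity
  have hlog : 0 < Real.log (1 + ε) := Real.log_pos (by linarith)
  obtain ⟨m, hmdef⟩ : ∃ m : ℝ, m = min ε (min (Real.log (1 + ε)) (1/2)) := ⟨_, rfl⟩
  have hm0 : 0 < m := by
    rw [hmdef]
    apply lt_min hε
    apply lt_min hlog
    norm_num
  obtain ⟨K, hK⟩ := eventually_atTop.mp
    ((hS (m / c) (by positivity)).and (eventually_ge_atTop 1))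
  refine ⟨K, fun k hk w hw1 hw2 => ?_⟩
  obtain ⟨hsumk, hk1⟩ := hK k hk
  obtain ⟨W, hWdef⟩ : ∃ W : ℝ, W = ‖w‖ := ⟨_, rfl⟩
  rw [← hWdef] at hw1 hw2 ⊢
  have hW0 : 0 < W := lt_of_lt_of_le hα hw1
  have hrk0 : 0 < r k := hrpos k hk1
  obtain ⟨s, hsdef⟩ : ∃ s : Finset ℕ, s = Finset.Icc 1 (k - 1) := ⟨_, rfl⟩
  rw [← hsdef] at hsumk ⊢
  have hcard : s.card = k - 1 := by
    rw [hsdef, Nat.card_Icc]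
    omega
  -- W*c ≥ W + 1
  have hWc : W + 1 ≤ W * c := by
    have h1 : (1:ℝ) ≤ W / α := (one_le_div hα).mpr hw1
    have h2 : W * c = W + W / α := by
      rw [hcdef]; ring
    linarith
  -- normalized sum bound
  have hT : c * ∑ j ∈ s, r j / r k ≤ m := by
    have h2 : (∑ j ∈ s, r j / r k) ≤ m / c := by
      rw [← Finset.sum_div, div_le_iff₀ hrk0]
      exact hsumk
    have h3 := mul_le_mul_of_nonneg_left h2 hc0.le
    have h4 : c * (m / c) = m := by field_simp
    linarith
  have htnn : ∀ j ∈ s, 0 ≤ r j / r k := by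
    intro j hj
    have hj1 : 1 ≤ j := (Finset.mem_Icc.mp (by rw [← hsdef]; exact hj)).1
    have := hrpos j hj1
    positivity
  have hctnn : ∀ j ∈ s, 0 ≤ c * (r j / r k) := fun j hj =>
    mul_nonneg hc0.le (htnn j hj)
  have hct_le : ∀ j ∈ s, c * (r j / r k) ≤ m := by
    intro j hj
    calc c * (r j / r k) ≤ c * ∑ i ∈ s, r i / r k := by
          apply mul_le_mul_of_nonneg_left _ hc0.le
          exact Finset.single_le_sum htnn hj
      _ ≤ m := hT
  have hm_half : m ≤ 1/2 := by
    rw [hmdef]; exact le_trans (min_le_right _ _) (min_le_right _ _)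
  have hm_eps : m ≤ ε := by rw [hmdef]; exact min_le_left _ _
  have hm_log : m ≤ Real.log (1 + ε) := by
    rw [hmdef]; exact le_trans (min_le_right _ _) (min_le_left _ _)
  -- per-factor data
  have habsfac : ∀ j ∈ s, ‖w * a k / a j‖ = W * (r k / r j) := by
    intro j hj
    have hj1 : 1 ≤ j := (Finset.mem_Icc.mp (by rw [← hsdef]; exact hj)).1
    rw [norm_div, norm_mul, ha k hk1, ha j hj1, ← hWdef, mul_div_assoc]
  -- per-factor upper bound
  have hupper : ∀ j ∈ s, ‖1 - w * a k / a j‖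
      ≤ W * (1 + r k / r j) * (1 + c * (r j / r k)) := by
    intro j hj
    have hj1 : 1 ≤ j := (Finset.mem_Icc.mp (by rw [← hsdef]; exact hj)).1
    have hrj0 : 0 < r j := hrpos j hj1
    have htri : ‖1 - w * a k / a j‖ ≤ 1 + W * (r k / r j) := by
      have h0 := norm_sub_le (1 : ℂ) (w * a k / a j)
      rw [habsfac j hj, norm_one] at h0
      exact h0
    refine le_trans htri ?_
    have ht0 : 0 < r j / r k := by positivity
    have htx : r j / r k * (r k / r j) = 1 := by field_simp
    exact aux_factor_upper W c (r k / r j) (r j / r k) hW0 hc0 ht0 htx hWc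
  -- per-factor lower bound
  have hlower : ∀ j ∈ s, W * (1 + r k / r j) * (1 - c * (r j / r k))
      ≤ ‖1 - w * a k / a j‖ := by
    intro j hj
    have hj1 : 1 ≤ j := (Finset.mem_Icc.mp (by rw [← hsdef]; exact hj)).1
    have hrj0 : 0 < r j := hrpos j hj1
    have htri : W * (r k / r j) - 1 ≤ ‖1 - w * a k / a j‖ := by
      have h0 := norm_sub_norm_le (w * a k / a j) (1 : ℂ)
      rw [norm_sub_rev, habsfac j hj, norm_one] at h0
      exact h0
    refine le_trans ?_ htri
    have ht0 : 0 < r j / r k := by positivity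
    have htx : r j / r k * (r k / r j) = 1 := by field_simp
    exact aux_factor_lower W c (r k / r j) (r j / r k) hW0 hc0 ht0 htx hWc
  -- positivity of the target product
  have hxnn : ∀ j ∈ s, (0:ℝ) ≤ 1 + r k / r j := by
    intro j hj
    have hj1 : 1 ≤ j := (Finset.mem_Icc.mp (by rw [← hsdef]; exact hj)).1
    have := hrpos j hj1
    have : 0 ≤ r k / r j := by positivity
    linarith
  have hQnn : 0 ≤ W ^ (k - 1) * ∏ j ∈ s, (1 + r k / r j) := by
    apply mul_nonneg (pow_nonneg hW0.le _)
    exact Finset.prod_nonneg hxnn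
  -- rewrite the absolute value of the product
  have habsprod : ‖∏ j ∈ s, (1 - w * a k / a j)‖
      = ∏ j ∈ s, ‖1 - w * a k / a j‖ := by rw [norm_prod]
  have hGprod : ∏ j ∈ s, (W * (1 + r k / r j))
      = W ^ (k - 1) * ∏ j ∈ s, (1 + r k / r j) := by
    rw [Finset.prod_mul_distrib, Finset.prod_const, hcard]
  constructor
  · -- lower bound
    rw [habsprod]
    have hstep1 : ∏ j ∈ s, (W * (1 + r k / r j) * (1 - c * (r j / r k)))
        ≤ ∏ j ∈ s, ‖1 - w * a k / a j‖ := by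
      apply Finset.prod_le_prod _ hlower
      intro j hj
      have h1 : c * (r j / r k) ≤ m := hct_le j hj
      have : (0:ℝ) ≤ 1 - c * (r j / r k) := by linarith [hm_half]
      exact mul_nonneg (mul_nonneg hW0.le (hxnn j hj)) this
    have hstep2 : ∏ j ∈ s, (W * (1 + r k / r j) * (1 - c * (r j / r k)))
        = (W ^ (k - 1) * ∏ j ∈ s, (1 + r k / r j)) * ∏ j ∈ s, (1 - c * (r j / r k)) := by
      rw [Finset.prod_mul_distrib, hGprod]
    have hstep3 : 1 - ε ≤ ∏ j ∈ s, (1 - c * (r j / r k)) := by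
      have hw1' := aux_one_sub_sum_le_prod s (fun j => c * (r j / r k)) hctnn
        (fun j hj => le_trans (hct_le j hj) (by linarith [hm_half]))
      have hsum' : ∑ j ∈ s, c * (r j / r k) ≤ ε := by
        rw [← Finset.mul_sum]
        exact le_trans hT hm_eps
      calc (1:ℝ) - ε ≤ 1 - ∑ j ∈ s, c * (r j / r k) := by linarith
        _ ≤ ∏ j ∈ s, (1 - c * (r j / r k)) := hw1'
    calc (1 - ε) * (W ^ (k - 1) * ∏ j ∈ s, (1 + r k / r j))
        ≤ (∏ j ∈ s, (1 - c * (r j / r k))) * (W ^ (k - 1) * ∏ j ∈ s, (1 + r k / r j)) :=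
          mul_le_mul_of_nonneg_right hstep3 hQnn
      _ = ∏ j ∈ s, (W * (1 + r k / r j) * (1 - c * (r j / r k))) := by rw [hstep2]; ring
      _ ≤ ∏ j ∈ s, ‖1 - w * a k / a j‖ := hstep1
  · -- upper bound
    rw [habsprod]
    have hstep1 : ∏ j ∈ s, ‖1 - w * a k / a j‖
        ≤ ∏ j ∈ s, (W * (1 + r k / r j) * (1 + c * (r j / r k))) := by
      apply Finset.prod_le_prod _ hupper
      intro j hj
      exact norm_nonneg _
    have hstep2 : ∏ j ∈ s, (W * (1 + r k / r j) * (1 + c * (r j / r k)))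
        = (W ^ (k - 1) * ∏ j ∈ s, (1 + r k / r j)) * ∏ j ∈ s, (1 + c * (r j / r k)) := by
      rw [Finset.prod_mul_distrib, hGprod]
    have hstep3 : ∏ j ∈ s, (1 + c * (r j / r k)) ≤ 1 + ε := by
      have hexp : ∏ j ∈ s, (1 + c * (r j / r k)) ≤ ∏ j ∈ s, Real.exp (c * (r j / r k)) := by
        apply Finset.prod_le_prod
        · intro j hj
          have := hctnn j hj
          linarith
        · intro j hj
          have := Real.add_one_le_exp (c * (r j / r k))
          linarith
      rw [← Real.exp_sum] at hexp
      refine le_trans hexp ?_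
      have hsum' : ∑ j ∈ s, c * (r j / r k) ≤ Real.log (1 + ε) := by
        rw [← Finset.mul_sum]
        exact le_trans hT hm_log
      calc Real.exp (∑ j ∈ s, c * (r j / r k)) ≤ Real.exp (Real.log (1 + ε)) :=
            Real.exp_le_exp.mpr hsum'
        _ = 1 + ε := Real.exp_log (by linarith)
    calc ∏ j ∈ s, ‖1 - w * a k / a j‖
        ≤ ∏ j ∈ s, (W * (1 + r k / r j) * (1 + c * (r j / r k))) := hstep1
      _ = (W ^ (k - 1) * ∏ j ∈ s, (1 + r k / r j)) * ∏ j ∈ s, (1 + c * (r j / r k)) := hstep2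
      _ ≤ (W ^ (k - 1) * ∏ j ∈ s, (1 + r k / r j)) * (1 + ε) :=
          mul_le_mul_of_nonneg_left hstep3 hQnn
      _ = (1 + ε) * (W ^ (k - 1) * ∏ j ∈ s, (1 + r k / r j)) := by ring
end

section
/- For all 0 < α < β, the tail products converge to 1 uniformly: sup over complex w with α ≤ |w| ≤ β of |∏_{j=k+1}^{∞}(1 − w a_k/a_j) − 1| tends to 0 as k → ∞. -/
open Filter

/-- the tail products `∏_{j=k+1}^∞ (1 - w a_k / a_j)` tend to `1`
uniformly on annuli `α ≤ |w| ≤ β` as `k → ∞`. -/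
theorem stmt_2 (N : ℕ) (C : ℂ) (hC : C ≠ 0)
    (P r : ℕ → ℝ)
    (hP : ∀ k, 1 ≤ k → 0 < P k)
    (hPlim : Tendsto (fun k : ℕ => (P k) ^ ((1 : ℝ) / k)) atTop (nhds 1))
    (hrpos : ∀ k, 1 ≤ k → 0 < r k)
    (hr2 : ∀ᶠ k in atTop, 2 * r k ≤ r (k + 1))
    (hrec : ∀ k, 1 ≤ k →
      r (k + 1) = P k * (r k) ^ N * ∏ j ∈ Finset.Icc 1 k, (1 + r k / r j))
    (a : ℕ → ℂ) (ha : ∀ k, 1 ≤ k → ‖a k‖ = r k) :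
    ∀ α β : ℝ, 0 < α → α < β → ∀ ε : ℝ, 0 < ε → ∃ K : ℕ, ∀ k, K ≤ k →
      ∀ w : ℂ, α ≤ ‖w‖ → ‖w‖ ≤ β →
        ‖(∏' j : ℕ, (1 - w * a k / a (k + 1 + j))) - 1‖ ≤ ε := by
  -- Extract a threshold `K0 ≥ 1` for the doubling property.
  obtain ⟨K0', hK0'⟩ := eventually_atTop.mp hr2
  set K0 := max K0' 1 with hK0def
  have hK01 : 1 ≤ K0 := le_max_right _ _
  have hK0 : ∀ m, K0 ≤ m → 2 * r m ≤ r (m + 1) :=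
    fun m hm => hK0' m (le_trans (le_max_left _ _) hm)
  have hrposK : ∀ m, K0 ≤ m → 0 < r m := fun m hm => hrpos m (hK01.trans hm)
  -- geometric growth from `K0` on
  have pow2 : ∀ m, K0 ≤ m → ∀ j, (2:ℝ) ^ j * r m ≤ r (m + j) := by
    intro m hm j
    induction j with
    | zero => simp
    | succ j ih =>
      have h1 : 2 * r (m + j) ≤ r (m + j + 1) := hK0 _ (le_trans hm (Nat.le_add_right _ _))
      have h2 : (2:ℝ) ^ (j + 1) * r m = 2 * ((2:ℝ) ^ j * r m) := by ring
      have h3 : 2 * ((2:ℝ) ^ j * r m) ≤ 2 * r (m + j) := by linarith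
      calc (2:ℝ) ^ (j + 1) * r m = 2 * ((2:ℝ) ^ j * r m) := h2
        _ ≤ 2 * r (m + j) := h3
        _ ≤ r (m + j + 1) := h1
  -- eventually `1 ≤ r k`
  obtain ⟨J, hJ⟩ : ∃ J : ℕ, (1:ℝ) ≤ 2 ^ J * r K0 := by
    obtain ⟨J, hJ⟩ := pow_unbounded_of_one_lt (1 / r K0) (one_lt_two (α := ℝ))
    refine ⟨J, ?_⟩
    rw [div_lt_iff₀ (hrposK K0 le_rfl)] at hJ
    linarith
  have hr1 : ∀ k, K0 + J ≤ k → 1 ≤ r k := by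
    intro k hk
    have h1 : (2:ℝ) ^ (k - K0) * r K0 ≤ r (K0 + (k - K0)) := pow2 K0 le_rfl (k - K0)
    rw [Nat.add_sub_cancel' (by omega : K0 ≤ k)] at h1
    have h2 : (2:ℝ) ^ J ≤ 2 ^ (k - K0) := pow_le_pow_right₀ one_le_two (by omega)
    have h3 := mul_le_mul_of_nonneg_right h2 (hrposK K0 le_rfl).le
    linarith
  set K2 := K0 + 2 with hK2def
  -- eventually `P k ≥ (3/4)^k`
  have hP34 : ∀ᶠ k : ℕ in atTop, ((3:ℝ)/4) ^ k ≤ P k := by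
    have h1 : ∀ᶠ k : ℕ in atTop, (3/4 : ℝ) ≤ (P k) ^ ((1:ℝ)/k) :=
      hPlim.eventually (eventually_ge_nhds (by norm_num))
    filter_upwards [h1, eventually_ge_atTop 1] with k hk hk1
    have hk0 : (k:ℝ) ≠ 0 := Nat.cast_ne_zero.mpr (by omega)
    have hPk : (0:ℝ) ≤ P k := (hP k hk1).le
    have h2 : ((3:ℝ)/4) ^ ((k:ℕ):ℝ) ≤ ((P k) ^ ((1:ℝ)/k)) ^ ((k:ℕ):ℝ) :=
      Real.rpow_le_rpow (by norm_num) hk (Nat.cast_nonneg k)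
    rw [Real.rpow_natCast, Real.rpow_natCast, ← Real.rpow_natCast ((P k) ^ ((1:ℝ)/k)) k] at h2
    rwa [← Real.rpow_mul hPk, one_div, inv_mul_cancel₀ hk0, Real.rpow_one] at h2
  -- the ratio tends to 0
  have hratio : Tendsto (fun k => r k / r (k + 1)) atTop (nhds 0) := by
    apply squeeze_zero' (g := fun k => r 1 * 2 ^ K2 * ((2:ℝ)/3) ^ k)
    · filter_upwards [eventually_ge_atTop 1] with k hk
      exact div_nonneg (hrpos k hk).le (hrpos (k+1) (by omega)).le
    · filter_upwards [hP34, eventually_ge_atTop (max K2 (K0 + J))] with k hPk hk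
      have hK2k : K2 ≤ k := le_trans (le_max_left _ _) hk
      have hk1 : 1 ≤ k := by omega
      have hrk := hrpos k hk1
      have hr1pos := hrpos 1 le_rfl
      have hrk1pos := hrpos (k+1) (by omega)
      -- lower bound for the big product
      have hone : ∀ j ∈ Finset.Icc 1 k, (1:ℝ) ≤ 1 + r k / r j := by
        intro j hj
        rw [Finset.mem_Icc] at hj
        have h := div_pos hrk (hrpos j hj.1)
        linarith
      have hsub : insert 1 (Finset.Icc K2 k) ⊆ Finset.Icc 1 k := by
        intro j hj
        simp only [Finset.mem_insert, Finset.mem_Icc] at hj ⊢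
        omega
      have hstep : (1 + r k / r 1) * ∏ j ∈ Finset.Icc K2 k, (1 + r k / r j)
          ≤ ∏ j ∈ Finset.Icc 1 k, (1 + r k / r j) := by
        have e := Finset.prod_insert (f := fun j => 1 + r k / r j)
          (by simp only [Finset.mem_Icc]; omega : (1:ℕ) ∉ Finset.Icc K2 k)
        rw [← e, ← Finset.prod_sdiff hsub]
        have h1 : (1:ℝ) ≤ ∏ j ∈ Finset.Icc 1 k \ insert 1 (Finset.Icc K2 k), (1 + r k / r j) := by
          calc (1:ℝ) = ∏ _j ∈ Finset.Icc 1 k \ insert 1 (Finset.Icc K2 k), (1:ℝ) :=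
              (Finset.prod_const_one).symm
            _ ≤ _ := Finset.prod_le_prod (fun i _ => by norm_num)
                (fun i hi => hone i (Finset.mem_sdiff.mp hi).1)
        have h2 : (0:ℝ) ≤ ∏ j ∈ insert 1 (Finset.Icc K2 k), (1 + r k / r j) := by
          apply Finset.prod_nonneg
          intro i hi
          exact le_trans (by norm_num) (hone i (hsub hi))
        have h3 := mul_le_mul_of_nonneg_right h1 h2
        linarith
      have hsingle : (2:ℝ) ^ (k - K2) ≤ ∏ j ∈ Finset.Icc K2 k, (1 + r k / r j) := by
        have hmem : K2 ∈ Finset.Icc K2 k := by simp only [Finset.mem_Icc]; omega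
        have hs2 : {K2} ⊆ Finset.Icc K2 k := Finset.singleton_subset_iff.mpr hmem
        have e := Finset.prod_sdiff (f := fun j => 1 + r k / r j) hs2
        rw [Finset.prod_singleton] at e
        have honeK : ∀ j ∈ Finset.Icc K2 k, (1:ℝ) ≤ 1 + r k / r j :=
          fun j hj => hone j (hsub (Finset.mem_insert_of_mem hj))
        have h1 : (1:ℝ) ≤ ∏ j ∈ Finset.Icc K2 k \ {K2}, (1 + r k / r j) := by
          calc (1:ℝ) = ∏ _j ∈ Finset.Icc K2 k \ {K2}, (1:ℝ) :=
              (Finset.prod_const_one).symm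
            _ ≤ _ := Finset.prod_le_prod (fun i _ => by norm_num)
                (fun i hi => honeK i (Finset.mem_sdiff.mp hi).1)
        have hp : (2:ℝ) ^ (k - K2) * r K2 ≤ r k := by
          have h := pow2 K2 (by omega) (k - K2)
          rwa [Nat.add_sub_cancel' (by omega : K2 ≤ k)] at h
        have hrK2 := hrposK K2 (by omega)
        have h := (le_div_iff₀ hrK2).mpr hp
        have hfacnn : (0:ℝ) ≤ 1 + r k / r K2 := by positivity
        calc (2:ℝ) ^ (k - K2) ≤ 1 + r k / r K2 := by linarith
          _ = 1 * (1 + r k / r K2) := (one_mul _).symm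
          _ ≤ (∏ j ∈ Finset.Icc K2 k \ {K2}, (1 + r k / r j)) * (1 + r k / r K2) :=
              mul_le_mul_of_nonneg_right h1 hfacnn
          _ = ∏ j ∈ Finset.Icc K2 k, (1 + r k / r j) := e
      have hprodLB : (r k / r 1) * 2 ^ (k - K2) ≤ ∏ j ∈ Finset.Icc 1 k, (1 + r k / r j) := by
        have h1 : r k / r 1 ≤ 1 + r k / r 1 := by linarith
        calc (r k / r 1) * 2 ^ (k - K2)
            ≤ (1 + r k / r 1) * ∏ j ∈ Finset.Icc K2 k, (1 + r k / r j) :=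
              mul_le_mul h1 hsingle (by positivity) (by positivity)
          _ ≤ ∏ j ∈ Finset.Icc 1 k, (1 + r k / r j) := hstep
      -- lower bound for `r (k+1)`
      have hrkN : (1:ℝ) ≤ r k ^ N := one_le_pow₀ (hr1 k (le_trans (le_max_right _ _) hk))
      have hPkpos := hP k hk1
      have hprodnn : (0:ℝ) ≤ ∏ j ∈ Finset.Icc 1 k, (1 + r k / r j) :=
        le_trans (by positivity) hprodLB
      have hRB : P k * ((r k / r 1) * 2 ^ (k - K2)) ≤ r (k + 1) := by
        rw [hrec k hk1]
        have h1 : (r k / r 1) * 2 ^ (k - K2) ≤ r k ^ N * ∏ j ∈ Finset.Icc 1 k, (1 + r k / r j) := by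
          calc (r k / r 1) * 2 ^ (k - K2) ≤ ∏ j ∈ Finset.Icc 1 k, (1 + r k / r j) := hprodLB
            _ = 1 * ∏ j ∈ Finset.Icc 1 k, (1 + r k / r j) := (one_mul _).symm
            _ ≤ r k ^ N * ∏ j ∈ Finset.Icc 1 k, (1 + r k / r j) :=
              mul_le_mul_of_nonneg_right hrkN hprodnn
        calc P k * ((r k / r 1) * 2 ^ (k - K2))
            ≤ P k * (r k ^ N * ∏ j ∈ Finset.Icc 1 k, (1 + r k / r j)) :=
              mul_le_mul_of_nonneg_left h1 hPkpos.le
          _ = P k * r k ^ N * ∏ j ∈ Finset.Icc 1 k, (1 + r k / r j) := by ring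
      -- conclude the ratio bound
      rw [div_le_iff₀ hrk1pos]
      have key : (r 1 * 2 ^ K2 * ((2:ℝ)/3) ^ k) * (((3:ℝ)/4) ^ k * ((r k / r 1) * 2 ^ (k - K2)))
          = r k := by
        have e1 : (2:ℝ) ^ (k - K2) * 2 ^ K2 = 2 ^ k := by
          rw [← pow_add, Nat.sub_add_cancel hK2k]
        have e2 : ((2:ℝ)/3) ^ k * ((3:ℝ)/4) ^ k * 2 ^ k = 1 := by
          rw [← mul_pow, ← mul_pow]
          norm_num
        calc (r 1 * 2 ^ K2 * ((2:ℝ)/3) ^ k) * (((3:ℝ)/4) ^ k * ((r k / r 1) * 2 ^ (k - K2)))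
            = (r k / r 1 * r 1) * (((2:ℝ)/3) ^ k * ((3:ℝ)/4) ^ k * ((2:ℝ) ^ (k - K2) * 2 ^ K2)) := by
              ring
          _ = r k * (((2:ℝ)/3) ^ k * ((3:ℝ)/4) ^ k * 2 ^ k) := by
              rw [e1, div_mul_cancel₀ _ (ne_of_gt hr1pos)]
          _ = r k := by rw [e2, mul_one]
      have hgnn : (0:ℝ) ≤ r 1 * 2 ^ K2 * ((2:ℝ)/3) ^ k := by positivity
      have h2 : ((3:ℝ)/4) ^ k * ((r k / r 1) * 2 ^ (k - K2))
          ≤ P k * ((r k / r 1) * 2 ^ (k - K2)) :=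
        mul_le_mul_of_nonneg_right hPk (by positivity)
      calc r k = (r 1 * 2 ^ K2 * ((2:ℝ)/3) ^ k)
            * (((3:ℝ)/4) ^ k * ((r k / r 1) * 2 ^ (k - K2))) := key.symm
        _ ≤ (r 1 * 2 ^ K2 * ((2:ℝ)/3) ^ k) * (P k * ((r k / r 1) * 2 ^ (k - K2))) :=
            mul_le_mul_of_nonneg_left h2 hgnn
        _ ≤ (r 1 * 2 ^ K2 * ((2:ℝ)/3) ^ k) * r (k + 1) :=
            mul_le_mul_of_nonneg_left hRB hgnn
    · have h := (tendsto_pow_atTop_nhds_zero_of_lt_one (by norm_num : (0:ℝ) ≤ 2/3)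
        (by norm_num : (2:ℝ)/3 < 1)).const_mul (r 1 * 2 ^ K2)
      simpa using h
  -- Main part
  intro α β hα hαβ ε hε
  have hβ : 0 < β := lt_trans hα hαβ
  set η : ℝ := min (1/3) (ε/6) / β with hηdef
  have hηpos : 0 < η := by
    apply div_pos _ hβ
    apply lt_min (by norm_num) (by linarith)
  have hev : ∀ᶠ k : ℕ in atTop, r k / r (k + 1) ≤ η :=
    hratio.eventually (eventually_le_nhds hηpos)
  obtain ⟨K1, hK1⟩ := eventually_atTop.mp hev
  refine ⟨max (max K0 1) K1, fun k hk w hw1 hw2 => ?_⟩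
  have hk1 : 1 ≤ k := le_trans (le_trans (le_max_right _ _) (le_max_left _ _)) hk
  have hkK0 : K0 ≤ k := le_trans (le_trans (le_max_left _ _) (le_max_left _ _)) hk
  have hratk : r k / r (k + 1) ≤ η := hK1 k (le_trans (le_max_right _ _) hk)
  set δ : ℝ := β * (r k / r (k + 1)) with hδdef
  have hrk := hrpos k hk1
  have hrk1 := hrpos (k+1) (by omega)
  have hδ0 : 0 ≤ δ := by positivity
  have hδle : δ ≤ min (1/3) (ε/6) := by
    have h := mul_le_mul_of_nonneg_left hratk hβ.le
    rw [hηdef] at h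
    calc δ ≤ β * (min (1/3) (ε/6) / β) := h
      _ = min (1/3) (ε/6) := by field_simp
  have hδ13 : δ ≤ 1/3 := le_trans hδle (min_le_left _ _)
  have hδε : δ ≤ ε/6 := le_trans hδle (min_le_right _ _)
  set f : ℕ → ℂ := fun j => -(w * a k / a (k + 1 + j)) with hfdef
  have habs : ∀ j : ℕ, ‖f j‖ = ‖w‖ * r k / r (k + 1 + j) := by
    intro j
    rw [hfdef]
    simp only [norm_neg, norm_div, norm_mul]
    rw [ha k hk1, ha (k + 1 + j) (by omega)]
  have hfle : ∀ j : ℕ, ‖f j‖ ≤ δ * (1/2) ^ j := by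
    intro j
    rw [habs j]
    have hp : (2:ℝ) ^ j * r (k + 1) ≤ r (k + 1 + j) := pow2 (k + 1) (by omega) j
    have hrkj := hrpos (k + 1 + j) (by omega)
    have h1 : ‖w‖ * r k ≤ β * r k :=
      mul_le_mul_of_nonneg_right hw2 hrk.le
    rw [div_le_iff₀ hrkj]
    have e2 : ((1:ℝ)/2) ^ j * 2 ^ j = 1 := by rw [← mul_pow]; norm_num
    have e : δ * (1/2:ℝ) ^ j * ((2:ℝ) ^ j * r (k + 1)) = β * r k := by
      calc δ * (1/2:ℝ) ^ j * ((2:ℝ) ^ j * r (k + 1))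
          = β * (r k / r (k + 1) * r (k + 1)) * (((1:ℝ)/2) ^ j * 2 ^ j) := by
            rw [hδdef]; ring
        _ = β * r k := by
            rw [e2, div_mul_cancel₀ _ (ne_of_gt hrk1), mul_one]
    calc ‖w‖ * r k ≤ β * r k := h1
      _ = δ * (1/2:ℝ) ^ j * ((2:ℝ) ^ j * r (k + 1)) := e.symm
      _ ≤ δ * (1/2:ℝ) ^ j * r (k + 1 + j) :=
          mul_le_mul_of_nonneg_left hp (by positivity)
  have hf12 : ∀ j : ℕ, ‖f j‖ ≤ 1/2 := by
    intro j
    have h := hfle j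
    have h2 : δ * (1/2:ℝ) ^ j ≤ δ * 1 :=
      mul_le_mul_of_nonneg_left (pow_le_one₀ (by norm_num) (by norm_num)) hδ0
    linarith
  have hne : ∀ j : ℕ, (1 : ℂ) + f j ≠ 0 := by
    intro j h
    have h2 : f j = -1 := by linear_combination h
    have h3 := hf12 j
    rw [h2] at h3
    simp at h3
    linarith
  have hgsum : Summable (fun j : ℕ => (3/2) * δ * (1/2:ℝ) ^ j) :=
    (summable_geometric_two).mul_left _
  have hlognorm : ∀ j : ℕ, ‖Complex.log (1 + f j)‖ ≤ (3/2) * δ * (1/2:ℝ) ^ j := by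
    intro j
    have h1 : ‖f j‖ ≤ 1/2 := by
      exact hf12 j
    have h2 := Complex.norm_log_one_add_half_le_self h1
    calc ‖Complex.log (1 + f j)‖ ≤ (3/2) * ‖f j‖ := h2
      _ ≤ (3/2) * (δ * (1/2:ℝ) ^ j) := by
          have := hfle j
          nlinarith
      _ = (3/2) * δ * (1/2:ℝ) ^ j := by ring
  have hlogsum : Summable (fun j : ℕ => Complex.log (1 + f j)) :=
    Summable.of_norm_bounded hgsum hlognorm
  set S : ℂ := ∑' j : ℕ, Complex.log (1 + f j) with hSdef
  have hnormsum : Summable (fun j : ℕ => ‖Complex.log (1 + f j)‖) :=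
    Summable.of_nonneg_of_le (fun j => norm_nonneg _) hlognorm hgsum
  have hS : ‖S‖ ≤ 3 * δ := by
    have h1 : ‖S‖ ≤ ∑' j : ℕ, ‖Complex.log (1 + f j)‖ :=
      norm_tsum_le_tsum_norm hnormsum
    have h2 : ∑' j : ℕ, ‖Complex.log (1 + f j)‖ ≤ ∑' j : ℕ, (3/2) * δ * (1/2:ℝ) ^ j :=
      Summable.tsum_le_tsum hlognorm hnormsum hgsum
    have h3 : ∑' j : ℕ, (3/2) * δ * (1/2:ℝ) ^ j = (3/2) * δ * 2 := by
      rw [tsum_mul_left, tsum_geometric_two]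
    linarith
  have hprod : HasProd (fun j : ℕ => 1 + f j) (Complex.exp S) := by
    have h := hlogsum.hasSum.cexp
    have he : (Complex.exp ∘ fun j : ℕ => Complex.log (1 + f j)) = fun j : ℕ => 1 + f j :=
      funext fun j => Complex.exp_log (hne j)
    rwa [he] at h
  have htp : (∏' j : ℕ, (1 - w * a k / a (k + 1 + j))) = Complex.exp S := by
    have he : (fun j : ℕ => (1:ℂ) - w * a k / a (k + 1 + j)) = fun j : ℕ => 1 + f j := by
      funext j
      rw [hfdef]
      ring
    rw [he]
    exact hprod.tprod_eq
  rw [htp]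
  have hS1 : ‖S‖ ≤ 1 := by
    linarith
  have hfinal := Complex.norm_exp_sub_one_le hS1
  have : ‖S‖ ≤ 3 * δ := by exact hS
  linarith
end

section
/- For all 0 < α < β and every ε > 0 there exists K such that for all k ≥ K and all complex w with α ≤ |w| ≤ β, (1−ε)·E_k(w) ≤ |f(w a_k)| ≤ (1+ε)·E_k(w), where E_k(w) = |C| |w|^{k−1+N} |w−1| r_{k+1} / (2 P_k). -/
open Filter Finset

private lemma aux_one_sub_sum (s : Finset ℕ) (d : ℕ → ℝ)
    (h0 : ∀ i ∈ s, 0 ≤ d i) (h1 : ∀ i ∈ s, d i ≤ 1) :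
    1 - ∑ i ∈ s, d i ≤ ∏ i ∈ s, (1 - d i) := by
  induction s using Finset.cons_induction with
  | empty => simp
  | cons a s has ih =>
    rw [Finset.sum_cons, Finset.prod_cons]
    have h0a : 0 ≤ d a := h0 a (Finset.mem_cons_self a s)
    have h1a : d a ≤ 1 := h1 a (Finset.mem_cons_self a s)
    have ih' := ih (fun i hi => h0 i (Finset.mem_cons_of_mem hi))
      (fun i hi => h1 i (Finset.mem_cons_of_mem hi))
    have hsum0 : 0 ≤ ∑ i ∈ s, d i :=
      Finset.sum_nonneg fun i hi => h0 i (Finset.mem_cons_of_mem hi)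
    nlinarith [mul_le_mul_of_nonneg_left ih' (by linarith : (0:ℝ) ≤ 1 - d a)]

private lemma aux_prod_bounds (s : Finset ℕ) (d t g : ℕ → ℝ) (D : ℝ) (hD : D < 1)
    (hd0 : ∀ i ∈ s, 0 ≤ d i) (hsum : ∑ i ∈ s, d i ≤ D)
    (ht : ∀ i ∈ s, 0 ≤ t i)
    (hlow : ∀ i ∈ s, (1 - d i) * t i ≤ g i)
    (hhigh : ∀ i ∈ s, g i ≤ (1 + d i) * t i) :
    (1 - D) * ∏ i ∈ s, t i ≤ ∏ i ∈ s, g i ∧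
      ∏ i ∈ s, g i ≤ (1 - D)⁻¹ * ∏ i ∈ s, t i := by
  have hd1 : ∀ i ∈ s, d i ≤ 1 := fun i hi =>
    le_trans (le_trans (Finset.single_le_sum hd0 hi) hsum) hD.le
  have hprodd : 1 - ∑ i ∈ s, d i ≤ ∏ i ∈ s, (1 - d i) := aux_one_sub_sum s d hd0 hd1
  have hprodt0 : 0 ≤ ∏ i ∈ s, t i := Finset.prod_nonneg ht
  have hlt0 : ∀ i ∈ s, 0 ≤ (1 - d i) * t i := fun i hi =>
    mul_nonneg (by linarith [hd1 i hi]) (ht i hi)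
  constructor
  · calc (1 - D) * ∏ i ∈ s, t i ≤ (1 - ∑ i ∈ s, d i) * ∏ i ∈ s, t i := by
          apply mul_le_mul_of_nonneg_right _ hprodt0; linarith
      _ ≤ (∏ i ∈ s, (1 - d i)) * ∏ i ∈ s, t i :=
          mul_le_mul_of_nonneg_right hprodd hprodt0
      _ = ∏ i ∈ s, (1 - d i) * t i := (Finset.prod_mul_distrib).symm
      _ ≤ ∏ i ∈ s, g i := Finset.prod_le_prod hlt0 hlow
  · have hDsum : 0 < 1 - ∑ i ∈ s, d i := by linarith
    calc ∏ i ∈ s, g i ≤ ∏ i ∈ s, (1 + d i) * t i :=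
          Finset.prod_le_prod (fun i hi => le_trans (hlt0 i hi) (hlow i hi)) hhigh
      _ = (∏ i ∈ s, (1 + d i)) * ∏ i ∈ s, t i := Finset.prod_mul_distrib
      _ ≤ (∏ i ∈ s, (1 - d i)⁻¹) * ∏ i ∈ s, t i := by
          apply mul_le_mul_of_nonneg_right _ hprodt0
          apply Finset.prod_le_prod (fun i hi => by linarith [hd0 i hi])
          intro i hi
          have hdi1 : d i < 1 := lt_of_le_of_lt (le_trans (Finset.single_le_sum hd0 hi) hsum) hD
          rw [inv_eq_one_div, le_div_iff₀ (by linarith)]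
          nlinarith [hd0 i hi]
      _ = (∏ i ∈ s, (1 - d i))⁻¹ * ∏ i ∈ s, t i := by rw [Finset.prod_inv_distrib]
      _ ≤ (1 - D)⁻¹ * ∏ i ∈ s, t i := by
          apply mul_le_mul_of_nonneg_right _ hprodt0
          apply inv_anti₀ (by linarith)
          exact le_trans (by linarith) hprodd

private lemma aux_geom (r : ℕ → ℝ) (K0 : ℕ) (h : ∀ m, K0 ≤ m → 2 * r m ≤ r (m + 1)) :
    ∀ j, K0 ≤ j → ∀ i, 2 ^ i * r j ≤ r (j + i) := by
  intro j hj i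
  induction i with
  | zero => simp
  | succ i ih =>
    have := h (j + i) (le_trans hj (Nat.le_add_right _ _))
    calc 2 ^ (i + 1) * r j = 2 * (2 ^ i * r j) := by ring
      _ ≤ 2 * r (j + i) := by linarith
      _ ≤ r (j + i + 1) := this

private lemma aux_tail_sum (r : ℕ → ℝ) (K0 : ℕ) (h2 : ∀ m, K0 ≤ m → 2 * r m ≤ r (m + 1))
    (hpos : ∀ m, 1 ≤ m → 0 < r m) (hK1 : 1 ≤ K0) (k n : ℕ) (hk : K0 ≤ k) :
    ∑ m ∈ Finset.Ico k n, r k / r (m + 1) ≤ 2 * (r k / r (k + 1)) := by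
  have hrk : 0 < r k := hpos k (le_trans hK1 hk)
  have hrk1 : 0 < r (k + 1) := hpos (k + 1) (by omega)
  have hterm : ∀ i : ℕ, r k / r (k + i + 1) ≤ (r k / r (k + 1)) * (1 / 2) ^ i := by
    intro i
    have hg : 2 ^ i * r (k + 1) ≤ r (k + 1 + i) := aux_geom r K0 h2 (k + 1) (by omega) i
    have hpos' : 0 < r (k + 1 + i) := lt_of_lt_of_le (by positivity) hg
    have h' : r k / r (k + 1 + i) ≤ r k / (2 ^ i * r (k + 1)) :=
      div_le_div_of_nonneg_left hrk.le (by positivity) hg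
    calc r k / r (k + i + 1) = r k / r (k + 1 + i) := by ring_nf
      _ ≤ r k / (2 ^ i * r (k + 1)) := h'
      _ = (r k / r (k + 1)) * (1 / 2) ^ i := by
          rw [div_mul_eq_div_div_swap]
          field_simp
          rw [← mul_pow]; norm_num
  calc ∑ m ∈ Finset.Ico k n, r k / r (m + 1)
      = ∑ i ∈ Finset.range (n - k), r k / r (k + i + 1) := by
        rw [Finset.sum_Ico_eq_sum_range]
    _ ≤ ∑ i ∈ Finset.range (n - k), (r k / r (k + 1)) * (1 / 2) ^ i :=
        Finset.sum_le_sum fun i _ => hterm i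
    _ = (r k / r (k + 1)) * ∑ i ∈ Finset.range (n - k), (1 / 2 : ℝ) ^ i := by
        rw [Finset.mul_sum]
    _ ≤ (r k / r (k + 1)) * 2 := by
        apply mul_le_mul_of_nonneg_left _ (by positivity)
        have hs : ∑ i ∈ Finset.range (n - k), (1 / 2 : ℝ) ^ i ≤ ∑' i : ℕ, (1 / 2 : ℝ) ^ i :=
          Summable.sum_le_tsum _ (fun i _ => by positivity)
            (summable_geometric_of_lt_one (by norm_num) (by norm_num))
        rw [tsum_geometric_of_lt_one (by norm_num) (by norm_num)] at hs
        norm_num at hs ⊢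
        linarith
    _ = 2 * (r k / r (k + 1)) := by ring

private lemma aux_prefix_sum (r : ℕ → ℝ) (K0 : ℕ) (h2 : ∀ m, K0 ≤ m → 2 * r m ≤ r (m + 1))
    (hpos : ∀ m, 1 ≤ m → 0 < r m) (hK1 : 1 ≤ K0) :
    ∀ k, K0 < k → ∑ j ∈ Finset.Ico K0 k, r j ≤ 2 * r (k - 1) := by
  intro k hk
  induction k with
  | zero => omega
  | succ k ih =>
    rcases Nat.lt_or_ge K0 k with h | h
    · have := ih h
      rw [Finset.sum_Ico_succ_top (by omega)]
      have hstep : 2 * r (k - 1) ≤ r k := by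
        have h' := h2 (k - 1) (by omega)
        have hk1 : k - 1 + 1 = k := by omega
        rwa [hk1] at h'
      simp only [Nat.add_sub_cancel]
      linarith
    · have hkeq : k = K0 := by omega
      subst hkeq
      simp only [Nat.add_sub_cancel]
      rw [Finset.sum_Ico_succ_top (le_refl _)]
      rw [Finset.Ico_self, Finset.sum_empty]
      have := hpos k hK1
      linarith

private lemma aux_low (α β ρ x : ℝ) (hα : 0 < α) (hρα : α ≤ ρ) (hρβ : ρ ≤ β) (hx : 0 < x) :
    (1 - (1 + β) / α * x⁻¹) * (ρ * (1 + x)) ≤ ρ * x - 1 := by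
  have h1 : (1 + β) / α * x⁻¹ * (α * x) = 1 + β := by field_simp
  have h2 : α * x ≤ ρ * (1 + x) := by nlinarith
  have h3 : 0 ≤ (1 + β) / α * x⁻¹ := mul_nonneg (div_nonneg (by linarith) hα.le) (by positivity)
  nlinarith [mul_le_mul_of_nonneg_left h2 h3]

private lemma aux_high (α β ρ x : ℝ) (hα : 0 < α) (hρα : α ≤ ρ) (hρβ : ρ ≤ β) (hx : 0 < x) :
    ρ * x + 1 ≤ (1 + (1 + β) / α * x⁻¹) * (ρ * (1 + x)) := by
  have h1 : (1 + β) / α * x⁻¹ * (α * x) = 1 + β := by field_simp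
  have h2 : α * x ≤ ρ * (1 + x) := by nlinarith
  have h3 : 0 ≤ (1 + β) / α * x⁻¹ := mul_nonneg (div_nonneg (by linarith) hα.le) (by positivity)
  nlinarith [mul_le_mul_of_nonneg_left h2 h3]

/-- uniform asymptotics -/
theorem stmt_3 (N : ℕ) (C : ℂ) (hC : C ≠ 0)
    (P r : ℕ → ℝ)
    (hP : ∀ k, 1 ≤ k → 0 < P k)
    (hPlim : Tendsto (fun k : ℕ => (P k) ^ ((1 : ℝ) / k)) atTop (nhds 1))
    (hrpos : ∀ k, 1 ≤ k → 0 < r k)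
    (hr2 : ∀ᶠ k in atTop, 2 * r k ≤ r (k + 1))
    (hrec : ∀ k, 1 ≤ k →
      r (k + 1) = P k * (r k) ^ N * ∏ j ∈ Finset.Icc 1 k, (1 + r k / r j))
    (a : ℕ → ℂ) (ha : ∀ k, 1 ≤ k → ‖a k‖ = r k)
    (f : ℂ → ℂ)
    (hmul : ∀ z : ℂ, Multipliable (fun k : ℕ => 1 - z / a (k + 1)))
    (hf : ∀ z : ℂ, f z = C * z ^ N * ∏' k : ℕ, (1 - z / a (k + 1))) :
    ∀ α β : ℝ, 0 < α → α < β → ∀ ε : ℝ, 0 < ε → ∃ K : ℕ, ∀ k, K ≤ k →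
      ∀ w : ℂ, α ≤ ‖w‖ → ‖w‖ ≤ β →
        (1 - ε) * (‖C‖ * (‖w‖) ^ (k - 1 + N) * ‖w - 1‖ *
            r (k + 1) / (2 * P k)) ≤ ‖f (w * a k)‖ ∧
          ‖f (w * a k)‖ ≤
            (1 + ε) * (‖C‖ * (‖w‖) ^ (k - 1 + N) * ‖w - 1‖ *
              r (k + 1) / (2 * P k)) := by
  intro α β hα hαβ ε hε
  obtain ⟨K0', hK0'⟩ := eventually_atTop.mp hr2
  set K0 := max K0' 1 with hK0def
  have hK1 : 1 ≤ K0 := le_max_right _ _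
  have h2 : ∀ m, K0 ≤ m → 2 * r m ≤ r (m + 1) :=
    fun m hm => hK0' m (le_trans (le_max_left _ _) hm)
  have hrK0 : 0 < r K0 := hrpos K0 hK1
  -- r tends to infinity
  have hrtop : Tendsto r atTop atTop := by
    have hg : ∀ i, 2 ^ i * r K0 ≤ r (K0 + i) := aux_geom r K0 h2 K0 le_rfl
    have h1 : Tendsto (fun i : ℕ => (2:ℝ) ^ i * r K0) atTop atTop :=
      (tendsto_pow_atTop_atTop_of_one_lt one_lt_two).atTop_mul_const hrK0
    have h2' : Tendsto (fun i => r (K0 + i)) atTop atTop :=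
      tendsto_atTop_mono hg h1
    have h3 : (fun n => r (n + K0)) = (fun i => r (K0 + i)) := by
      funext n; rw [Nat.add_comm]
    exact (tendsto_add_atTop_iff_nat K0).mp (h3 ▸ h2')
  -- eventual lower bound on P
  have hPge : ∀ᶠ k in atTop, ((3:ℝ)/4) ^ k ≤ P k := by
    have h1 : ∀ᶠ k in atTop, (3/4 : ℝ) ≤ P k ^ ((1:ℝ)/k) :=
      hPlim.eventually (eventually_ge_nhds (by norm_num))
    filter_upwards [h1, eventually_ge_atTop 1] with k hk hk1
    have hPk := hP k hk1
    have hkne : (k:ℝ) ≠ 0 := Nat.cast_ne_zero.mpr (by omega)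
    calc ((3:ℝ)/4)^k ≤ (P k ^ ((1:ℝ)/k))^k := pow_le_pow_left₀ (by norm_num) hk k
      _ = P k := by
          rw [← Real.rpow_natCast (P k ^ ((1:ℝ)/k)) k, ← Real.rpow_mul hPk.le,
            one_div, inv_mul_cancel₀ hkne, Real.rpow_one]
  -- P k * r k → ∞
  have hPr : Tendsto (fun k => P k * r k) atTop atTop := by
    apply tendsto_atTop_mono' atTop
      (f₁ := fun k => ((3:ℝ)/2) ^ k * (r K0 / 2 ^ K0))
    · filter_upwards [hPge, eventually_ge_atTop K0] with k hk hkK0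
      have hrk : 2 ^ (k - K0) * r K0 ≤ r k := by
        have := aux_geom r K0 h2 K0 le_rfl (k - K0)
        rwa [Nat.add_sub_cancel' hkK0] at this
      have hpow : (2:ℝ) ^ (k - K0) = 2 ^ k / 2 ^ K0 := by
        rw [eq_div_iff (by positivity), ← pow_add]
        congr 1; omega
      have h34 : (0:ℝ) < (3/4:ℝ)^k := by positivity
      calc ((3:ℝ)/2) ^ k * (r K0 / 2 ^ K0)
          = (3/4:ℝ)^k * (2 ^ (k - K0) * r K0) := by
            rw [hpow]
            rw [show ((3:ℝ)/2)^k = (3/4:ℝ)^k * 2^k by rw [← mul_pow]; norm_num]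
            ring
        _ ≤ P k * r k := by
            apply mul_le_mul hk hrk (by positivity) (le_trans h34.le hk)
    · exact (tendsto_pow_atTop_atTop_of_one_lt (by norm_num : (1:ℝ) < 3/2)).atTop_mul_const
        (by positivity)
  -- ratio r(k+1)/r k → ∞
  have hr1 : 0 < r 1 := hrpos 1 le_rfl
  have hr2' : 0 < r 2 := hrpos 2 (by omega)
  have hq' : Tendsto (fun k => r (k+1) / r k) atTop atTop := by
    apply tendsto_atTop_mono' atTop (f₁ := fun k => P k * r k / (r 1 * r 2))
    · filter_upwards [hrtop.eventually_ge_atTop 1, eventually_ge_atTop 2] with k hrk1 hk2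
      have hk1 : 1 ≤ k := by omega
      have hrk : 0 < r k := hrpos k hk1
      have hPk := hP k hk1
      have hprod : (1 + r k / r 1) * (1 + r k / r 2) ≤ ∏ j ∈ Finset.Icc 1 k, (1 + r k / r j) := by
        have hsub : ({1, 2} : Finset ℕ) ⊆ Finset.Icc 1 k := by
          intro j hj
          simp only [Finset.mem_insert, Finset.mem_singleton] at hj
          simp only [Finset.mem_Icc]
          omega
        have hsd := Finset.prod_sdiff (f := fun j => 1 + r k / r j) hsub
        have hone : (1:ℝ) ≤ ∏ j ∈ Finset.Icc 1 k \ ({1,2} : Finset ℕ), (1 + r k / r j) := by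
          calc (1:ℝ) = ∏ j ∈ Finset.Icc 1 k \ ({1,2} : Finset ℕ), 1 :=
                (Finset.prod_const_one).symm
            _ ≤ _ := by
                apply Finset.prod_le_prod (fun j _ => by norm_num)
                intro j hj
                have hj1 : 1 ≤ j := (Finset.mem_Icc.mp (Finset.mem_sdiff.mp hj).1).1
                have := hrpos j hj1
                have h0 : 0 ≤ r k / r j := by positivity
                linarith
        have h12 : (1 + r k / r 1) * (1 + r k / r 2)
            = ∏ j ∈ ({1,2} : Finset ℕ), (1 + r k / r j) := by
          rw [Finset.prod_insert (by norm_num), Finset.prod_singleton]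
        have h120 : 0 ≤ (1 + r k / r 1) * (1 + r k / r 2) := by positivity
        rw [h12] at h120 ⊢
        nlinarith [hsd]
      have hN : (1:ℝ) ≤ r k ^ N := one_le_pow₀ hrk1
      have hrecK := hrec k hk1
      rw [div_le_div_iff₀ (by positivity) hrk]
      have hQ0 : 0 ≤ ∏ j ∈ Finset.Icc 1 k, (1 + r k / r j) := by
        apply Finset.prod_nonneg
        intro j hj
        have hj1 : 1 ≤ j := (Finset.mem_Icc.mp hj).1
        have := hrpos j hj1
        positivity
      calc P k * r k * r k
          = P k * ((r k / r 1) * (r k / r 2)) * (r 1 * r 2) := by field_simp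
        _ ≤ P k * ((1 + r k / r 1) * (1 + r k / r 2)) * (r 1 * r 2) := by
            apply mul_le_mul_of_nonneg_right _ (by positivity)
            apply mul_le_mul_of_nonneg_left _ hPk.le
            have ha1 : 0 ≤ r k / r 1 := by positivity
            have ha2 : 0 ≤ r k / r 2 := by positivity
            nlinarith
        _ ≤ P k * (r k ^ N * ∏ j ∈ Finset.Icc 1 k, (1 + r k / r j)) * (r 1 * r 2) := by
            apply mul_le_mul_of_nonneg_right _ (by positivity)
            apply mul_le_mul_of_nonneg_left _ hPk.le
            calc (1 + r k / r 1) * (1 + r k / r 2)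
                ≤ ∏ j ∈ Finset.Icc 1 k, (1 + r k / r j) := hprod
              _ ≤ r k ^ N * ∏ j ∈ Finset.Icc 1 k, (1 + r k / r j) :=
                  le_mul_of_one_le_left hQ0 hN
        _ = r (k + 1) * (r 1 * r 2) := by rw [hrecK]; ring
    · exact hPr.atTop_div_const (by positivity)
  -- r k / r (k+1) → 0
  have hq : Tendsto (fun k => r k / r (k + 1)) atTop (nhds 0) := by
    have h := hq'.inv_tendsto_atTop
    have he : (fun k => r (k + 1) / r k)⁻¹ = fun k => r k / r (k + 1) := by
      funext k; simp [Pi.inv_apply, inv_div]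
    rwa [he] at h
  -- r (k-1) / r k → 0
  have hqs : Tendsto (fun k => r (k - 1) / r k) atTop (nhds 0) := by
    rw [← tendsto_add_atTop_iff_nat 1]
    simpa using hq
  -- S_k → 0
  have hS : Tendsto (fun k => ∑ j ∈ Finset.Ico 1 k, r j / r k) atTop (nhds 0) := by
    set A := ∑ j ∈ Finset.Ico 1 K0, r j with hA
    apply squeeze_zero' (g := fun k => A / r k + 2 * (r (k - 1) / r k))
    · filter_upwards [eventually_ge_atTop 1] with k hk
      apply Finset.sum_nonneg
      intro j hj
      have hj1 : 1 ≤ j := (Finset.mem_Ico.mp hj).1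
      have := hrpos j hj1
      have := hrpos k hk
      positivity
    · filter_upwards [eventually_gt_atTop K0] with k hkK0
      have hrk : 0 < r k := hrpos k (by omega)
      have hsplit : ∑ j ∈ Finset.Ico 1 k, r j
          = ∑ j ∈ Finset.Ico 1 K0, r j + ∑ j ∈ Finset.Ico K0 k, r j :=
        (Finset.sum_Ico_consecutive _ hK1 hkK0.le).symm
      have htail := aux_prefix_sum r K0 h2 hrpos hK1 k hkK0
      rw [← Finset.sum_div, hsplit, add_div]
      have h2' : (∑ j ∈ Finset.Ico K0 k, r j) / r k ≤ 2 * (r (k - 1) / r k) := by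
        rw [mul_div_assoc']
        gcongr
      exact add_le_add (le_refl _) h2'
    · have t1 : Tendsto (fun k => A * (r k)⁻¹) atTop (nhds (A * 0)) :=
        hrtop.inv_tendsto_atTop.const_mul A
      have t2 : Tendsto (fun k => 2 * (r (k - 1) / r k)) atTop (nhds (2 * 0)) :=
        hqs.const_mul 2
      have := t1.add t2
      simp only [mul_zero, add_zero] at this
      simpa [div_eq_mul_inv] using this
  -- constants
  have hβ : 0 < β := lt_trans hα hαβ
  set c1 := (1 + β) / α with hc1
  have hc10 : 0 < c1 := by positivity
  set D := ε / (1 + ε) with hDdef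
  have hD0 : 0 < D := by positivity
  have hD1 : D < 1 := by rw [hDdef, div_lt_one (by linarith)]; linarith
  have hDinv : (1 - D)⁻¹ = 1 + ε := by
    rw [hDdef]
    rw [show 1 - ε / (1 + ε) = 1 / (1 + ε) by field_simp; ring]
    rw [one_div, inv_inv]
  have hDε : D ≤ ε := by
    rw [hDdef, div_le_iff₀ (by linarith)]
    nlinarith
  -- choose K
  have hfinal : ∀ᶠ k in atTop,
      (c1 * (∑ j ∈ Finset.Ico 1 k, r j / r k) + β * (2 * (r k / r (k + 1))) ≤ D)
        ∧ K0 + 1 ≤ k := by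
    have t : Tendsto (fun k => c1 * (∑ j ∈ Finset.Ico 1 k, r j / r k)
        + β * (2 * (r k / r (k + 1)))) atTop (nhds (c1 * 0 + β * (2 * 0))) :=
      (hS.const_mul c1).add ((hq.const_mul 2).const_mul β)
    simp only [mul_zero, add_zero] at t
    exact (t.eventually (eventually_le_nhds hD0)).and (eventually_ge_atTop (K0 + 1))
  obtain ⟨K, hK⟩ := eventually_atTop.mp hfinal
  refine ⟨K, fun k hk w hw1 hw2 => ?_⟩
  obtain ⟨hDk, hkK0⟩ := hK k hk
  obtain ⟨k', rfl⟩ : ∃ k', k = k' + 1 := ⟨k - 1, by omega⟩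
  set k := k' + 1 with hkdef
  clear_value k
  have hk1 : 1 ≤ k := by omega
  have hkK0' : K0 ≤ k := by omega
  have hrk : 0 < r k := hrpos k hk1
  have hrk1 : 0 < r (k + 1) := hrpos (k + 1) (by omega)
  have hPk : 0 < P k := hP k hk1
  set ρ := ‖w‖ with hρ
  have hρ0 : 0 < ρ := lt_of_lt_of_le hα hw1
  have hajne : ∀ j, 1 ≤ j → a j ≠ 0 := by
    intro j hj h
    have h1 := ha j hj
    rw [h, norm_zero] at h1
    have := hrpos j hj
    linarith
  have hak := ha k hk1
  have hakne := hajne k hk1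
  set G : ℕ → ℝ := fun m => ‖1 - w * a k / a (m + 1)‖ with hGdef
  set PG := ‖∏' m : ℕ, (1 - w * a k / a (m + 1))‖ with hPGdef
  have hmulG : HasProd G PG := by
    have h := (hmul (w * a k)).hasProd.map
      (MonoidHomClass.toMonoidHom (normHom : ℂ →*₀ ℝ)) continuous_norm
    have hfun : (⇑(MonoidHomClass.toMonoidHom (normHom : ℂ →*₀ ℝ))
        ∘ fun m : ℕ => 1 - w * a k / a (m + 1)) = G := by
      funext m; simp [hGdef]
    rw [hPGdef]
    exact hfun ▸ h
  have habsf : ‖f (w * a k)‖ = ‖C‖ * (ρ * r k) ^ N * PG := by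
    rw [hf (w * a k), norm_mul, norm_mul, norm_pow, norm_mul, hak, ← hρ, ← hPGdef]
  set d : ℕ → ℝ := fun m => if m + 1 < k then c1 * (r (m + 1) / r k)
    else if m + 1 = k then 0 else β * (r k / r (m + 1)) with hddef
  set t : ℕ → ℝ := fun m => if m + 1 < k then ρ * (1 + r k / r (m + 1))
    else if m + 1 = k then ‖w - 1‖ else 1 with htdef
  have hrm : ∀ m : ℕ, 0 < r (m + 1) := fun m => hrpos (m + 1) (by omega)
  have hd0 : ∀ m, 0 ≤ d m := by
    intro m
    simp only [hddef]
    split_ifs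
    · have := hrm m; positivity
    · exact le_refl 0
    · have := hrm m; have := hβ; positivity
  have ht0 : ∀ m, 0 ≤ t m := by
    intro m
    simp only [htdef]
    split_ifs
    · have := hrm m; positivity
    · exact norm_nonneg _
    · norm_num
  have habs_u : ∀ m : ℕ, ‖w * a k / a (m + 1)‖ = ρ * (r k / r (m + 1)) := by
    intro m
    rw [norm_div, norm_mul, hak, ha (m + 1) (by omega), ← hρ, mul_div_assoc]
  have hGtri : ∀ m : ℕ,
      ρ * (r k / r (m + 1)) - 1 ≤ G m ∧ 1 - ρ * (r k / r (m + 1)) ≤ G m ∧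
        G m ≤ 1 + ρ * (r k / r (m + 1)) := by
    intro m
    have hu := habs_u m
    have hnu : ‖w * a k / a (m + 1)‖ = ρ * (r k / r (m + 1)) := by
      exact hu
    have hGm : G m = ‖1 - w * a k / a (m + 1)‖ := by
      simp only [hGdef]
    refine ⟨?_, ?_, ?_⟩
    · rw [hGm, ← hnu]
      have h := norm_sub_norm_le (w * a k / a (m + 1)) (1 : ℂ)
      rw [norm_sub_rev] at h
      simpa using h
    · rw [hGm, ← hnu]
      have h := norm_sub_norm_le (1 : ℂ) (w * a k / a (m + 1))
      simpa using h
    · rw [hGm, ← hnu]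
      have h := norm_sub_le (1 : ℂ) (w * a k / a (m + 1))
      simpa using h
  have hbnd : ∀ m : ℕ, (1 - d m) * t m ≤ G m ∧ G m ≤ (1 + d m) * t m := by
    intro m
    rcases lt_trichotomy (m + 1) k with hmk | hmk | hmk
    · have hdm : d m = c1 * (r (m + 1) / r k) := by
        simp only [hddef]; rw [if_pos hmk]
      have htm : t m = ρ * (1 + r k / r (m + 1)) := by
        simp only [htdef]; rw [if_pos hmk]
      have hx : 0 < r k / r (m + 1) := by have := hrm m; positivity
      have hxinv : (r k / r (m + 1))⁻¹ = r (m + 1) / r k := inv_div _ _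
      have hlow' := aux_low α β ρ (r k / r (m + 1)) hα hw1 hw2 hx
      have hhigh' := aux_high α β ρ (r k / r (m + 1)) hα hw1 hw2 hx
      rw [hxinv, ← hc1] at hlow' hhigh'
      constructor
      · calc (1 - d m) * t m
            = (1 - c1 * (r (m + 1) / r k)) * (ρ * (1 + r k / r (m + 1))) := by
              rw [hdm, htm]
          _ ≤ ρ * (r k / r (m + 1)) - 1 := hlow'
          _ ≤ G m := (hGtri m).1
      · calc G m ≤ 1 + ρ * (r k / r (m + 1)) := (hGtri m).2.2
          _ = ρ * (r k / r (m + 1)) + 1 := by ring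
          _ ≤ (1 + c1 * (r (m + 1) / r k)) * (ρ * (1 + r k / r (m + 1))) := hhigh'
          _ = (1 + d m) * t m := by rw [hdm, htm]
    · have hdm : d m = 0 := by
        simp only [hddef]; rw [if_neg (by omega), if_pos hmk]
      have htm : t m = ‖w - 1‖ := by
        simp only [htdef]; rw [if_neg (by omega), if_pos hmk]
      have hGm : G m = ‖w - 1‖ := by
        simp only [hGdef]
        rw [hmk, mul_div_assoc, div_self hakne, mul_one]
        exact norm_sub_rev 1 w
      rw [hdm, htm, hGm]
      norm_num
    · have hdm : d m = β * (r k / r (m + 1)) := by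
        simp only [hddef]; rw [if_neg (by omega), if_neg (by omega)]
      have htm : t m = 1 := by
        simp only [htdef]; rw [if_neg (by omega), if_neg (by omega)]
      have hx : 0 < r k / r (m + 1) := by have := hrm m; positivity
      have hρβ' : ρ * (r k / r (m + 1)) ≤ β * (r k / r (m + 1)) :=
        mul_le_mul_of_nonneg_right hw2 hx.le
      constructor
      · rw [hdm, htm, mul_one]
        have := (hGtri m).2.1
        linarith
      · rw [hdm, htm, mul_one]
        have := (hGtri m).2.2
        linarith
  -- sum of d bounded by D
  have hsum : ∀ n, k ≤ n → ∑ m ∈ Finset.range n, d m ≤ D := by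
    intro n hn
    have e1 : ∑ m ∈ Finset.range n, d m
        = ∑ m ∈ Finset.range k, d m + ∑ m ∈ Finset.Ico k n, d m := by
      exact (Finset.sum_range_add_sum_Ico d hn).symm
    have e2 : ∑ m ∈ Finset.range k, d m = ∑ m ∈ Finset.range k', d m + d k' := by
      rw [hkdef]; exact Finset.sum_range_succ d k'
    have e3 : d k' = 0 := by
      simp only [hddef]; rw [if_neg (by omega), if_pos (by omega)]
    have e4 : ∑ m ∈ Finset.range k', d m = c1 * ∑ j ∈ Finset.Ico 1 k, r j / r k := by
      rw [hkdef, Finset.sum_Ico_eq_sum_range]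
      simp only [Nat.add_sub_cancel]
      rw [Finset.mul_sum]
      apply Finset.sum_congr rfl
      intro m hm
      have hm' : m < k' := Finset.mem_range.mp hm
      simp only [hddef]
      rw [if_pos (by omega), Nat.add_comm 1 m, hkdef]
    have e5 : ∑ m ∈ Finset.Ico k n, d m = β * ∑ m ∈ Finset.Ico k n, r k / r (m + 1) := by
      rw [Finset.mul_sum]
      apply Finset.sum_congr rfl
      intro m hm
      have hm' : k ≤ m := (Finset.mem_Ico.mp hm).1
      simp only [hddef]
      rw [if_neg (by omega), if_neg (by omega)]
    have e6 := aux_tail_sum r K0 h2 hrpos hK1 k n hkK0'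
    have e7 : β * ∑ m ∈ Finset.Ico k n, r k / r (m + 1)
        ≤ β * (2 * (r k / r (k + 1))) := mul_le_mul_of_nonneg_left e6 hβ.le
    rw [e1, e2, e3, e4, add_zero, e5]
    linarith
  -- the target product
  set Q := ∏ m ∈ Finset.range k', (1 + r k / r (m + 1)) with hQdef
  have hQ0 : 0 < Q := Finset.prod_pos (fun m _ => by have := hrm m; positivity)
  set T := ‖w - 1‖ * (ρ ^ k' * Q) with hTdef
  have hT : ∀ n, k ≤ n → ∏ m ∈ Finset.range n, t m = T := by
    intro n hn
    have e1 : ∏ m ∈ Finset.range n, t m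
        = (∏ m ∈ Finset.range k, t m) * ∏ m ∈ Finset.Ico k n, t m := by
      exact (Finset.prod_range_mul_prod_Ico t hn).symm
    have e2 : ∏ m ∈ Finset.Ico k n, t m = 1 := by
      apply Finset.prod_eq_one
      intro m hm
      have := (Finset.mem_Ico.mp hm).1
      simp only [htdef]
      rw [if_neg (by omega), if_neg (by omega)]
    have e3 : ∏ m ∈ Finset.range k, t m = (∏ m ∈ Finset.range k', t m) * t k' := by
      rw [hkdef]; exact Finset.prod_range_succ t k'
    have e4 : t k' = ‖w - 1‖ := by
      simp only [htdef]; rw [if_neg (by omega), if_pos (by omega)]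
    have e5 : ∏ m ∈ Finset.range k', t m = ρ ^ k' * Q := by
      have hco : ∀ m ∈ Finset.range k', t m = ρ * (1 + r k / r (m + 1)) := by
        intro m hm
        have := Finset.mem_range.mp hm
        simp only [htdef]; rw [if_pos (by omega)]
      rw [Finset.prod_congr rfl hco, Finset.prod_mul_distrib, Finset.prod_const,
        Finset.card_range, hQdef]
    rw [e1, e2, e3, e4, e5, mul_one, hTdef]
    ring
  have hT0 : 0 ≤ T := by
    rw [hTdef]
    exact mul_nonneg (norm_nonneg _) (by positivity)
  -- link with the recursion
  have hrecQ : r (k + 1) / (2 * P k) = r k ^ N * Q := by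
    have h := hrec k hk1
    have hIcc : ∏ j ∈ Finset.Icc 1 k, (1 + r k / r j) = Q * 2 := by
      have e1 : ∏ j ∈ Finset.Icc 1 k, (1 + r k / r j)
          = (∏ j ∈ Finset.Icc 1 k', (1 + r k / r j)) * (1 + r k / r k) := by
        rw [hkdef]
        exact Finset.prod_Icc_succ_top (by omega) _
      have e2 : ∏ j ∈ Finset.Icc 1 k', (1 + r k / r j) = Q := by
        rw [← Finset.Ico_add_one_right_eq_Icc, Finset.prod_Ico_eq_prod_range]
        simp only [Nat.add_sub_cancel, Nat.succ_sub_one]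
        apply Finset.prod_congr rfl
        intro m _
        rw [Nat.add_comm 1 m]
      rw [e1, e2, div_self hrk.ne']
      norm_num
    rw [h, hIcc]
    field_simp
  -- pass to the limit
  have hbounds : ∀ n, k ≤ n →
      (1 - D) * ∏ m ∈ Finset.range n, t m ≤ ∏ m ∈ Finset.range n, G m ∧
        ∏ m ∈ Finset.range n, G m ≤ (1 - D)⁻¹ * ∏ m ∈ Finset.range n, t m :=
    fun n hn => aux_prod_bounds (Finset.range n) d t G D hD1 (fun i _ => hd0 i)
      (hsum n hn) (fun i _ => ht0 i) (fun i _ => (hbnd i).1) (fun i _ => (hbnd i).2)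
  have hlowPG : (1 - D) * T ≤ PG := by
    apply ge_of_tendsto hmulG.tendsto_prod_nat
    filter_upwards [eventually_ge_atTop k] with n hn
    rw [← hT n hn]
    exact (hbounds n hn).1
  have hhighPG : PG ≤ (1 - D)⁻¹ * T := by
    apply le_of_tendsto hmulG.tendsto_prod_nat
    filter_upwards [eventually_ge_atTop k] with n hn
    rw [← hT n hn]
    exact (hbounds n hn).2
  have hC0 : 0 ≤ ‖C‖ := norm_nonneg C
  have hfac0 : 0 ≤ ‖C‖ * (ρ * r k) ^ N := mul_nonneg hC0 (by positivity)
  have hE : ‖C‖ * ρ ^ (k - 1 + N) * ‖w - 1‖ * r (k + 1) / (2 * P k)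
      = ‖C‖ * (ρ * r k) ^ N * T := by
    have hexp : k - 1 + N = k' + N := by omega
    rw [hexp, mul_div_assoc, hrecQ, hTdef, pow_add, mul_pow]
    ring
  constructor
  · rw [habsf, hE]
    calc (1 - ε) * (‖C‖ * (ρ * r k) ^ N * T)
        ≤ (1 - D) * (‖C‖ * (ρ * r k) ^ N * T) := by
          apply mul_le_mul_of_nonneg_right (by linarith) (mul_nonneg hfac0 hT0)
      _ = ‖C‖ * (ρ * r k) ^ N * ((1 - D) * T) := by ring
      _ ≤ ‖C‖ * (ρ * r k) ^ N * PG :=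
          mul_le_mul_of_nonneg_left hlowPG hfac0
  · rw [habsf, hE]
    calc ‖C‖ * (ρ * r k) ^ N * PG
        ≤ ‖C‖ * (ρ * r k) ^ N * ((1 - D)⁻¹ * T) :=
          mul_le_mul_of_nonneg_left hhighPG hfac0
      _ = (1 - D)⁻¹ * (‖C‖ * (ρ * r k) ^ N * T) := by ring
      _ = (1 + ε) * (‖C‖ * (ρ * r k) ^ N * T) := by rw [hDinv]
end

section
/- For every ε ∈ (0, 1/2] there exists K such that for all k ≥ K: (i) |f(z)| ≥ 2 r_{k+1} whenever |z| = (1+ε) r_k; (ii) |f(z)| ≤ r_{k+1}/2 whenever |z| = (1−ε) r_k; (iii) |f(z)| ≥ 2 r_k whenever |z| = (1−ε) r_k; (iv) |f(z)| ≤ r_{k+2}/2 whenever |z| = (1+ε) r_k. -/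
open Filter Finset

set_option maxHeartbeats 1000000 in
private lemma ratio_pow_le (b c A B : ℝ) (hb : 0 ≤ b) (hc : 0 < c) (hbc : b < c)
    (hA : 0 < A) (hB : 0 < B) : ∀ᶠ m : ℕ in atTop, A * b^m ≤ B * c^m := by
  have hr0 : 0 ≤ b/c := div_nonneg hb hc.le
  have hr1 : b/c < 1 := (div_lt_one hc).mpr hbc
  filter_upwards [(tendsto_pow_atTop_nhds_zero_of_lt_one hr0 hr1).eventually_le_const
    (div_pos hB hA)] with m hm
  have hcm : 0 < c^m := pow_pos hc m
  have h1 : (b/c)^m * (A * c^m) ≤ (B/A) * (A * c^m) :=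
    mul_le_mul_of_nonneg_right hm (by positivity)
  have h2 : (b/c)^m * (A * c^m) = A * b^m := by
    rw [div_pow]
    field_simp
  have h3 : (B/A) * (A * c^m) = B * c^m := by
    field_simp
  linarith

private lemma core_rinf (N : ℕ) (P r : ℕ → ℝ)
    (hrpos : ∀ k, 1 ≤ k → 0 < r k)
    (hrec : ∀ k, 1 ≤ k →
      r (k + 1) = P k * (r k) ^ N * ∏ j ∈ Finset.Icc 1 k, (1 + r k / r j))
    (m : ℕ) (hm1 : 1 ≤ m)
    (h2r : 2 * r m ≤ r (m+1))
    (hall : ∀ j, 1 ≤ j → j ≤ m → r j ≤ r m)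
    (hPl : (9/10:ℝ)^(m+1) ≤ P (m+1)) (hPu : P m ≤ (11/10:ℝ)^m)
    (hbig : 32 ≤ (9/5:ℝ) * (27/22)^m) :
    32 * r (m+1) ≤ r (m+2) := by
  have hrm : 0 < r m := hrpos m hm1
  have hrm1 : 0 < r (m+1) := lt_of_lt_of_le (by linarith) h2r
  set Qm := ∏ j ∈ Icc 1 m, (1 + r m / r j) with hQ
  have hQpos : 0 < Qm := by
    apply Finset.prod_pos
    intro j hj
    have hrj := hrpos j (Finset.mem_Icc.mp hj).1
    have := div_pos hrm hrj
    linarith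
  have hrecm := hrec m hm1
  have hsplitQ : ∏ j ∈ Icc 1 (m+1), (1 + r (m+1) / r j) =
      (∏ j ∈ Icc 1 m, (1 + r (m+1)/r j)) * (1 + r (m+1)/r (m+1)) :=
    Finset.prod_Icc_succ_top (by omega) _
  have hlast : 1 + r (m+1)/r (m+1) = 2 := by rw [div_self hrm1.ne']; norm_num
  have hterm : ∀ j ∈ Icc 1 m, (3/2) * (1 + r m / r j) ≤ 1 + r (m+1) / r j := by
    intro j hj
    obtain ⟨hj1, hjm⟩ := Finset.mem_Icc.mp hj
    have hrj := hrpos j hj1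
    have h1 : r j ≤ r m := hall j hj1 hjm
    have hy : 1 ≤ r m / r j := (one_le_div hrj).mpr h1
    have h2 : 2 * (r m / r j) ≤ r (m+1) / r j := by
      rw [← mul_div_assoc]
      gcongr
    linarith
  have hQm1 : 2 * ((3/2)^m * Qm) ≤ ∏ j ∈ Icc 1 (m+1), (1 + r (m+1)/r j) := by
    rw [hsplitQ, hlast]
    have h3 : ∏ j ∈ Icc 1 m, ((3/2:ℝ) * (1 + r m / r j)) ≤ ∏ j ∈ Icc 1 m, (1 + r (m+1)/r j) := by
      apply Finset.prod_le_prod _ hterm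
      intro j hj
      have hrj := hrpos j (Finset.mem_Icc.mp hj).1
      have := div_pos hrm hrj
      positivity
    rw [Finset.prod_mul_distrib, Finset.prod_const, Nat.card_Icc] at h3
    have hcard : m + 1 - 1 = m := by omega
    rw [hcard] at h3
    linarith
  have hBpos : 0 < r m ^ N * Qm := by positivity
  have hrNmono : r m ^ N ≤ r (m+1) ^ N := pow_le_pow_left₀ hrm.le (by linarith) N
  have step1 : 32 * r (m+1) ≤ 32 * (11/10)^m * (r m ^ N * Qm) := by
    rw [hrecm]
    calc 32 * (P m * r m^N * Qm) = 32 * P m * (r m^N*Qm) := by ring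
    _ ≤ 32 * (11/10)^m * (r m^N*Qm) :=
      mul_le_mul_of_nonneg_right (by linarith) hBpos.le
  have hnum : 32 * (11/10:ℝ)^m ≤ (9/10)^(m+1) * (2 * (3/2)^m) := by
    have h1 : (27/22:ℝ)^m * (11/10)^m = (27/20)^m := by rw [← mul_pow]; norm_num
    have h2 : (0:ℝ) < (11/10)^m := by positivity
    have h3 : (9/10:ℝ)^(m+1) * (2*(3/2)^m) = (9/5) * (27/20)^m := by
      rw [pow_succ, show (27/20:ℝ) = (9/10)*(3/2) by norm_num, mul_pow]; ring
    calc 32 * (11/10:ℝ)^m ≤ (9/5) * (27/22)^m * (11/10)^m :=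
      mul_le_mul_of_nonneg_right hbig h2.le
    _ = (9/5) * (27/20)^m := by rw [mul_assoc, h1]
    _ = (9/10)^(m+1) * (2*(3/2)^m) := h3.symm
  have step2 : 32 * (11/10:ℝ)^m * (r m^N * Qm) ≤ (9/10)^(m+1) * (2*(3/2)^m) * (r m^N*Qm) :=
    mul_le_mul_of_nonneg_right hnum hBpos.le
  have hP1pos : (0:ℝ) ≤ P (m+1) := le_trans (by positivity) hPl
  have step3 : (9/10:ℝ)^(m+1)*(2*(3/2)^m)*(r m^N*Qm) ≤ r (m+2) := by
    have hfin : (9/10:ℝ)^(m+1)*(2*(3/2)^m)*(r m^N*Qm)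
        = ((9/10)^(m+1) * r m^N) * (2*((3/2)^m * Qm)) := by ring
    rw [hfin, hrec (m+1) (by omega)]
    apply mul_le_mul
    · exact mul_le_mul hPl hrNmono (by positivity) hP1pos
    · exact hQm1
    · positivity
    · positivity
  linarith

private lemma prod_one_sub_ge (s : Finset ℕ) (t : ℕ → ℝ) (h0 : ∀ i, 0 ≤ t i) (h1 : ∀ i, t i ≤ 1) :
    1 - ∑ i ∈ s, t i ≤ ∏ i ∈ s, (1 - t i) := by
  classical
  induction s using Finset.cons_induction with
  | empty => simp
  | cons a s ha ih =>
    rw [Finset.prod_cons, Finset.sum_cons]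
    have hpn : (0:ℝ) ≤ ∏ i ∈ s, (1 - t i) :=
      Finset.prod_nonneg (fun i _ => by linarith [h1 i])
    have hprod_le_one : ∏ i ∈ s, (1 - t i) ≤ 1 :=
      Finset.prod_le_one (fun i _ => by linarith [h1 i]) (fun i _ => by linarith [h0 i])
    nlinarith [h0 a, h1 a]

private lemma abs_tprod_split (g : ℕ → ℂ) (hg : Multipliable g) (M : ℕ) (t : ℕ → ℝ)
    (h0 : ∀ i, 0 ≤ t i) (hs : Summable t) (hts : ∑' i, t i ≤ 1/2)
    (hct : ∀ i, M ≤ i → ‖g i - 1‖ ≤ t i) :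
    (1/2) * ∏ i ∈ range M, ‖g i‖ ≤ ‖∏' i, g i‖ ∧
    ‖∏' i, g i‖ ≤ 2 * ∏ i ∈ range M, ‖g i‖ := by
  classical
  have ht1 : ∀ i, t i ≤ 1/2 := fun i => le_trans (hs.le_tsum i fun j _ => h0 j) hts
  have hcl : ∀ i, M ≤ i → 1 - t i ≤ ‖g i‖ := by
    intro i hi
    have h := norm_sub_norm_le (1 : ℂ) (1 - g i)
    simp only [norm_one, sub_sub_cancel] at h
    have h2 : ‖1 - g i‖ = ‖g i - 1‖ := by
      rw [← norm_neg]; ring_nf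
    linarith [hct i hi, h2.ge]
  have hcu : ∀ i, M ≤ i → ‖g i‖ ≤ 1 + t i := by
    intro i hi
    calc ‖g i‖ = ‖1 + (g i - 1)‖ := by ring_nf
    _ ≤ ‖(1:ℂ)‖ + ‖g i - 1‖ := norm_add_le _ _
    _ ≤ 1 + t i := by simpa using add_le_add_left (hct i hi) 1
  have key : ∀ s : Finset ℕ, (∀ i ∈ s, M ≤ i) →
      1/2 ≤ ∏ i ∈ s, ‖g i‖ ∧ ∏ i ∈ s, ‖g i‖ ≤ 2 := by
    intro s hsM
    have hsum : ∑ i ∈ s, t i ≤ 1/2 := (hs.sum_le_tsum s (fun i _ => h0 i)).trans hts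
    have hlow : 1 - ∑ i ∈ s, t i ≤ ∏ i ∈ s, (1 - t i) :=
      prod_one_sub_ge s t h0 (fun i => by linarith [ht1 i])
    constructor
    · refine le_trans (by linarith) (Finset.prod_le_prod (fun i _ => by linarith [ht1 i])
        (fun i hi => hcl i (hsM i hi)))
    · have h1 : ∏ i ∈ s, ‖g i‖ ≤ ∏ i ∈ s, (1 + t i) :=
        Finset.prod_le_prod (fun i _ => norm_nonneg _) (fun i hi => hcu i (hsM i hi))
      have h2 : (∏ i ∈ s, (1 + t i)) * ∏ i ∈ s, (1 - t i) ≤ 1 := by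
        rw [← Finset.prod_mul_distrib]
        refine Finset.prod_le_one (fun i _ => ?_) (fun i _ => ?_) <;> nlinarith [h0 i, ht1 i]
      have h3 : ∏ i ∈ s, (1 + t i) ≤ 2 := by
        nlinarith [h1, Finset.prod_nonneg (fun i (_ : i ∈ s) => norm_nonneg (g i))]
      linarith
  have habs : Filter.Tendsto (fun s : Finset ℕ => ∏ i ∈ s, ‖g i‖) atTop
      (nhds (‖∏' i, g i‖)) := by
    have h2 := (continuous_norm.tendsto _).comp hg.hasProd
    convert h2 using 1
    ext s
    simp [Function.comp, norm_prod]
    rfl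
  have hPMn : (0:ℝ) ≤ ∏ i ∈ range M, ‖g i‖ :=
    Finset.prod_nonneg (fun i _ => norm_nonneg _)
  have hev : ∀ᶠ s : Finset ℕ in atTop,
      (1/2) * ∏ i ∈ range M, ‖g i‖ ≤ ∏ i ∈ s, ‖g i‖ ∧
      ∏ i ∈ s, ‖g i‖ ≤ 2 * ∏ i ∈ range M, ‖g i‖ := by
    filter_upwards [eventually_ge_atTop (range M)] with s hsub
    have hsub' : range M ⊆ s := hsub
    have hsd : (∏ i ∈ s \ range M, ‖g i‖) * ∏ i ∈ range M, ‖g i‖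
        = ∏ i ∈ s, ‖g i‖ := Finset.prod_sdiff hsub'
    have hmem : ∀ i ∈ s \ range M, M ≤ i := by
      intro i hi
      have := (Finset.mem_sdiff.mp hi).2
      simpa [Finset.mem_range, not_lt] using this
    obtain ⟨hk1, hk2⟩ := key _ hmem
    constructor
    · rw [← hsd]
      exact mul_le_mul_of_nonneg_right hk1 hPMn
    · rw [← hsd]
      exact mul_le_mul_of_nonneg_right hk2 hPMn
  exact ⟨ge_of_tendsto habs (hev.mono fun s h => h.1),
    le_of_tendsto habs (hev.mono fun s h => h.2)⟩

private lemma core_up (N M : ℕ) (cabs θ p : ℝ) (P r : ℕ → ℝ) (F az : ℝ)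
    (hrpos : ∀ j, 1 ≤ j → 0 < r j) (hM1 : 1 ≤ M)
    (hrec : r (M+1) = P M * r M ^ N * ∏ j ∈ Icc 1 M, (1 + r M / r j))
    (hall : ∀ j, 1 ≤ j → j ≤ M → r j ≤ r M)
    (hc : 0 ≤ cabs) (hθ0 : 0 ≤ θ) (hθ1 : θ ≤ 1)
    (hPl : p ≤ P M)
    (hsmall : 16*cabs*((1+θ)/2)^M ≤ 1/2 * p)
    (haz : 0 ≤ az) (hz : az ≤ θ * r M)
    (hF : F ≤ 16 * cabs * az ^ N * ∏ j ∈ Icc 1 M, (1 + az / r j)) :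
    F ≤ r (M+1) / 2 := by
  have hrM : 0 < r M := hrpos M hM1
  set Q := ∏ j ∈ Icc 1 M, (1 + r M / r j) with hQdef
  have hQpos : 0 < Q := by
    apply Finset.prod_pos
    intro j hj
    have hrj := hrpos j (Finset.mem_Icc.mp hj).1
    have := div_pos hrM hrj
    linarith
  have hDpos : 0 < r M ^ N * Q := by positivity
  have hzM : az ≤ r M := le_trans hz (by nlinarith)
  have hzN : az ^ N ≤ r M ^ N := pow_le_pow_left₀ haz hzM N
  have hterm : ∀ j ∈ Icc 1 M, 1 + az / r j ≤ (1+θ)/2 * (1 + r M / r j) := by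
    intro j hj
    obtain ⟨hj1, hjM⟩ := Finset.mem_Icc.mp hj
    have hrj := hrpos j hj1
    have hY : 1 ≤ r M / r j := (one_le_div hrj).mpr (hall j hj1 hjM)
    have hzr : az / r j ≤ θ * (r M / r j) := by
      rw [← mul_div_assoc]
      gcongr
    nlinarith
  have hprod : ∏ j ∈ Icc 1 M, (1 + az / r j) ≤ ((1+θ)/2)^M * Q := by
    have h1 : ∏ j ∈ Icc 1 M, (1 + az / r j) ≤ ∏ j ∈ Icc 1 M, ((1+θ)/2 * (1 + r M / r j)) := by
      apply Finset.prod_le_prod _ hterm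
      intro j hj
      have hrj := hrpos j (Finset.mem_Icc.mp hj).1
      have := div_nonneg haz hrj.le
      linarith
    rw [Finset.prod_mul_distrib, Finset.prod_const, Nat.card_Icc] at h1
    have hcard : M + 1 - 1 = M := by omega
    rw [hcard] at h1
    exact h1
  have hcQ : (0:ℝ) ≤ ((1+θ)/2)^M * Q := by positivity
  calc F ≤ 16 * cabs * az ^ N * ∏ j ∈ Icc 1 M, (1 + az / r j) := hF
  _ ≤ 16 * cabs * az ^ N * (((1+θ)/2)^M * Q) := by
      apply mul_le_mul_of_nonneg_left hprod (by positivity)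
  _ = (16 * cabs * (((1+θ)/2)^M * Q)) * az ^ N := by ring
  _ ≤ (16 * cabs * (((1+θ)/2)^M * Q)) * r M ^ N := by
      apply mul_le_mul_of_nonneg_left hzN (by positivity)
  _ = (16 * cabs * ((1+θ)/2)^M) * (r M ^ N * Q) := by ring
  _ ≤ (1/2 * p) * (r M ^ N * Q) := mul_le_mul_of_nonneg_right hsmall hDpos.le
  _ ≤ (1/2 * P M) * (r M ^ N * Q) := mul_le_mul_of_nonneg_right (by linarith) hDpos.le
  _ = r (M+1) / 2 := by rw [hrec]; ring

private lemma core_iii (N m : ℕ) (cabs ε : ℝ) (P r : ℕ → ℝ) (F az : ℝ) (G : ℕ → ℝ)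
    (hrpos : ∀ j, 1 ≤ j → 0 < r j) (hm1 : 1 ≤ m)
    (hrec : r (m+1) = P m * r m ^ N * ∏ j ∈ Icc 1 m, (1 + r m / r j))
    (hall : ∀ j, 1 ≤ j → j ≤ m → r j ≤ r m)
    (h32 : 32 * r m ≤ r (m+1))
    (hε : 0 < ε) (hε2 : ε ≤ 1/2) (hcabs : 0 < cabs)
    (hPu : P m ≤ 2^m)
    (hbig : 256 ≤ cabs * ε * 2^m)
    (haz : az = (1-ε) * r (m+1))
    (hG : ∀ j, 1 ≤ j → j ≤ m → az / r j - 1 ≤ G j)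
    (hGlast : ε ≤ G (m+1))
    (hF : cabs * az ^ N * (1/128) * ∏ j ∈ Icc 1 (m+1), G j ≤ F) :
    2 * r (m+1) ≤ F := by
  have hrm : 0 < r m := hrpos m hm1
  have hrm1 : 0 < r (m+1) := hrpos (m+1) (by omega)
  set Q := ∏ j ∈ Icc 1 m, (1 + r m / r j) with hQdef
  have hQpos : 0 < Q := by
    apply Finset.prod_pos
    intro j hj
    have hrj := hrpos j (Finset.mem_Icc.mp hj).1
    have := div_pos hrm hrj
    linarith
  have hazr : r m ≤ az := by
    rw [haz]; nlinarith
  have haznn : 0 ≤ az := le_trans hrm.le hazr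
  have hzN : r m ^ N ≤ az ^ N := pow_le_pow_left₀ hrm.le hazr N
  -- lower bound for the product
  have hterm : ∀ j ∈ Icc 1 m, 4 * (1 + r m / r j) ≤ G j := by
    intro j hj
    obtain ⟨hj1, hjm⟩ := Finset.mem_Icc.mp hj
    have hrj := hrpos j hj1
    have hY : 1 ≤ r m / r j := (one_le_div hrj).mpr (hall j hj1 hjm)
    have hX : 32 * (r m / r j) ≤ r (m+1) / r j := by
      rw [← mul_div_assoc]; gcongr
    have hGj := hG j hj1 (by omega)
    have hazj : az / r j = (1-ε) * (r (m+1) / r j) := by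
      rw [haz, mul_div_assoc]
    rw [hazj] at hGj
    nlinarith [div_pos hrm1 hrj]
  have hsplit : ∏ j ∈ Icc 1 (m+1), G j = (∏ j ∈ Icc 1 m, G j) * G (m+1) :=
    Finset.prod_Icc_succ_top (by omega) _
  have hprodm : 4^m * Q ≤ ∏ j ∈ Icc 1 m, G j := by
    have h1 : ∏ j ∈ Icc 1 m, (4 * (1 + r m / r j)) ≤ ∏ j ∈ Icc 1 m, G j := by
      apply Finset.prod_le_prod _ hterm
      intro j hj
      have hrj := hrpos j (Finset.mem_Icc.mp hj).1
      have := div_pos hrm hrj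
      positivity
    rw [Finset.prod_mul_distrib, Finset.prod_const, Nat.card_Icc] at h1
    have hcard : m + 1 - 1 = m := by omega
    rw [hcard] at h1
    exact h1
  have hprod : (4^m * Q) * ε ≤ ∏ j ∈ Icc 1 (m+1), G j := by
    rw [hsplit]
    have h4Q : (0:ℝ) ≤ 4^m * Q := by positivity
    calc (4^m * Q) * ε ≤ (4^m * Q) * G (m+1) := mul_le_mul_of_nonneg_left hGlast h4Q
    _ ≤ (∏ j ∈ Icc 1 m, G j) * G (m+1) := by
        apply mul_le_mul_of_nonneg_right hprodm (le_trans hε.le hGlast)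
  have hDpos : 0 < r m ^ N * Q := by positivity
  have key : 2 * r (m+1) ≤ cabs * r m ^ N * (1/128) * ((4^m * Q) * ε) := by
    rw [hrec]
    have h2 : (2:ℝ) * (P m * r m ^ N * Q) ≤ 2 * (2^m * (r m ^ N * Q)) := by
      have := mul_le_mul_of_nonneg_right hPu hDpos.le
      nlinarith
    have h3 : (2:ℝ) * (2^m * (r m ^ N * Q)) ≤ cabs * ε * 2^m / 128 * (2^m * (r m ^ N * Q)) := by
      apply mul_le_mul_of_nonneg_right _ (by positivity)
      linarith
    have h4 : cabs * ε * 2^m / 128 * ((2:ℝ)^m * (r m ^ N * Q))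
        = cabs * r m ^ N * (1/128) * (((2^m*2^m) * Q) * ε) := by ring
    have h5 : ((2:ℝ)^m * 2^m) = 4^m := by rw [← mul_pow]; norm_num
    calc (2:ℝ) * (P m * r m ^ N * Q) ≤ cabs * ε * 2^m / 128 * (2^m * (r m ^ N * Q)) :=
      le_trans h2 h3
    _ = cabs * r m ^ N * (1/128) * ((4^m * Q) * ε) := by rw [h4, h5]
  calc 2 * r (m+1) ≤ cabs * r m ^ N * (1/128) * ((4^m * Q) * ε) := key
  _ ≤ cabs * az ^ N * (1/128) * ((4^m * Q) * ε) := by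
      have : cabs * r m ^ N * (1/128) * ((4^m * Q) * ε)
          = (cabs * (1/128) * ((4^m * Q) * ε)) * r m ^ N := by ring
      rw [this, show cabs * az ^ N * (1/128) * ((4^m * Q) * ε)
          = (cabs * (1/128) * ((4^m * Q) * ε)) * az ^ N from by ring]
      apply mul_le_mul_of_nonneg_left hzN (by positivity)
  _ ≤ cabs * az ^ N * (1/128) * ∏ j ∈ Icc 1 (m+1), G j := by
      apply mul_le_mul_of_nonneg_left hprod (by positivity)
  _ ≤ F := hF

private lemma core_i (N k K₀ m₀ : ℕ) (cabs ε : ℝ) (P r : ℕ → ℝ) (F az : ℝ) (G : ℕ → ℝ)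
    (hrpos : ∀ j, 1 ≤ j → 0 < r j) (hk1 : 1 ≤ k) (hK₀1 : 1 ≤ K₀) (hkbig : K₀ + m₀ ≤ k)
    (hrec : r (k+1) = P k * r k ^ N * ∏ j ∈ Icc 1 k, (1 + r k / r j))
    (hall : ∀ j, 1 ≤ j → j ≤ k → r j ≤ r k)
    (hmid : ∀ j, K₀ ≤ j → j ≤ k - m₀ → 5/ε * r j ≤ r k)
    (hε : 0 < ε) (hε2 : ε ≤ 1/2) (hcabs : 0 < cabs)
    (hPu : P k ≤ (1+ε/4)^k)
    (hbig : 256*(1+ε/2)^(K₀-1+m₀)*(1+ε/4)^k ≤ cabs*(ε/2)^(K₀-1+m₀)*(1+ε/2)^k)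
    (haz : az = (1+ε) * r k)
    (hG : ∀ j, 1 ≤ j → j ≤ k → az / r j - 1 ≤ G j)
    (hF : cabs * az ^ N * (1/128) * ∏ j ∈ Icc 1 k, G j ≤ F) :
    2 * r (k+1) ≤ F := by
  have hrk : 0 < r k := hrpos k hk1
  set Q := ∏ j ∈ Icc 1 k, (1 + r k / r j) with hQdef
  have hQpos : 0 < Q := by
    apply Finset.prod_pos
    intro j hj
    have hrj := hrpos j (Finset.mem_Icc.mp hj).1
    have := div_pos hrk hrj
    linarith
  have hazr : r k ≤ az := by rw [haz]; nlinarith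
  have hzN : r k ^ N ≤ az ^ N := pow_le_pow_left₀ hrk.le hazr N
  set coef : ℕ → ℝ := fun j => if K₀ ≤ j ∧ j ≤ k - m₀ then 1+ε/2 else ε/2 with hcoef
  have hcoefpos : ∀ j, 0 < coef j := by
    intro j; simp only [hcoef]; split <;> linarith
  -- termwise bound
  have hterm : ∀ j ∈ Icc 1 k, coef j * (1 + r k / r j) ≤ G j := by
    intro j hj
    obtain ⟨hj1, hjk⟩ := Finset.mem_Icc.mp hj
    have hrj := hrpos j hj1
    have hY : 1 ≤ r k / r j := (one_le_div hrj).mpr (hall j hj1 hjk)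
    have hGj := hG j hj1 hjk
    have hazj : az / r j = (1+ε) * (r k / r j) := by rw [haz, mul_div_assoc]
    rw [hazj] at hGj
    simp only [hcoef]
    split
    · rename_i hcond
      have hx : 5/ε ≤ r k / r j := by
        rw [le_div_iff₀ hrj]
        exact hmid j hcond.1 hcond.2
      have h5 : 5 ≤ ε * (r k / r j) := by
        rw [div_le_iff₀ hε] at hx
        linarith
      nlinarith
    · nlinarith
  -- the coefficient product
  have hIoc : Icc 1 k = Ioc 0 k := by rw [← Finset.Icc_add_one_left_eq_Ioc]; rfl
  have hsplitc : ∏ j ∈ Icc 1 k, coef j =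
      ((∏ j ∈ Ioc 0 (K₀-1), coef j) * ∏ j ∈ Ioc (K₀-1) (k-m₀), coef j) *
        ∏ j ∈ Ioc (k-m₀) k, coef j := by
    rw [hIoc, Finset.prod_Ioc_consecutive _ (by omega : 0 ≤ K₀-1) (by omega : K₀-1 ≤ k-m₀),
      Finset.prod_Ioc_consecutive _ (by omega : (0:ℕ) ≤ k-m₀) (by omega : k-m₀ ≤ k)]
  have hreg1 : ∏ j ∈ Ioc 0 (K₀-1), coef j = (ε/2)^(K₀-1) := by
    rw [Finset.prod_congr rfl (fun j hj => ?_), Finset.prod_const, Nat.card_Ioc, Nat.sub_zero]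
    obtain ⟨_, hj2⟩ := Finset.mem_Ioc.mp hj
    simp only [hcoef]
    rw [if_neg (by omega)]
  have hreg2 : ∏ j ∈ Ioc (K₀-1) (k-m₀), coef j = (1+ε/2)^((k-m₀)-(K₀-1)) := by
    rw [Finset.prod_congr rfl (fun j hj => ?_), Finset.prod_const, Nat.card_Ioc]
    obtain ⟨hj1, hj2⟩ := Finset.mem_Ioc.mp hj
    simp only [hcoef]
    rw [if_pos (by omega)]
  have hreg3 : ∏ j ∈ Ioc (k-m₀) k, coef j = (ε/2)^m₀ := by
    rw [Finset.prod_congr rfl (fun j hj => ?_), Finset.prod_const, Nat.card_Ioc,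
      Nat.sub_sub_self (by omega)]
    obtain ⟨hj1, _⟩ := Finset.mem_Ioc.mp hj
    simp only [hcoef]
    rw [if_neg (by omega)]
  set m₁ := K₀ - 1 + m₀ with hm₁
  set e₂ := (k-m₀)-(K₀-1) with he₂
  have hcoefprod : ∏ j ∈ Icc 1 k, coef j = (ε/2)^m₁ * (1+ε/2)^e₂ := by
    rw [hsplitc, hreg1, hreg2, hreg3, hm₁, pow_add]
    ring
  have hek : e₂ + m₁ = k := by omega
  -- product lower bound
  have hprodG : ((ε/2)^m₁ * (1+ε/2)^e₂) * Q ≤ ∏ j ∈ Icc 1 k, G j := by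
    rw [← hcoefprod]
    have h1 : ∏ j ∈ Icc 1 k, (coef j * (1 + r k / r j)) ≤ ∏ j ∈ Icc 1 k, G j := by
      apply Finset.prod_le_prod _ hterm
      intro j hj
      have hrj := hrpos j (Finset.mem_Icc.mp hj).1
      have h2 := div_pos hrk hrj
      exact (mul_pos (hcoefpos j) (by linarith)).le
    rw [Finset.prod_mul_distrib] at h1
    exact h1
  -- numeric comparison
  have hnum : 2 * (1+ε/4)^k ≤ cabs * (1/128) * ((ε/2)^m₁ * (1+ε/2)^e₂) := by
    have hpe : (1+ε/2:ℝ)^e₂ * (1+ε/2)^m₁ = (1+ε/2)^k := by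
      rw [← pow_add, hek]
    have hm₁pos : (0:ℝ) < (1+ε/2)^m₁ := pow_pos (by linarith) _
    have h1 : (256*(1+ε/4)^k) * (1+ε/2)^m₁ ≤
        (cabs * (ε/2)^m₁ * (1+ε/2)^e₂) * (1+ε/2)^m₁ := by
      calc (256*(1+ε/4)^k) * (1+ε/2)^m₁ = 256*(1+ε/2)^m₁*(1+ε/4)^k := by ring
      _ ≤ cabs*(ε/2)^m₁*(1+ε/2)^k := hbig
      _ = (cabs * (ε/2)^m₁ * (1+ε/2)^e₂) * (1+ε/2)^m₁ := by rw [← hpe]; ring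
    have h2 := le_of_mul_le_mul_right h1 hm₁pos
    linarith
  have hDpos : 0 < r k ^ N * Q := mul_pos (pow_pos hrk N) hQpos
  calc 2 * r (k+1) = (2 * P k) * (r k ^ N * Q) := by rw [hrec]; ring
  _ ≤ (2 * (1+ε/4)^k) * (r k ^ N * Q) := by
      apply mul_le_mul_of_nonneg_right (by linarith) hDpos.le
  _ ≤ (cabs * (1/128) * ((ε/2)^m₁ * (1+ε/2)^e₂)) * (r k ^ N * Q) :=
      mul_le_mul_of_nonneg_right hnum hDpos.le
  _ = (cabs * r k ^ N * (1/128)) * (((ε/2)^m₁ * (1+ε/2)^e₂) * Q) := by ring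
  _ ≤ (cabs * az ^ N * (1/128)) * (((ε/2)^m₁ * (1+ε/2)^e₂) * Q) := by
      have hcc : (0:ℝ) ≤ ((ε/2)^m₁ * (1+ε/2)^e₂) * Q :=
        (mul_pos (mul_pos (pow_pos (by linarith) _) (pow_pos (by linarith) _)) hQpos).le
      apply mul_le_mul_of_nonneg_right _ hcc
      have h3 : cabs * r k ^ N * (1/128) = (cabs * (1/128)) * r k ^ N := by ring
      have h4 : cabs * az ^ N * (1/128) = (cabs * (1/128)) * az ^ N := by ring
      rw [h3, h4]
      apply mul_le_mul_of_nonneg_left hzN (by positivity)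
  _ ≤ cabs * az ^ N * (1/128) * ∏ j ∈ Icc 1 k, G j := by
      have haznn : (0:ℝ) ≤ az := le_trans hrk.le hazr
      apply mul_le_mul_of_nonneg_left hprodG (by positivity)
  _ ≤ F := hF

set_option maxHeartbeats 2000000 in
/-- the four modulus estimates (p4e)-(p4h) for `f` on circles
`|z| = (1 ± ε) r_k`, for every `ε ∈ (0, 1/2]` and all large `k`. -/
theorem stmt_4 (N : ℕ) (C : ℂ) (hC : C ≠ 0)
    (P r : ℕ → ℝ)
    (hP : ∀ k, 1 ≤ k → 0 < P k)
    (hPlim : Tendsto (fun k : ℕ => (P k) ^ ((1 : ℝ) / k)) atTop (nhds 1))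
    (hrpos : ∀ k, 1 ≤ k → 0 < r k)
    (hr2 : ∀ᶠ k in atTop, 2 * r k ≤ r (k + 1))
    (hrec : ∀ k, 1 ≤ k →
      r (k + 1) = P k * (r k) ^ N * ∏ j ∈ Finset.Icc 1 k, (1 + r k / r j))
    (a : ℕ → ℂ) (ha : ∀ k, 1 ≤ k → ‖a k‖ = r k)
    (f : ℂ → ℂ)
    (hmul : ∀ z : ℂ, Multipliable (fun k : ℕ => 1 - z / a (k + 1)))
    (hf : ∀ z : ℂ, f z = C * z ^ N * ∏' k : ℕ, (1 - z / a (k + 1))) :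
    ∀ ε : ℝ, 0 < ε → ε ≤ 1 / 2 → ∃ K : ℕ, ∀ k, K ≤ k →
      (∀ z : ℂ, ‖z‖ = (1 + ε) * r k → 2 * r (k + 1) ≤ ‖f z‖) ∧
      (∀ z : ℂ, ‖z‖ = (1 - ε) * r k → ‖f z‖ ≤ r (k + 1) / 2) ∧
      (∀ z : ℂ, ‖z‖ = (1 - ε) * r k → 2 * r k ≤ ‖f z‖) ∧
      (∀ z : ℂ, ‖z‖ = (1 + ε) * r k → ‖f z‖ ≤ r (k + 2) / 2) := by
  intro ε hε hε2
  have hCpos : 0 < ‖C‖ := norm_pos_iff.mpr hC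
  obtain ⟨K₀', hK₀'⟩ := eventually_atTop.mp hr2
  set K₀ := max K₀' 1 with hK₀def
  have hK₀1 : 1 ≤ K₀ := le_max_right _ _
  have hK₀ : ∀ k, K₀ ≤ k → 2 * r k ≤ r (k+1) :=
    fun k hk => hK₀' k (le_trans (le_max_left _ _) hk)
  have hrposK : ∀ k, K₀ ≤ k → 0 < r k := fun k hk => hrpos k (le_trans hK₀1 hk)
  have hgeom : ∀ j i, K₀ ≤ j → 2^i * r j ≤ r (j + i) := by
    intro j i hj
    induction i with
    | zero => simp
    | succ n ih =>
      have h2 := hK₀ (j+n) (le_trans hj (Nat.le_add_right _ _))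
      have he : (2:ℝ)^(n+1) * r j = 2 * (2^n * r j) := by ring
      rw [show j + (n+1) = (j+n) + 1 from rfl, he]
      linarith
  have hgeom' : ∀ j k, K₀ ≤ j → j ≤ k → 2^(k-j) * r j ≤ r k := by
    intro j k hj hjk
    have := hgeom j (k-j) hj
    rwa [Nat.add_sub_cancel' hjk] at this
  have rmono : ∀ j k, K₀ ≤ j → j ≤ k → r j ≤ r k := by
    intro j k hj hjk
    have h1 := hgeom' j k hj hjk
    have h2 : (1:ℝ) ≤ 2^(k-j) := one_le_pow₀ (by norm_num)
    nlinarith [hrposK j hj]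
  set S₀ := ∑ j ∈ Finset.Icc 1 K₀, r j with hS₀def
  have hS₀ : ∀ j, 1 ≤ j → j ≤ K₀ → r j ≤ S₀ :=
    fun j h1 h2 => Finset.single_le_sum
      (fun i hi => le_of_lt (hrpos i (Finset.mem_Icc.mp hi).1)) (Finset.mem_Icc.mpr ⟨h1,h2⟩)
  have hrbig : ∀ A : ℝ, ∀ᶠ m in atTop, A ≤ r m := by
    intro A
    have hposK : 0 < r K₀ := hrposK K₀ le_rfl
    obtain ⟨n, hn⟩ : ∃ n : ℕ, A ≤ 2 ^ n * r K₀ := by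
      obtain ⟨n, hn⟩ := pow_unbounded_of_one_lt (A / r K₀) (by norm_num : (1:ℝ) < 2)
      exact ⟨n, by rw [div_lt_iff₀ hposK] at hn; linarith⟩
    rw [eventually_atTop]
    refine ⟨K₀ + n, fun m hm => ?_⟩
    have h1 := hgeom' K₀ m le_rfl (by omega)
    have h2 : (2:ℝ)^n ≤ 2^(m - K₀) := pow_le_pow_right₀ (by norm_num) (by omega)
    nlinarith
  have hall : ∀ m, K₀ ≤ m → S₀ ≤ r m → ∀ j, 1 ≤ j → j ≤ m → r j ≤ r m := by
    intro m hm hS j h1 hj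
    by_cases hjK : K₀ ≤ j
    · exact rmono j m hjK hj
    · exact (hS₀ j h1 (le_of_not_ge hjK)).trans hS
  have hP2 : ∀ δ : ℝ, 0 < δ → δ < 1 → ∀ᶠ k in atTop, (1-δ)^k ≤ P k ∧ P k ≤ (1+δ)^k := by
    intro δ hδ hδ1
    have hIcc : Set.Icc (1-δ) (1+δ) ∈ nhds (1:ℝ) := Icc_mem_nhds (by linarith) (by linarith)
    filter_upwards [hPlim.eventually hIcc, eventually_ge_atTop 1] with k hk hk1
    obtain ⟨hkl, hku⟩ := hk
    have hkne : (k:ℝ) ≠ 0 := Nat.cast_ne_zero.mpr (by omega)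
    have hPk : 0 < P k := hP k hk1
    have hid : ((P k) ^ ((1:ℝ)/k)) ^ (k:ℕ) = P k := by
      rw [← Real.rpow_natCast ((P k) ^ ((1:ℝ)/k)) k, ← Real.rpow_mul hPk.le,
        one_div_mul_cancel hkne, Real.rpow_one]
    constructor
    · calc (1-δ)^k ≤ ((P k) ^ ((1:ℝ)/k))^k := pow_le_pow_left₀ (by linarith) hkl k
      _ = P k := hid
    · calc P k = ((P k) ^ ((1:ℝ)/k))^k := hid.symm
      _ ≤ (1+δ)^k := pow_le_pow_left₀ (Real.rpow_nonneg hPk.le _) hku k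
  have E_UPLOW : ∀ᶠ m in atTop, ∀ z : ℂ, ‖z‖ ≤ 3/2 * r m →
      (‖C‖ * ‖z‖ ^ N * (1/128) *
          ∏ j ∈ Finset.Icc 1 m, ‖1 - z / a j‖ ≤ ‖f z‖) ∧
      (‖f z‖ ≤ 16 * ‖C‖ * ‖z‖ ^ N *
          ∏ j ∈ Finset.Icc 1 m, (1 + ‖z‖ / r j)) := by
    filter_upwards [eventually_ge_atTop K₀] with m hm
    intro z hz
    have hm1 : 1 ≤ m := le_trans hK₀1 hm
    have hrm : 0 < r m := hrpos m hm1
    have habz : 0 ≤ ‖z‖ := norm_nonneg z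
    set g : ℕ → ℂ := fun i => 1 - z / a (i+1) with hgset
    have hgdef : ∀ i, g i = 1 - z / a (i+1) := fun _ => rfl
    set t : ℕ → ℝ := fun i => if m+3 ≤ i then (3/32)*(1/2)^(i-(m+3)) else 0 with htset
    have ht0 : ∀ i, 0 ≤ t i := by
      intro i; simp only [htset]
      split <;> positivity
    have htshift : (fun i => t (i + (m+3))) = fun i => (3/32:ℝ)*(1/2)^i := by
      funext i
      simp only [htset, if_pos (Nat.le_add_left _ _), Nat.add_sub_cancel]
    have hts : Summable t := by
      rw [← summable_nat_add_iff (m+3), htshift]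
      exact (summable_geometric_of_lt_one (by norm_num) (by norm_num)).mul_left _
    have htsum : ∑' i, t i ≤ 1/2 := by
      rw [← hts.sum_add_tsum_nat_add (m+3)]
      have h1 : ∑ i ∈ range (m+3), t i = 0 := by
        apply Finset.sum_eq_zero
        intro i hi
        have hilt := Finset.mem_range.mp hi
        simp only [htset]
        rw [if_neg (by omega)]
      have h2 : ∑' i, t (i + (m+3)) = 3/16 := by
        rw [htshift, tsum_mul_left, tsum_geometric_of_lt_one (by norm_num) (by norm_num)]
        norm_num
      rw [h1, h2]; norm_num
    have hct : ∀ i, m+3 ≤ i → ‖g i - 1‖ ≤ t i := by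
      intro i hi
      obtain ⟨d, rfl⟩ : ∃ d, i = d + (m+3) := ⟨i - (m+3), by omega⟩
      have hidx : 1 ≤ d + (m+3) + 1 := by omega
      have hr4 : 0 < r (d + (m+3) + 1) := hrpos _ hidx
      have hA : ‖a (d + (m+3) + 1)‖ = r (d + (m+3) + 1) := ha _ hidx
      have heq1 : g (d + (m+3)) - 1 = -(z / a (d+(m+3)+1)) := by rw [hgdef]; ring
      have htv : t (d + (m+3)) = (3/32)*(1/2)^d := by
        simp only [htset, if_pos (Nat.le_add_left _ _), Nat.add_sub_cancel]
      rw [heq1, norm_neg, norm_div, hA, htv, div_le_iff₀ hr4]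
      have hge := hgeom m (d+4) hm
      have heq : m + (d+4) = d + (m+3) + 1 := by omega
      rw [heq] at hge
      have hpow : (1/2:ℝ)^d * 2^(d+4) = 16 := by
        rw [pow_add, ← mul_assoc, ← mul_pow]; norm_num
      have h3 := mul_le_mul_of_nonneg_left hge (by positivity : (0:ℝ) ≤ 3/32*(1/2)^d)
      have heq2 : 3/32*(1/2:ℝ)^d*(2^(d+4) * r m) = 3/2 * r m := by
        calc 3/32*(1/2:ℝ)^d*(2^(d+4)*r m) = 3/32 * ((1/2)^d * 2^(d+4)) * r m := by ring
        _ = 3/2 * r m := by rw [hpow]; norm_num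
      linarith
    obtain ⟨hT1, hT2⟩ := abs_tprod_split g (hmul z) (m+3) t ht0 hts htsum hct
    -- the three factors with indices m, m+1, m+2
    have hfac : ∀ j : ℕ, j < 3 → 1/4 ≤ ‖g (m + j)‖ ∧ ‖g (m+j)‖ ≤ 2 := by
      intro j hj
      have hidx : 1 ≤ m + j + 1 := by omega
      have hA := ha _ hidx
      have hr4 : 0 < r (m+j+1) := hrpos _ hidx
      have hge := hgeom m (j+1) hm
      have heq : m + (j+1) = m + j + 1 := by omega
      rw [heq] at hge
      have h2 : (2:ℝ) ≤ 2^(j+1) := by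
        calc (2:ℝ) = 2^1 := (pow_one 2).symm
        _ ≤ 2^(j+1) := pow_le_pow_right₀ (by norm_num) (by omega)
      have hw : ‖z / a (m+j+1)‖ ≤ 3/4 := by
        rw [norm_div, hA, div_le_iff₀ hr4]
        nlinarith
      have hgj : g (m+j) = 1 - z / a (m+j+1) := by rw [hgdef]
      constructor
      · have h5 := norm_sub_norm_le (1:ℂ) (z / a (m+j+1))
        simp only [norm_one] at h5
        rw [hgj]; linarith
      · rw [hgj]
        calc ‖1 - z / a (m+j+1)‖ ≤ ‖(1:ℂ)‖ + ‖z / a (m+j+1)‖ := by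
              simpa [sub_eq_add_neg] using norm_add_le 1 (-(z / a (m+j+1)))
        _ ≤ 2 := by simp only [norm_one]; linarith
    have hsplit3 : ∏ i ∈ range (m+3), ‖g i‖ =
        (∏ i ∈ range m, ‖g i‖) * ‖g m‖ * ‖g (m+1)‖ *
          ‖g (m+2)‖ := by
      rw [show m+3 = m+1+1+1 from rfl, prod_range_succ, prod_range_succ, prod_range_succ]
    have hIcc : ∏ i ∈ range m, ‖g i‖ = ∏ j ∈ Icc 1 m, ‖1 - z / a j‖ := by
      rw [← Finset.Ico_add_one_right_eq_Icc, Finset.prod_Ico_eq_prod_range]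
      apply Finset.prod_congr rfl
      intro i _
      rw [hgdef, add_comm]
    have hfz : ‖f z‖ = ‖C‖ * ‖z‖ ^ N * ‖∏' i, g i‖ := by
      rw [hf z, norm_mul, norm_mul, norm_pow]
    have hPn : (0:ℝ) ≤ ∏ j ∈ Icc 1 m, ‖1 - z/a j‖ :=
      prod_nonneg (fun j _ => norm_nonneg _)
    obtain ⟨hA1, hA2⟩ := hfac 0 (by norm_num)
    obtain ⟨hB1, hB2⟩ := hfac 1 (by norm_num)
    obtain ⟨hC1, hC2⟩ := hfac 2 (by norm_num)
    rw [show m + 0 = m from rfl] at hA1 hA2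
    have p1 : (1:ℝ)/16 ≤ ‖g m‖ * ‖g (m+1)‖ := by
      calc (1:ℝ)/16 = (1/4) * (1/4) := by norm_num
      _ ≤ _ := mul_le_mul hA1 hB1 (by norm_num) (norm_nonneg _)
    have p2 : (1:ℝ)/64 ≤ ‖g m‖ * ‖g (m+1)‖ * ‖g (m+2)‖ := by
      calc (1:ℝ)/64 = (1/16) * (1/4) := by norm_num
      _ ≤ _ := mul_le_mul p1 hC1 (by norm_num) (by positivity)
    have q1 : ‖g m‖ * ‖g (m+1)‖ ≤ 4 :=
      le_trans (mul_le_mul hA2 hB2 (norm_nonneg _) (by norm_num)) (by norm_num)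
    have q2 : ‖g m‖ * ‖g (m+1)‖ * ‖g (m+2)‖ ≤ 8 := by
      calc ‖g m‖ * ‖g (m+1)‖ * ‖g (m+2)‖ ≤ 4 * 2 :=
        mul_le_mul q1 hC2 (norm_nonneg _) (by norm_num)
      _ = 8 := by norm_num
    have hbr_low : (1:ℝ)/64 * ∏ j ∈ Icc 1 m, ‖1 - z/a j‖
        ≤ ∏ i ∈ range (m+3), ‖g i‖ := by
      rw [hsplit3, hIcc]
      calc (1:ℝ)/64 * ∏ j ∈ Icc 1 m, ‖1 - z/a j‖
          = (∏ j ∈ Icc 1 m, ‖1 - z/a j‖) * (1/64) := by ring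
      _ ≤ (∏ j ∈ Icc 1 m, ‖1 - z/a j‖) *
          (‖g m‖ * ‖g (m+1)‖ * ‖g (m+2)‖) :=
        mul_le_mul_of_nonneg_left p2 hPn
      _ = (∏ j ∈ Icc 1 m, ‖1 - z/a j‖) * ‖g m‖ * ‖g (m+1)‖ *
          ‖g (m+2)‖ := by ring
    have hbr_up : ∏ i ∈ range (m+3), ‖g i‖
        ≤ 8 * ∏ j ∈ Icc 1 m, ‖1 - z/a j‖ := by
      rw [hsplit3, hIcc]
      calc (∏ j ∈ Icc 1 m, ‖1 - z/a j‖) * ‖g m‖ * ‖g (m+1)‖ *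
          ‖g (m+2)‖
          = (∏ j ∈ Icc 1 m, ‖1 - z/a j‖) *
            (‖g m‖ * ‖g (m+1)‖ * ‖g (m+2)‖) := by ring
      _ ≤ (∏ j ∈ Icc 1 m, ‖1 - z/a j‖) * 8 := mul_le_mul_of_nonneg_left q2 hPn
      _ = 8 * ∏ j ∈ Icc 1 m, ‖1 - z/a j‖ := by ring
    refine ⟨?_, ?_⟩
    · calc ‖C‖ * ‖z‖ ^ N * (1/128) * ∏ j ∈ Icc 1 m, ‖1 - z/a j‖
          = (‖C‖ * ‖z‖ ^ N) * ((1/2) * ((1/64) * ∏ j ∈ Icc 1 m, ‖1 - z/a j‖)) := by ring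
      _ ≤ (‖C‖ * ‖z‖ ^ N) * ((1/2) * ∏ i ∈ range (m+3), ‖g i‖) := by
          apply mul_le_mul_of_nonneg_left _ (by positivity)
          apply mul_le_mul_of_nonneg_left hbr_low (by norm_num)
      _ ≤ (‖C‖ * ‖z‖ ^ N) * ‖∏' i, g i‖ := by
          apply mul_le_mul_of_nonneg_left hT1 (by positivity)
      _ = ‖f z‖ := hfz.symm
    · have hub : ∏ j ∈ Icc 1 m, ‖1 - z/a j‖ ≤ ∏ j ∈ Icc 1 m, (1 + ‖z‖ / r j) := by
        apply Finset.prod_le_prod (fun j _ => norm_nonneg _)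
        intro j hj
        obtain ⟨hj1, _⟩ := Finset.mem_Icc.mp hj
        calc ‖1 - z / a j‖ ≤ ‖(1:ℂ)‖ + ‖z / a j‖ := by
              simpa [sub_eq_add_neg] using norm_add_le 1 (-(z / a j))
        _ = 1 + ‖z‖ / r j := by rw [norm_one, norm_div, ha j hj1]
      calc ‖f z‖
          = (‖C‖ * ‖z‖ ^ N) * ‖∏' i, g i‖ := hfz
      _ ≤ (‖C‖ * ‖z‖ ^ N) * (2 * ∏ i ∈ range (m+3), ‖g i‖) := by
          apply mul_le_mul_of_nonneg_left hT2 (by positivity)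
      _ ≤ (‖C‖ * ‖z‖ ^ N) * (2 * (8 * ∏ j ∈ Icc 1 m, ‖1 - z/a j‖)) := by
          apply mul_le_mul_of_nonneg_left _ (by positivity)
          apply mul_le_mul_of_nonneg_left hbr_up (by norm_num)
      _ ≤ (‖C‖ * ‖z‖ ^ N) * (16 * ∏ j ∈ Icc 1 m, (1 + ‖z‖ / r j)) := by
          apply mul_le_mul_of_nonneg_left _ (by positivity)
          calc (2:ℝ) * (8 * ∏ j ∈ Icc 1 m, ‖1 - z/a j‖)
              = 16 * ∏ j ∈ Icc 1 m, ‖1 - z/a j‖ := by ring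
          _ ≤ 16 * ∏ j ∈ Icc 1 m, (1 + ‖z‖ / r j) := by
              apply mul_le_mul_of_nonneg_left hub (by norm_num)
      _ = 16 * ‖C‖ * ‖z‖ ^ N * ∏ j ∈ Icc 1 m, (1 + ‖z‖ / r j) := by ring

  obtain ⟨m₀, hm₀⟩ : ∃ m₀ : ℕ, 5/ε ≤ 2^m₀ := by
    obtain ⟨n, hn⟩ := pow_unbounded_of_one_lt (5/ε) (by norm_num : (1:ℝ) < 2)
    exact ⟨n, hn.le⟩
  obtain ⟨Ka, hKa⟩ := eventually_atTop.mp E_UPLOW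
  obtain ⟨Kb, hKb⟩ := eventually_atTop.mp (hP2 (ε/4) (by linarith) (by linarith))
  obtain ⟨Kc, hKc⟩ := eventually_atTop.mp (hP2 (1/16) (by norm_num) (by norm_num))
  obtain ⟨Kd, hKd⟩ := eventually_atTop.mp (hrbig S₀)
  obtain ⟨Ke, hKe⟩ := eventually_atTop.mp (ratio_pow_le (1-ε/2) (1-ε/4)
    (16 * ‖C‖) (1/2) (by linarith) (by linarith) (by linarith)
    (by positivity) (by norm_num))
  obtain ⟨Kf, hKf⟩ := eventually_atTop.mp (ratio_pow_le (7/8) (15/16)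
    (16 * ‖C‖) (1/2) (by norm_num) (by norm_num) (by norm_num)
    (by positivity) (by norm_num))
  obtain ⟨Kg, hKg⟩ := eventually_atTop.mp (ratio_pow_le (1+ε/4) (1+ε/2)
    (256*(1+ε/2)^(K₀-1+m₀)) (‖C‖*(ε/2)^(K₀-1+m₀)) (by linarith) (by linarith)
    (by linarith) (mul_pos (by norm_num) (pow_pos (by linarith) _))
    (mul_pos hCpos (pow_pos (by linarith) _)))
  obtain ⟨Kh, hKh⟩ := eventually_atTop.mp (ratio_pow_le 1 2 256 (‖C‖ * ε)
    (by norm_num) (by norm_num) (by norm_num) (by norm_num) (mul_pos hCpos hε))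
  obtain ⟨Ki, hKi⟩ := eventually_atTop.mp (ratio_pow_le 1 (27/22) 32 (9/5)
    (by norm_num) (by norm_num) (by norm_num) (by norm_num) (by norm_num))
  obtain ⟨Kp, hKp⟩ := eventually_atTop.mp (hP2 (1/10) (by norm_num) (by norm_num))
  set KR := K₀ + Kd + Ki + Kp with hKRdef
  have hRINF : ∀ m, KR ≤ m → 32 * r (m+1) ≤ r (m+2) := by
    intro m hm
    have hmK₀ : K₀ ≤ m := by omega
    have hm1 : 1 ≤ m := le_trans hK₀1 hmK₀
    have hb : 32 ≤ (9/5:ℝ) * (27/22)^m := by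
      have := hKi m (by omega); simpa using this
    have hPl : (9/10:ℝ)^(m+1) ≤ P (m+1) := by
      have := (hKp (m+1) (by omega)).1; norm_num at this ⊢; exact this
    have hPu : P m ≤ (11/10:ℝ)^m := by
      have := (hKp m (by omega)).2; norm_num at this ⊢; exact this
    exact core_rinf N P r hrpos hrec m hm1 (hK₀ m hmK₀)
      (hall m hmK₀ (hKd m (by omega))) hPl hPu hb
  have hGband : ∀ z : ℂ, ∀ j, 1 ≤ j → ‖z‖ / r j - 1 ≤ ‖1 - z / a j‖ := by
    intro z j hj1
    have hA := ha j hj1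
    have h5 := norm_sub_norm_le (z / a j) 1
    rw [norm_sub_rev] at h5
    simp only [norm_one] at h5
    rw [norm_div, hA] at h5
    exact h5
  set Kx := K₀ + m₀ + Ka + Kb + Kc + Kd + Ke + Kf + Kg + Kh + KR with hKxdef
  refine ⟨Kx + 2, fun k hk => ?_⟩
  obtain ⟨m, rfl⟩ : ∃ m, k = m + 2 := ⟨k - 2, by omega⟩
  have hm : Kx ≤ m := by omega
  have hrm2pos : 0 < r (m+2) := hrpos _ (by omega)
  have hallm2 : ∀ j, 1 ≤ j → j ≤ m+2 → r j ≤ r (m+2) :=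
    hall (m+2) (by omega) (hKd (m+2) (by omega))
  refine ⟨?_, ?_, ?_, ?_⟩
  · -- item (i)
    intro z hz
    have hz3 : ‖z‖ ≤ 3/2 * r (m+2) := by rw [hz]; nlinarith
    have hLOW := (hKa (m+2) (by omega) z hz3).1
    have hmid : ∀ j, K₀ ≤ j → j ≤ (m+2) - m₀ → 5/ε * r j ≤ r (m+2) := by
      intro j hjK hjk
      have hjm : j ≤ m+2 := le_trans hjk (Nat.sub_le _ _)
      have h1 := hgeom' j (m+2) hjK hjm
      have h2 : (2:ℝ)^m₀ ≤ 2^((m+2)-j) := pow_le_pow_right₀ (by norm_num) (by omega)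
      have hrj := hrpos j (le_trans hK₀1 hjK)
      have h3 : 5/ε * r j ≤ 2^((m+2)-j) * r j :=
        mul_le_mul_of_nonneg_right (le_trans hm₀ h2) hrj.le
      linarith
    exact core_i N (m+2) K₀ m₀ (‖C‖) ε P r (‖f z‖) (‖z‖)
      (fun j => ‖1 - z / a j‖) hrpos (by omega) hK₀1 (by omega)
      (hrec (m+2) (by omega)) hallm2 hmid hε hε2 hCpos (hKb (m+2) (by omega)).2
      (hKg (m+2) (by omega)) hz (fun j hj1 _ => hGband z j hj1) hLOW
  · -- item (ii)
    intro z hz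
    have hz3 : ‖z‖ ≤ 3/2 * r (m+2) := by rw [hz]; nlinarith
    have hUB := (hKa (m+2) (by omega) z hz3).2
    have hsmall : 16 * ‖C‖ * ((1+(1-ε))/2)^(m+2) ≤ 1/2 * (1-ε/4)^(m+2) := by
      rw [show (1+(1-ε))/2 = 1-ε/2 from by ring]
      exact hKe (m+2) (by omega)
    exact core_up N (m+2) (‖C‖) (1-ε) ((1-ε/4)^(m+2)) P r
      (‖f z‖) (‖z‖)
      hrpos (by omega) (hrec (m+2) (by omega)) hallm2 hCpos.le (by linarith) (by linarith)
      (hKb (m+2) (by omega)).1 hsmall (norm_nonneg z) (le_of_eq hz) hUB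
  · -- item (iii)
    intro z hz
    have hz3 : ‖z‖ ≤ 3/2 * r (m+2) := by rw [hz]; nlinarith
    have hLOW := (hKa (m+2) (by omega) z hz3).1
    have hGlast : ε ≤ ‖1 - z / a (m+2)‖ := by
      have hA := ha (m+2) (by omega)
      have h5 := norm_sub_norm_le (1:ℂ) (z / a (m+2))
      simp only [norm_one] at h5
      have h6 : ‖z / a (m+2)‖ = 1 - ε := by
        rw [norm_div, hA, hz, mul_div_assoc, div_self hrm2pos.ne', mul_one]
      linarith
    have hPu : P (m+1) ≤ 2^(m+1) := by
      refine le_trans (hKc (m+1) (by omega)).2 (pow_le_pow_left₀ (by norm_num) (by norm_num) (m+1))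
    have hbig : 256 ≤ ‖C‖ * ε * 2^(m+1) := by
      have := hKh (m+1) (by omega); simpa using this
    exact core_iii N (m+1) (‖C‖) ε P r (‖f z‖) (‖z‖)
      (fun j => ‖1 - z / a j‖) hrpos (by omega) (hrec (m+1) (by omega))
      (hall (m+1) (by omega) (hKd (m+1) (by omega))) (hRINF m (by omega)) hε hε2 hCpos
      hPu hbig hz (fun j hj1 _ => hGband z j hj1) hGlast hLOW
  · -- item (iv)
    intro z hz
    have h2r := hK₀ (m+2) (by omega)
    have hz3 : ‖z‖ ≤ 3/4 * r (m+3) := by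
      rw [hz]; nlinarith [hrpos (m+2) (by omega : 1 ≤ m+2)]
    have hz33 : ‖z‖ ≤ 3/2 * r (m+3) := by
      nlinarith [hrpos (m+3) (by omega : 1 ≤ m+3)]
    have hUB := (hKa (m+3) (by omega) z hz33).2
    have hsmall : 16 * ‖C‖ * ((1+(3/4:ℝ))/2)^(m+3) ≤ 1/2 * (15/16)^(m+3) := by
      rw [show (1+(3/4:ℝ))/2 = 7/8 from by norm_num]
      exact hKf (m+3) (by omega)
    have hPl : ((15:ℝ)/16)^(m+3) ≤ P (m+3) := by
      have := (hKc (m+3) (by omega)).1; norm_num at this ⊢; exact this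
    exact core_up N (m+3) (‖C‖) (3/4) ((15/16)^(m+3)) P r
      (‖f z‖) (‖z‖)
      hrpos (by omega) (hrec (m+3) (by omega))
      (hall (m+3) (by omega) (hKd (m+3) (by omega))) hCpos.le (by norm_num) (by norm_num)
      hPl hsmall (norm_nonneg z) hz3 hUB
end

section
/- If limsup_{k→∞} k P_k > |C|/(2e), then there exists ε > 0 such that for infinitely many k, k·r_k < |f(c_k)| < (1−ε) r_{k+1}. -/
open Filter Finset

private lemma exp_neg_le (v : ℝ) (h0 : 0 ≤ v) (h2 : v ≤ 1/2) : Real.exp (-(2*v)) ≤ 1 - v := by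
  have h3 : 1 + 2*v ≤ Real.exp (2*v) := by linarith [Real.add_one_le_exp (2*v)]
  rw [Real.exp_neg, inv_le_iff_one_le_mul₀ (Real.exp_pos _)]
  nlinarith [Real.exp_pos (2*v)]

private lemma pow_mono_r (r : ℕ → ℝ) (K : ℕ) (h2 : ∀ j, K ≤ j → 2 * r j ≤ r (j+1))
    (i : ℕ) (hi : K ≤ i) : ∀ j, i ≤ j → (2:ℝ)^(j-i) * r i ≤ r j := by
  intro j hj
  induction j, hj using Nat.le_induction with
  | base => simp
  | succ n hn ih =>
    have h4 := h2 n (le_trans hi hn)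
    have h5 : n + 1 - i = (n - i) + 1 := by omega
    rw [h5, pow_succ]
    nlinarith [pow_pos (by norm_num : (0:ℝ) < 2) (n - i)]

private lemma sum_r_le (r : ℕ → ℝ) (K : ℕ) (h2 : ∀ j, K ≤ j → 2 * r j ≤ r (j+1))
    (hpos : ∀ j, K ≤ j → 0 < r j) : ∀ n, K ≤ n → ∑ j ∈ Ioc K n, r j ≤ 2 * r n := by
  intro n hn
  induction n, hn using Nat.le_induction with
  | base => simp [le_of_lt (hpos K le_rfl)]
  | succ n hn ih =>
    rw [Finset.sum_Ioc_succ_top (by omega : K ≤ n)]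
    have := h2 n hn
    linarith

private lemma sum_rinv_le (r : ℕ → ℝ) (K : ℕ) (h2 : ∀ j, K ≤ j → 2 * r j ≤ r (j+1))
    (hpos : ∀ j, K ≤ j → 0 < r j) (k : ℕ) (hk : K ≤ k) :
    ∀ n, ∑ i ∈ Ioc k n, (r i)⁻¹ ≤ 2 * (r (k+1))⁻¹ := by
  have key : ∀ n, k+1 ≤ n → ∑ i ∈ Ioc k n, (r i)⁻¹ + (r n)⁻¹ ≤ 2 * (r (k+1))⁻¹ := by
    intro n hn
    induction n, hn using Nat.le_induction with
    | base =>
      rw [← Finset.Icc_add_one_left_eq_Ioc, Finset.Icc_self, Finset.sum_singleton]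
      have := le_of_lt (hpos (k+1) (by omega))
      have : 0 ≤ (r (k+1))⁻¹ := by positivity
      linarith
    | succ n hn ih =>
      rw [Finset.sum_Ioc_succ_top (by omega : k ≤ n)]
      have h4 := h2 n (by omega)
      have p1 := hpos n (by omega)
      have p2 := hpos (n+1) (by omega)
      have h6 : (r (n+1))⁻¹ + (r (n+1))⁻¹ ≤ (r n)⁻¹ := by
        rw [← two_mul, inv_eq_one_div, inv_eq_one_div, mul_one_div, div_le_div_iff₀ p2 p1]
        nlinarith
      linarith
  intro n
  rcases le_or_gt n k with h | h
  · rw [Finset.Ioc_eq_empty (by omega)]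
    have := le_of_lt (hpos (k+1) (by omega))
    simp; positivity
  · have h7 := key n h
    have p3 := hpos n (by omega)
    have : (0:ℝ) ≤ (r n)⁻¹ := by positivity
    linarith

open Filter

set_option maxHeartbeats 2000000 in
/-- if `limsup k P_k > |C|/(2e)`, then there is `ε > 0` with
`k r_k < |f(c_k)| < (1-ε) r_{k+1}` for infinitely many `k`. -/
theorem stmt_9 (N : ℕ) (C : ℂ) (hC : C ≠ 0)
    (P r : ℕ → ℝ)
    (hP : ∀ k, 1 ≤ k → 0 < P k)
    (hPlim : Tendsto (fun k : ℕ => (P k) ^ ((1 : ℝ) / k)) atTop (nhds 1))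
    (hrpos : ∀ k, 1 ≤ k → 0 < r k)
    (hr2 : ∀ᶠ k in atTop, 2 * r k ≤ r (k + 1))
    (hrec : ∀ k, 1 ≤ k →
      r (k + 1) = P k * (r k) ^ N * ∏ j ∈ Finset.Icc 1 k, (1 + r k / r j))
    (a : ℕ → ℂ) (ha : ∀ k, 1 ≤ k → ‖a k‖ = r k)
    (f : ℂ → ℂ)
    (hmul : ∀ z : ℂ, Multipliable (fun k : ℕ => 1 - z / a (k + 1)))
    (hf : ∀ z : ℂ, f z = C * z ^ N * ∏' k : ℕ, (1 - z / a (k + 1)))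
    (c : ℕ → ℂ)
    (hc : ∀ᶠ k in atTop, deriv f (c k) = 0 ∧
      Real.sqrt (r (k - 1) * r k) ≤ ‖c k‖ ∧
      ‖c k‖ ≤ Real.sqrt (r k * r (k + 1)))
    (hc1 : Tendsto (fun k : ℕ => ((k : ℂ) + N) * (1 - c k / a k)) atTop (nhds 1))
    (hsup : ((‖C‖ / (2 * Real.exp 1) : ℝ) : EReal) <
      Filter.limsup (fun k : ℕ => (((k : ℝ) * P k : ℝ) : EReal)) atTop) :
    ∃ ε : ℝ, 0 < ε ∧ ∃ᶠ k : ℕ in atTop,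
      (k : ℝ) * r k < ‖f (c k)‖ ∧
        ‖f (c k)‖ < (1 - ε) * r (k + 1) := by
  -- abs of f
  have habs : ∀ z : ℂ, ‖f z‖ =
      ‖C‖ * ‖z‖ ^ N * ‖∏' k : ℕ, (1 - z / a (k + 1))‖ := by
    intro z; rw [hf]; simp [norm_mul, norm_pow]
  obtain ⟨K₀, hK₀⟩ := eventually_atTop.1 hr2
  set K := K₀ + 1 with hKdef
  have hK1 : 1 ≤ K := by omega
  have h2 : ∀ j, K ≤ j → 2 * r j ≤ r (j + 1) := fun j hj => hK₀ j (by omega)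
  have hposK : ∀ j, K ≤ j → 0 < r j := fun j _ => hrpos j (by omega)
  have mono := pow_mono_r r K h2
  have r1pos : 0 < r 1 := hrpos 1 le_rfl
  -- r tends to infinity
  have rtend : Tendsto r atTop atTop := by
    rw [tendsto_atTop]
    intro b
    obtain ⟨m, hm⟩ := pow_unbounded_of_one_lt (b / r K) (one_lt_two (α := ℝ))
    filter_upwards [eventually_ge_atTop (K + m)] with k hk
    have h5 := mono K le_rfl k (by omega)
    have h6 : (2:ℝ) ^ m ≤ 2 ^ (k - K) := pow_le_pow_right₀ one_le_two (by omega)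
    have h7 := hposK K le_rfl
    have h8 : b < 2 ^ m * r K := by
      rw [div_lt_iff₀ h7] at hm; linarith
    nlinarith
  -- sum of small r's
  set S := ∑ j ∈ Finset.Icc 1 K, r j with hSdef
  have hSnn : ∀ j ∈ Finset.Icc 1 K, 0 ≤ r j := by
    intro j hj; rw [Finset.mem_Icc] at hj; exact (hrpos j hj.1).le
  have hjS : ∀ j, 1 ≤ j → j ≤ K → r j ≤ S :=
    fun j h1 h2' => Finset.single_le_sum hSnn (Finset.mem_Icc.2 ⟨h1, h2'⟩)
  have hSpos : 0 < S := lt_of_lt_of_le r1pos (hjS 1 le_rfl hK1)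
  have hdom : ∀ᶠ k in atTop, ∀ j, 1 ≤ j → j < k → 2 * r j ≤ r k := by
    filter_upwards [rtend.eventually_ge_atTop (2 * S), eventually_ge_atTop (K + 1)]
      with k hk1 hk2 j hj1 hjk
    rcases le_or_gt j K with h | h
    · have := hjS j hj1 h; linarith
    · have h5 := mono j h.le k hjk.le
      have h6 : (2:ℝ) ≤ 2 ^ (k - j) := by
        calc (2:ℝ) = 2 ^ 1 := (pow_one 2).symm
        _ ≤ 2 ^ (k - j) := pow_le_pow_right₀ one_le_two (by omega)
      have h7 := hrpos j (by omega)
      nlinarith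
  -- complex asymptotics
  have haK : ∀ᶠ k in atTop, a k ≠ 0 ∧ ‖a k‖ = r k := by
    filter_upwards [eventually_ge_atTop 1] with k hk
    have h3 := ha k hk
    have h4 := hrpos k hk
    refine ⟨fun h => ?_, h3⟩
    rw [h] at h3; simp at h3; linarith
  set s : ℕ → ℂ := fun k => 1 - c k / a k with hsdef
  have hinv : Tendsto (fun k : ℕ => ((k:ℂ) + N)⁻¹) atTop (nhds 0) := by
    have e1 : (fun k : ℕ => ((k:ℂ) + N)⁻¹) = fun k : ℕ => Complex.ofReal (((k + N : ℕ) : ℝ)⁻¹) := by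
      funext k; push_cast; ring
    rw [e1]
    rw [show ((0:ℂ)) = ((0:ℝ):ℂ) by norm_num]
    refine Tendsto.comp (Complex.continuous_ofReal.tendsto _) ?_
    exact tendsto_inv_atTop_nhds_zero_nat.comp (tendsto_add_atTop_nat N)
  have hne : ∀ k : ℕ, 1 ≤ k → ((k:ℂ) + N) ≠ 0 := by
    intro k hk h
    have : ((k + N : ℕ) : ℂ) = 0 := by push_cast; linear_combination h
    rw [Nat.cast_eq_zero] at this; omega
  have hs0 : Tendsto s atTop (nhds 0) := by
    have e1 : ∀ᶠ k : ℕ in atTop, (((k:ℂ) + N) * s k) * ((k:ℂ) + N)⁻¹ = s k := by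
      filter_upwards [eventually_ge_atTop 1] with k hk
      field_simp [hne k hk]
    apply Tendsto.congr' e1
    simpa using hc1.mul hinv
  have hks : Tendsto (fun k : ℕ => (k:ℂ) * s k) atTop (nhds 1) := by
    have e1 : (fun k : ℕ => (k:ℂ) * s k) = fun k : ℕ => ((k:ℂ) + N) * s k - (N:ℂ) * s k := by
      funext k; ring
    rw [e1]
    simpa using hc1.sub (hs0.const_mul (N:ℂ))
  have hq1 : Tendsto (fun k : ℕ => c k / a k) atTop (nhds 1) := by
    have e1 : (fun k : ℕ => c k / a k) = fun k => 1 - s k := by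
      funext k; simp [hsdef]
    rw [e1]
    simpa using (tendsto_const_nhds (x := (1:ℂ))).sub hs0
  set u : ℕ → ℝ := fun k => ‖c k‖ / r k with hudef
  have huq : ∀ᶠ k in atTop, u k = ‖c k / a k‖ := by
    filter_upwards [haK] with k hk
    rw [norm_div, hk.2]
  have hu1 : Tendsto u atTop (nhds 1) := by
    apply Tendsto.congr' (huq.mono fun k hk => hk.symm)
    have := (continuous_norm.tendsto 1).comp hq1
    simpa [Function.comp_def] using this
  have hkabs : Tendsto (fun k : ℕ => (k:ℝ) * ‖s k‖) atTop (nhds 1) := by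
    have e1 : (fun k : ℕ => (k:ℝ) * ‖s k‖) = fun k : ℕ => ‖(k:ℂ) * s k‖ := by
      funext k; rw [norm_mul, Complex.norm_natCast]
    rw [e1]
    have := (continuous_norm.tendsto 1).comp hks
    simpa [Function.comp_def] using this
  have hsabs0 : Tendsto (fun k : ℕ => ‖s k‖) atTop (nhds 0) := by
    have := (continuous_norm.tendsto 0).comp hs0
    simpa [Function.comp_def] using this
  have hkd : Tendsto (fun k : ℕ => (k:ℝ) * (u k - 1)) atTop (nhds (-1)) := by
    have hnum : Tendsto (fun k : ℕ => (k:ℝ) * (u k ^ 2 - 1)) atTop (nhds (-2)) := by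
      have e1 : ∀ᶠ k : ℕ in atTop,
          (-2) * ((k:ℂ) * s k).re + ((k:ℝ) * ‖s k‖) * ‖s k‖
            = (k:ℝ) * (u k ^ 2 - 1) := by
        filter_upwards [huq] with k hk
        rw [hk]
        have e2 : c k / a k = 1 - s k := by simp [hsdef]
        rw [e2]
        have hA : ‖1 - s k‖ ^ 2 = 1 - 2 * (s k).re + ((s k).re^2 + (s k).im^2) := by
          rw [Complex.sq_norm, Complex.normSq_apply]
          simp [Complex.sub_re, Complex.sub_im]
          ring
        have hB : ‖s k‖ * ‖s k‖ = (s k).re^2 + (s k).im^2 := by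
          rw [← sq, Complex.sq_norm, Complex.normSq_apply]; ring
        have hCre : ((k:ℂ) * s k).re = (k:ℝ) * (s k).re := by
          simp [Complex.mul_re]
        rw [hA, hCre]
        linear_combination (k:ℝ) * hB
      apply Tendsto.congr' e1
      have h5 : Tendsto (fun k : ℕ => ((k:ℂ) * s k).re) atTop (nhds 1) := by
        have := (Complex.continuous_re.tendsto 1).comp hks
        simpa [Function.comp_def] using this
      have := ((h5.const_mul (-2)).add (hkabs.mul hsabs0))
      simpa using this
    have e2 : ∀ᶠ k : ℕ in atTop, ((k:ℝ) * (u k ^ 2 - 1)) / (u k + 1) = (k:ℝ) * (u k - 1) := by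
      filter_upwards [eventually_ge_atTop 1] with k hk
      have hup : 0 < u k + 1 := by
        have h6 := hrpos k hk
        have : 0 ≤ u k := by positivity
        linarith
      field_simp
      ring
    apply Tendsto.congr' e2
    have h7 : Tendsto (fun k : ℕ => u k + 1) atTop (nhds 2) := by
      have h8 := hu1.add (tendsto_const_nhds (x := (1:ℝ)))
      norm_num at h8
      exact h8
    have := hnum.div h7 (by norm_num)
    norm_num at this
    exact this
  -- P k ≥ (3/4)^k eventually
  have hP34 : ∀ᶠ k : ℕ in atTop, (3/4 : ℝ)^k ≤ P k := by
    have hev : ∀ᶠ k : ℕ in atTop, (3/4 : ℝ) ≤ (P k) ^ ((1:ℝ)/k) :=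
      hPlim.eventually (eventually_ge_nhds (by norm_num))
    filter_upwards [hev, eventually_ge_atTop 1] with k h1 hk
    have hp := (hP k hk).le
    calc (3/4 : ℝ)^k ≤ ((P k) ^ ((1:ℝ)/k))^k := pow_le_pow_left₀ (by norm_num) h1 k
    _ = P k := by
      rw [← Real.rpow_natCast ((P k) ^ ((1:ℝ)/k)) k, ← Real.rpow_mul hp]
      rw [show (1:ℝ)/k * k = 1 by field_simp]
      exact Real.rpow_one _
  set ρ : ℕ → ℝ := fun k => r k / r (k+1) with hρdef
  have hρub : ∀ᶠ k : ℕ in atTop, ρ k ≤ 2 * r 1 * (2/3 : ℝ)^k := by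
    filter_upwards [hP34, hdom, eventually_ge_atTop (K+1), rtend.eventually_ge_atTop 1]
      with k hp hd hk hr1k
    obtain ⟨m, rfl⟩ : ∃ m, k = m + 1 := ⟨k - 1, by omega⟩
    have hkpos : 0 < r (m+1) := hrpos (m+1) (by omega)
    have hk1pos : 0 < r (m+1+1) := hrpos (m+1+1) (by omega)
    have hprod : (r (m+1) / r 1) * 2^m ≤ ∏ j ∈ Finset.Icc 1 (m+1), (1 + r (m+1) / r j) := by
      have hmem : (1 : ℕ) ∈ Finset.Icc 1 (m+1) := Finset.mem_Icc.2 ⟨le_rfl, by omega⟩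
      rw [← Finset.mul_prod_erase _ _ hmem, Finset.Icc_erase_left]
      have hfac : (2:ℝ)^m ≤ ∏ j ∈ Finset.Ioc 1 (m+1), (1 + r (m+1) / r j) := by
        calc (2:ℝ)^m = ∏ _j ∈ Finset.Ioc 1 (m+1), (2:ℝ) := by
              rw [Finset.prod_const, Nat.card_Ioc]; norm_num
        _ ≤ _ := by
          apply Finset.prod_le_prod (fun j _ => by norm_num)
          intro j hj
          rw [Finset.mem_Ioc] at hj
          have hjpos : 0 < r j := hrpos j (by omega)
          have hrj : r j ≤ r (m+1) := by
            rcases eq_or_lt_of_le hj.2 with h | h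
            · rw [h]
            · have := hd j (by omega) h; linarith
          have : 1 ≤ r (m+1) / r j := (one_le_div hjpos).2 hrj
          linarith
      have h1' : 0 ≤ r (m+1) / r 1 := by positivity
      have h3' : (0:ℝ) ≤ 2^m := by positivity
      have h4' : (1 + r (m+1) / r 1) * 2^m
          ≤ (1 + r (m+1) / r 1) * ∏ j ∈ Finset.Ioc 1 (m+1), (1 + r (m+1) / r j) :=
        mul_le_mul_of_nonneg_left hfac (by linarith)
      nlinarith
    have hrkN : (1:ℝ) ≤ r (m+1) ^ N := one_le_pow₀ hr1k
    have hPk : 0 < P (m+1) := hP (m+1) (by omega)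
    have hprodpos : (0:ℝ) < (r (m+1) / r 1) * 2^m := by positivity
    have hA : (3/4:ℝ)^(m+1) * ((r (m+1) / r 1) * 2^m) ≤ r (m+1+1) := by
      rw [hrec (m+1) (by omega)]
      calc (3/4:ℝ)^(m+1) * ((r (m+1) / r 1) * 2^m) ≤ P (m+1) * ((r (m+1) / r 1) * 2^m) :=
            mul_le_mul_of_nonneg_right hp hprodpos.le
      _ ≤ P (m+1) * (r (m+1) ^ N * ((r (m+1) / r 1) * 2^m)) :=
            mul_le_mul_of_nonneg_left (le_mul_of_one_le_left hprodpos.le hrkN) hPk.le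
      _ ≤ P (m+1) * (r (m+1) ^ N * ∏ j ∈ Finset.Icc 1 (m+1), (1 + r (m+1) / r j)) := by
          have := mul_le_mul_of_nonneg_left hprod (pow_nonneg hkpos.le N)
          exact mul_le_mul_of_nonneg_left this hPk.le
      _ = P (m+1) * r (m+1) ^ N * ∏ j ∈ Finset.Icc 1 (m+1), (1 + r (m+1) / r j) := by ring
    have hfact : 2 * r 1 * (2/3:ℝ)^(m+1) * ((3/4:ℝ)^(m+1) * ((r (m+1) / r 1) * 2^m)) = r (m+1) := by
      have e6 : ((2:ℝ)/3) ^ (m+1) * (3/4:ℝ)^(m+1) = (1/2:ℝ)^m * (1/2) := by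
        rw [← mul_pow, pow_succ]; norm_num
      have e7 : ((1:ℝ)/2)^m * 2^m = 1 := by rw [← mul_pow]; norm_num
      calc 2 * r 1 * (2/3:ℝ)^(m+1) * ((3/4:ℝ)^(m+1) * ((r (m+1) / r 1) * 2^m))
          = (r (m+1) / r 1 * r 1) * (2 * (((2:ℝ)/3) ^ (m+1) * (3/4:ℝ)^(m+1)) * 2^m) := by ring
      _ = r (m+1) * (2 * ((1/2:ℝ)^m * (1/2)) * 2^m) := by
          rw [e6, div_mul_cancel₀ _ r1pos.ne']
      _ = r (m+1) := by linear_combination (r (m+1)) * e7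
    have := mul_le_mul_of_nonneg_left hA (by positivity : (0:ℝ) ≤ 2 * r 1 * (2/3:ℝ)^(m+1))
    rw [hfact] at this
    rw [hρdef]
    rw [div_le_iff₀ hk1pos]
    exact this
  have hρ0 : Tendsto ρ atTop (nhds 0) := by
    refine squeeze_zero' ?_ hρub ?_
    · filter_upwards [eventually_ge_atTop 1] with k hk
      have := hrpos k hk
      have := hrpos (k+1) (by omega)
      positivity
    · have : Tendsto (fun k : ℕ => 2 * r 1 * (2/3:ℝ)^k) atTop (nhds (2 * r 1 * 0)) :=
        (tendsto_pow_atTop_nhds_zero_of_lt_one (by norm_num) (by norm_num)).const_mul _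
      simpa using this
  -- partial products converge to |tprod|
  have hpartial : ∀ z : ℂ, Tendsto (fun n : ℕ => ∏ i ∈ Finset.Icc 1 n, ‖1 - z / a i‖)
      atTop (nhds (‖∏' j : ℕ, (1 - z / a (j+1))‖)) := by
    intro z
    have h1 := (hmul z).hasProd
    have h3 : Tendsto (fun t : Finset ℕ => ∏ b ∈ t, ‖1 - z / a (b+1)‖) atTop
        (nhds (‖∏' j : ℕ, (1 - z / a (j+1))‖)) := by
      simpa [Function.comp_def, norm_prod] using (continuous_norm.tendsto _).comp h1
    have h4 : HasProd (fun j : ℕ => ‖1 - z / a (j+1)‖)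
        (‖∏' j : ℕ, (1 - z / a (j+1))‖) := h3
    refine (h4.tendsto_prod_nat).congr fun n => ?_
    rw [← Finset.Ico_add_one_right_eq_Icc, Finset.prod_Ico_eq_prod_range]
    refine Finset.prod_congr (by norm_num) fun i _ => ?_
    rw [add_comm]
  -- pointwise bounds
  have habs_ub : ∀ (z : ℂ) (i : ℕ), 1 ≤ i → ‖1 - z / a i‖ ≤ 1 + ‖z‖ / r i := by
    intro z i hi
    have h1 := norm_sub_le (1:ℂ) (z / a i)
    simpa [norm_div, ha i hi] using h1
  have habs_lb1 : ∀ (z : ℂ) (i : ℕ), 1 ≤ i → ‖z‖ / r i - 1 ≤ ‖1 - z / a i‖ := by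
    intro z i hi
    have h1 := norm_sub_norm_le (z / a i) (1:ℂ)
    rw [norm_sub_rev] at h1
    simpa [norm_div, ha i hi] using h1
  have habs_lb2 : ∀ (z : ℂ) (i : ℕ), 1 ≤ i → 1 - ‖z‖ / r i ≤ ‖1 - z / a i‖ := by
    intro z i hi
    have h1 := norm_sub_norm_le (1:ℂ) (z / a i)
    simpa [norm_div, ha i hi] using h1
  -- the function g and its limit
  set g : ℕ → ℝ := fun k => ‖C‖ * u k ^ N * ((k:ℝ) * ‖s k‖) *
      Real.exp ((u k - 1) * ((k:ℝ) - 1) + 2 * |u k - 1|) * Real.exp (4 * ρ k) / 2 with hgdef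
  have hd0 : Tendsto (fun k : ℕ => u k - 1) atTop (nhds 0) := by
    have := hu1.sub_const 1
    norm_num at this
    exact this
  have hd0abs : Tendsto (fun k : ℕ => |u k - 1|) atTop (nhds 0) := by
    have := (continuous_abs.tendsto 0).comp hd0
    simpa [Function.comp_def] using this
  have hgtend : Tendsto g atTop (nhds (‖C‖ / (2 * Real.exp 1))) := by
    have t1 : Tendsto (fun k : ℕ => u k ^ N) atTop (nhds 1) := by
      simpa using hu1.pow N
    have t2 : Tendsto (fun k : ℕ => (u k - 1) * ((k:ℝ) - 1) + 2 * |u k - 1|) atTop (nhds (-1)) := by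
      have e : (fun k : ℕ => (u k - 1) * ((k:ℝ) - 1) + 2 * |u k - 1|)
          = fun k : ℕ => ((k:ℝ) * (u k - 1) - (u k - 1)) + 2 * |u k - 1| := by
        funext k; ring
      rw [e]
      have := (hkd.sub hd0).add (hd0abs.const_mul 2)
      norm_num at this
      exact this
    have t3 : Tendsto (fun k : ℕ => Real.exp ((u k - 1) * ((k:ℝ) - 1) + 2 * |u k - 1|)) atTop
        (nhds (Real.exp (-1))) := by
      have := (Real.continuous_exp.tendsto _).comp t2
      simpa [Function.comp_def] using this
    have t4 : Tendsto (fun k : ℕ => Real.exp (4 * ρ k)) atTop (nhds 1) := by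
      have h5 := (Real.continuous_exp.tendsto _).comp (hρ0.const_mul 4)
      simp only [Function.comp_def, mul_zero, Real.exp_zero] at h5
      exact h5
    have t5 := ((((tendsto_const_nhds (x := ‖C‖)).mul t1).mul hkabs).mul t3).mul t4
    have t6 := t5.div_const 2
    rw [hgdef]
    convert t6 using 2
    rw [Real.exp_neg]
    field_simp
  -- upper bound
  have evu1 : ∀ᶠ k : ℕ in atTop, 3/4 ≤ u k := hu1.eventually (eventually_ge_nhds (by norm_num))
  have evu2 : ∀ᶠ k : ℕ in atTop, u k ≤ 5/4 := hu1.eventually (eventually_le_nhds (by norm_num))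
  have evs1 : ∀ᶠ k : ℕ in atTop, 1/2 ≤ (k:ℝ) * ‖s k‖ :=
    hkabs.eventually (eventually_ge_nhds (by norm_num))
  have evρ : ∀ᶠ k : ℕ in atTop, ρ k ≤ 1/16 := hρ0.eventually (eventually_le_nhds (by norm_num))
  have hIcc1 : ∀ n : ℕ, Finset.Icc 1 n = Finset.Ioc 0 n := fun n => by
    rw [show (1:ℕ) = 0 + 1 from rfl, Finset.Icc_add_one_left_eq_Ioc]
  have hupper : ∀ᶠ k : ℕ in atTop,
      ‖f (c k)‖ ≤ g k * (r (k+1) / ((k:ℝ) * P k)) := by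
    filter_upwards [hdom, eventually_ge_atTop (K+2), rtend.eventually_ge_atTop (4*S+4),
      evu2] with k hd hkK hrS hu54
    have hk1 : 1 ≤ k := by omega
    have hkR : (0:ℝ) < (k:ℝ) := by
      have : (0:ℕ) < k := by omega
      exact_mod_cast this
    have hrk : 0 < r k := hrpos k hk1
    have hrk1 : 0 < r (k+1) := hrpos (k+1) (by omega)
    have hPk : 0 < P k := hP k hk1
    have hzabs : ‖c k‖ = u k * r k := by
      rw [hudef]; field_simp
    have hzle : ‖c k‖ ≤ 2 * r k := by rw [hzabs]; nlinarith
    set Qk := ∏ j ∈ Finset.Icc 1 (k-1), (1 + r k / r j) with hQdef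
    have hQpos : 0 < Qk := Finset.prod_pos (by
      intro i hi; rw [Finset.mem_Icc] at hi
      have := hrpos i hi.1; positivity)
    have hsum_le : ∑ i ∈ Finset.Icc 1 (k-1), r i ≤ S + r k := by
      rw [hIcc1, ← Finset.sum_Ioc_consecutive _ (Nat.zero_le K) (show K ≤ k-1 by omega)]
      have hS1 : ∑ j ∈ Finset.Ioc 0 K, r j = S := by rw [hSdef, hIcc1]
      have hS2 : ∑ j ∈ Finset.Ioc K (k-1), r j ≤ 2 * r (k-1) :=
        sum_r_le r K h2 hposK (k-1) (by omega)
      have hS3 : 2 * r (k-1) ≤ r k := by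
        have h5 := h2 (k-1) (by omega)
        rwa [show k - 1 + 1 = k by omega] at h5
      rw [hS1]; linarith
    have hLle : ‖∏' j : ℕ, (1 - c k / a (j+1))‖
        ≤ ‖s k‖ * Qk *
          (Real.exp ((u k - 1) * ((k:ℝ) - 1) + 2 * |u k - 1|) * Real.exp (4 * ρ k)) := by
      apply le_of_tendsto (hpartial (c k))
      filter_upwards [eventually_ge_atTop k] with n hn
      have hIoc1 : Finset.Ioc (k-1) n = Finset.Icc k n := by
        rw [← Finset.Icc_add_one_left_eq_Ioc]; congr 1; omega
      have hmemk : k ∈ Finset.Icc k n := Finset.mem_Icc.2 ⟨le_rfl, hn⟩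
      have hsplit : ∏ i ∈ Finset.Icc 1 n, ‖1 - c k / a i‖
          = (∏ i ∈ Finset.Icc 1 (k-1), ‖1 - c k / a i‖) *
            (‖1 - c k / a k‖ * ∏ i ∈ Finset.Ioc k n, ‖1 - c k / a i‖) := by
        rw [hIcc1, ← Finset.prod_Ioc_consecutive _ (Nat.zero_le (k-1)) (show k-1 ≤ n by omega),
          hIoc1, ← Finset.mul_prod_erase _ _ hmemk, Finset.Icc_erase_left, ← hIcc1]
      rw [hsplit]
      have hb1 : ∏ i ∈ Finset.Icc 1 (k-1), ‖1 - c k / a i‖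
          ≤ Qk * Real.exp ((u k - 1) * ((k:ℝ) - 1) + 2 * |u k - 1|) := by
        have hpt : ∀ i ∈ Finset.Icc 1 (k-1), ‖1 - c k / a i‖
            ≤ (1 + r k / r i) * Real.exp ((u k - 1) * ((r k / r i) / (1 + r k / r i))) := by
          intro i hi
          rw [Finset.mem_Icc] at hi
          have hipos := hrpos i hi.1
          have hxpos : 0 < r k / r i := by positivity
          have h1' := habs_ub (c k) i hi.1
          have h2' : 1 + ‖c k‖ / r i
              = (1 + r k / r i) * (1 + (u k - 1) * ((r k / r i) / (1 + r k / r i))) := by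
            rw [hzabs]
            field_simp
            ring
          have h3' : 1 + (u k - 1) * ((r k / r i) / (1 + r k / r i))
              ≤ Real.exp ((u k - 1) * ((r k / r i) / (1 + r k / r i))) := by
            linarith [Real.add_one_le_exp ((u k - 1) * ((r k / r i) / (1 + r k / r i)))]
          calc ‖1 - c k / a i‖ ≤ 1 + ‖c k‖ / r i := h1'
          _ = (1 + r k / r i) * (1 + (u k - 1) * ((r k / r i) / (1 + r k / r i))) := h2'
          _ ≤ (1 + r k / r i) * Real.exp ((u k - 1) * ((r k / r i) / (1 + r k / r i))) :=
              mul_le_mul_of_nonneg_left h3' (by positivity)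
        calc ∏ i ∈ Finset.Icc 1 (k-1), ‖1 - c k / a i‖
            ≤ ∏ i ∈ Finset.Icc 1 (k-1), ((1 + r k / r i) *
                Real.exp ((u k - 1) * ((r k / r i) / (1 + r k / r i)))) :=
              Finset.prod_le_prod (fun i _ => norm_nonneg _) hpt
        _ = Qk * Real.exp (∑ i ∈ Finset.Icc 1 (k-1),
              (u k - 1) * ((r k / r i) / (1 + r k / r i))) := by
              rw [Finset.prod_mul_distrib, Real.exp_sum]
        _ ≤ Qk * Real.exp ((u k - 1) * ((k:ℝ) - 1) + 2 * |u k - 1|) := by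
              apply mul_le_mul_of_nonneg_left _ hQpos.le
              rw [Real.exp_le_exp]
              have hsum_eq : ∑ i ∈ Finset.Icc 1 (k-1), (u k - 1) * ((r k / r i) / (1 + r k / r i))
                  = (u k - 1) * ∑ i ∈ Finset.Icc 1 (k-1), ((r k / r i) / (1 + r k / r i)) := by
                rw [Finset.mul_sum]
              have hcard : ((Finset.Icc 1 (k-1)).card : ℝ) = (k:ℝ) - 1 := by
                rw [Nat.card_Icc]
                have : k - 1 + 1 - 1 = k - 1 := by omega
                rw [this, Nat.cast_sub hk1]
                norm_num
              have hTub : ∑ i ∈ Finset.Icc 1 (k-1), ((r k / r i) / (1 + r k / r i)) ≤ (k:ℝ) - 1 := by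
                calc ∑ i ∈ Finset.Icc 1 (k-1), ((r k / r i) / (1 + r k / r i))
                    ≤ ∑ i ∈ Finset.Icc 1 (k-1), (1:ℝ) := by
                      apply Finset.sum_le_sum
                      intro i hi; rw [Finset.mem_Icc] at hi
                      have hipos := hrpos i hi.1
                      have hxpos : 0 < r k / r i := by positivity
                      rw [div_le_one (by positivity)]; linarith
                _ = (k:ℝ) - 1 := by rw [Finset.sum_const, nsmul_eq_mul, mul_one, hcard]
              have hTlb : (k:ℝ) - 1 - 2 ≤ ∑ i ∈ Finset.Icc 1 (k-1), ((r k / r i) / (1 + r k / r i)) := by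
                have h6 : ∑ i ∈ Finset.Icc 1 (k-1), (1 - r i / r k)
                    ≤ ∑ i ∈ Finset.Icc 1 (k-1), ((r k / r i) / (1 + r k / r i)) := by
                  apply Finset.sum_le_sum
                  intro i hi; rw [Finset.mem_Icc] at hi
                  have hipos := hrpos i hi.1
                  have hxpos : 0 < r k / r i := by positivity
                  have h4' : 1 - (r k / r i) / (1 + r k / r i) = 1 / (1 + r k / r i) := by
                    field_simp
                    ring
                  have h5' : 1 / (1 + r k / r i) ≤ r i / r k := by
                    rw [div_le_div_iff₀ (by positivity) hrk]
                    have e : r k / r i * r i = r k := by field_simp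
                    nlinarith
                  linarith
                have h7 : ∑ i ∈ Finset.Icc 1 (k-1), (1 - r i / r k)
                    = ((k:ℝ) - 1) - (∑ i ∈ Finset.Icc 1 (k-1), r i) / r k := by
                  rw [Finset.sum_sub_distrib, Finset.sum_const, nsmul_eq_mul, mul_one, hcard,
                    ← Finset.sum_div]
                have h8 : (∑ i ∈ Finset.Icc 1 (k-1), r i) / r k ≤ 2 := by
                  rw [div_le_iff₀ hrk]
                  have hSrk : S ≤ r k := by linarith
                  linarith
                linarith
              rw [hsum_eq]
              have h9 : |(∑ i ∈ Finset.Icc 1 (k-1), ((r k / r i) / (1 + r k / r i))) - ((k:ℝ) - 1)| ≤ 2 :=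
                abs_le.2 ⟨by linarith, by linarith⟩
              have h10 := le_abs_self ((u k - 1) *
                ((∑ i ∈ Finset.Icc 1 (k-1), ((r k / r i) / (1 + r k / r i))) - ((k:ℝ) - 1)))
              rw [abs_mul] at h10
              nlinarith [abs_nonneg (u k - 1),
                mul_le_mul_of_nonneg_left h9 (abs_nonneg (u k - 1))]
      have hb3 : ∏ i ∈ Finset.Ioc k n, ‖1 - c k / a i‖ ≤ Real.exp (4 * ρ k) := by
        have hpt : ∀ i ∈ Finset.Ioc k n, ‖1 - c k / a i‖
            ≤ Real.exp (‖c k‖ * (r i)⁻¹) := by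
          intro i hi; rw [Finset.mem_Ioc] at hi
          have hi1 : 1 ≤ i := by omega
          have hipos := hrpos i hi1
          calc ‖1 - c k / a i‖ ≤ 1 + ‖c k‖ / r i := habs_ub (c k) i hi1
          _ ≤ Real.exp (‖c k‖ / r i) := by
              linarith [Real.add_one_le_exp (‖c k‖ / r i)]
          _ = Real.exp (‖c k‖ * (r i)⁻¹) := by rw [div_eq_mul_inv]
        calc ∏ i ∈ Finset.Ioc k n, ‖1 - c k / a i‖
            ≤ ∏ i ∈ Finset.Ioc k n, Real.exp (‖c k‖ * (r i)⁻¹) :=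
              Finset.prod_le_prod (fun i _ => norm_nonneg _) hpt
        _ = Real.exp (∑ i ∈ Finset.Ioc k n, ‖c k‖ * (r i)⁻¹) := (Real.exp_sum _ _).symm
        _ ≤ Real.exp (4 * ρ k) := by
            rw [Real.exp_le_exp, ← Finset.mul_sum]
            have h11 := sum_rinv_le r K h2 hposK k (by omega) n
            have hsnn : 0 ≤ ∑ i ∈ Finset.Ioc k n, (r i)⁻¹ := by
              apply Finset.sum_nonneg
              intro i hi; rw [Finset.mem_Ioc] at hi
              have := hrpos i (by omega)
              positivity
            have h12 : ‖c k‖ * ∑ i ∈ Finset.Ioc k n, (r i)⁻¹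
                ≤ (2 * r k) * (2 * (r (k+1))⁻¹) :=
              mul_le_mul hzle h11 hsnn (by positivity)
            have h13 : (2 * r k) * (2 * (r (k+1))⁻¹) = 4 * ρ k := by
              rw [hρdef]
              field_simp
              ring
            linarith
      have e14 : ‖1 - c k / a k‖ = ‖s k‖ := by rw [hsdef]
      calc (∏ i ∈ Finset.Icc 1 (k-1), ‖1 - c k / a i‖) *
            (‖1 - c k / a k‖ * ∏ i ∈ Finset.Ioc k n, ‖1 - c k / a i‖)
          ≤ (Qk * Real.exp ((u k - 1) * ((k:ℝ) - 1) + 2 * |u k - 1|)) *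
            (‖s k‖ * Real.exp (4 * ρ k)) := by
            rw [e14]
            refine mul_le_mul hb1 (mul_le_mul_of_nonneg_left hb3 (norm_nonneg _)) ?_ ?_
            · exact mul_nonneg (norm_nonneg _)
                (Finset.prod_nonneg fun i _ => norm_nonneg _)
            · exact mul_nonneg hQpos.le (Real.exp_nonneg _)
      _ = ‖s k‖ * Qk *
            (Real.exp ((u k - 1) * ((k:ℝ) - 1) + 2 * |u k - 1|) * Real.exp (4 * ρ k)) := by ring
    -- assemble upper bound for |f (c k)|
    have hQk' : r (k+1) = 2 * P k * r k ^ N * Qk := by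
      have e := hrec k hk1
      have hmem : k ∈ Finset.Icc 1 k := Finset.mem_Icc.2 ⟨hk1, le_rfl⟩
      have hIco : Finset.Ico 1 k = Finset.Icc 1 (k-1) := by
        rw [← Finset.Ico_add_one_right_eq_Icc]; congr 1; omega
      have hsplit2 : ∏ j ∈ Finset.Icc 1 k, (1 + r k / r j) = Qk * (1 + r k / r k) := by
        rw [← Finset.prod_erase_mul _ _ hmem, Finset.Icc_erase_right, hIco]
      have h15 : 1 + r k / r k = 2 := by rw [div_self hrk.ne']; norm_num
      rw [e, hsplit2, h15]; ring
    calc ‖f (c k)‖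
        = ‖C‖ * ‖c k‖ ^ N *
          ‖∏' j : ℕ, (1 - c k / a (j+1))‖ := habs (c k)
    _ ≤ ‖C‖ * ‖c k‖ ^ N *
          (‖s k‖ * Qk *
            (Real.exp ((u k - 1) * ((k:ℝ) - 1) + 2 * |u k - 1|) * Real.exp (4 * ρ k))) := by
        apply mul_le_mul_of_nonneg_left hLle (by positivity)
    _ = g k * (r (k+1) / ((k:ℝ) * P k)) := by
        rw [hzabs, hgdef, hQk', mul_pow]
        field_simp
  -- lower bound
  obtain ⟨d, hd256⟩ : ∃ d : ℕ, 256 * r 1 * (4/3:ℝ)^N / ‖C‖ ≤ 2^d := by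
    obtain ⟨d, hd⟩ := pow_unbounded_of_one_lt (256 * r 1 * (4/3:ℝ)^N / ‖C‖)
      (one_lt_two (α := ℝ))
    exact ⟨d, hd.le⟩
  have hCpos : 0 < ‖C‖ := by
    simpa using hC
  have hlower : ∀ᶠ k : ℕ in atTop, (k:ℝ) * r k < ‖f (c k)‖ := by
    filter_upwards [hdom, eventually_ge_atTop (K + 2 + d + 4*K + 40),
      rtend.eventually_ge_atTop (4*S+4), evu1, evu2, evs1, evρ] with k hd2 hkK hrS hu34 hu54 hs12 hρ16
    have hk1 : 1 ≤ k := by omega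
    have hkR : (0:ℝ) < (k:ℝ) := by
      have : (0:ℕ) < k := by omega
      exact_mod_cast this
    have hrk : 0 < r k := hrpos k hk1
    have hrk1 : 0 < r (k+1) := hrpos (k+1) (by omega)
    have hrk4 : 4 ≤ r k := by
      have : 0 < S := hSpos
      linarith
    have hzabs : ‖c k‖ = u k * r k := by
      rw [hudef]; field_simp
    have hzle : ‖c k‖ ≤ 2 * r k := by rw [hzabs]; nlinarith
    have hzge : 3/4 * r k ≤ ‖c k‖ := by rw [hzabs]; nlinarith
    set M := k - 1 - K with hMdef
    set sN := ∑ i ∈ Finset.Ioc K (k-1), (k - i) with hsNdef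
    have hρnn : 0 ≤ ρ k := by rw [hρdef]; positivity
    -- lower bound for the infinite product
    have hLlb : (1/(2*(k:ℝ))) * ((r k/(4*r 1)) * ((2:ℝ)^sN * ((4:ℝ)⁻¹)^M)) * (1/8)
        ≤ ‖∏' j : ℕ, (1 - c k / a (j+1))‖ := by
      apply ge_of_tendsto (hpartial (c k))
      filter_upwards [eventually_ge_atTop k] with n hn
      have hIoc1 : Finset.Ioc (k-1) n = Finset.Icc k n := by
        rw [← Finset.Icc_add_one_left_eq_Ioc]; congr 1; omega
      have hmemk : k ∈ Finset.Icc k n := Finset.mem_Icc.2 ⟨le_rfl, hn⟩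
      have hsplit : ∏ i ∈ Finset.Icc 1 n, ‖1 - c k / a i‖
          = (∏ i ∈ Finset.Icc 1 (k-1), ‖1 - c k / a i‖) *
            (‖1 - c k / a k‖ * ∏ i ∈ Finset.Ioc k n, ‖1 - c k / a i‖) := by
        rw [hIcc1, ← Finset.prod_Ioc_consecutive _ (Nat.zero_le (k-1)) (show k-1 ≤ n by omega),
          hIoc1, ← Finset.mul_prod_erase _ _ hmemk, Finset.Icc_erase_left, ← hIcc1]
      rw [hsplit]
      -- middle factor
      have hmid : 1/(2*(k:ℝ)) ≤ ‖1 - c k / a k‖ := by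
        have e14 : ‖1 - c k / a k‖ = ‖s k‖ := by rw [hsdef]
        rw [e14, div_le_iff₀ (by positivity)]
        calc (1:ℝ) = 2 * (1/2) := by norm_num
        _ ≤ 2 * ((k:ℝ) * ‖s k‖) := by linarith
        _ = ‖s k‖ * (2 * (k:ℝ)) := by ring
      -- first factor
      have hfirst : (r k/(4*r 1)) * ((2:ℝ)^sN * ((4:ℝ)⁻¹)^M)
          ≤ ∏ i ∈ Finset.Icc 1 (k-1), ‖1 - c k / a i‖ := by
        have hstep : ∏ i ∈ Finset.Icc 1 (k-1), (‖c k‖ / r i - 1)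
            ≤ ∏ i ∈ Finset.Icc 1 (k-1), ‖1 - c k / a i‖ := by
          apply Finset.prod_le_prod
          · intro i hi; rw [Finset.mem_Icc] at hi
            have hipos := hrpos i hi.1
            have hile : 2 * r i ≤ r k := hd2 i hi.1 (by omega)
            have h16 : r i ≤ ‖c k‖ := by nlinarith
            have h17 : 1 ≤ ‖c k‖ / r i := (one_le_div hipos).2 h16
            linarith
          · intro i hi; rw [Finset.mem_Icc] at hi
            exact habs_lb1 (c k) i hi.1
        refine le_trans ?_ hstep
        have hsplit1 : ∏ i ∈ Finset.Icc 1 (k-1), (‖c k‖ / r i - 1)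
            = (∏ i ∈ Finset.Ioc 0 1, (‖c k‖ / r i - 1)) *
              (∏ i ∈ Finset.Ioc 1 K, (‖c k‖ / r i - 1)) *
              (∏ i ∈ Finset.Ioc K (k-1), (‖c k‖ / r i - 1)) := by
          rw [hIcc1, ← Finset.prod_Ioc_consecutive _ (Nat.zero_le K) (show K ≤ k-1 by omega),
            ← Finset.prod_Ioc_consecutive _ (Nat.zero_le 1) (show 1 ≤ K by omega)]
        rw [hsplit1]
        have hf1 : r k/(4*r 1) ≤ ∏ i ∈ Finset.Ioc 0 1, (‖c k‖ / r i - 1) := by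
          rw [show Finset.Ioc 0 1 = {1} by rfl, Finset.prod_singleton]
          have h18 : r 1 ≤ S := hjS 1 le_rfl hK1
          have h20 : r k / (4 * r 1) * r 1 = r k / 4 := by field_simp
          have h21 : (‖c k‖ / r 1 - 1) * r 1 = ‖c k‖ - r 1 := by
            field_simp
          rw [← mul_le_mul_iff_of_pos_right r1pos, h20, h21]
          nlinarith
        have hf2 : (1:ℝ) ≤ ∏ i ∈ Finset.Ioc 1 K, (‖c k‖ / r i - 1) := by
          have hone := Finset.prod_le_prod (f := fun _ : ℕ => (1:ℝ))
            (g := fun i => ‖c k‖ / r i - 1) (s := Finset.Ioc 1 K)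
            (fun i _ => zero_le_one) ?_
          · simpa using hone
          intro i hi; rw [Finset.mem_Ioc] at hi
          have hipos := hrpos i (by omega)
          have h22 : r i ≤ S := hjS i (by omega) hi.2
          have h23 : 2 * r i ≤ ‖c k‖ := by nlinarith
          have h24 : 2 ≤ ‖c k‖ / r i := (le_div_iff₀ hipos).2 (by linarith)
          linarith
        have hf3 : (2:ℝ)^sN * ((4:ℝ)⁻¹)^M
            ≤ ∏ i ∈ Finset.Ioc K (k-1), (‖c k‖ / r i - 1) := by
          have heq : ∏ i ∈ Finset.Ioc K (k-1), ((2:ℝ)^(k-i) * (4:ℝ)⁻¹)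
              = (2:ℝ)^sN * ((4:ℝ)⁻¹)^M := by
            rw [Finset.prod_mul_distrib, Finset.prod_const, Nat.card_Ioc,
              Finset.prod_pow_eq_pow_sum]
          rw [← heq]
          apply Finset.prod_le_prod
          · intro i _; positivity
          · intro i hi; rw [Finset.mem_Ioc] at hi
            have hipos := hrpos i (by omega)
            have hile : 2 * r i ≤ r k := hd2 i (by omega) (by omega)
            have hx2 : 2 ≤ r k / r i := (le_div_iff₀ hipos).2 (by linarith)
            have hxg : (2:ℝ)^(k-i) ≤ r k / r i := by
              rw [le_div_iff₀ hipos]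
              exact mono i hi.1.le k (by omega)
            have hcd : 3/4 * (r k / r i) ≤ ‖c k‖ / r i := by
              rw [← mul_div_assoc]
              exact div_le_div_of_nonneg_right hzge hipos.le
            nlinarith
        calc (r k/(4*r 1)) * ((2:ℝ)^sN * ((4:ℝ)⁻¹)^M)
            = (r k/(4*r 1)) * 1 * ((2:ℝ)^sN * ((4:ℝ)⁻¹)^M) := by ring
        _ ≤ (∏ i ∈ Finset.Ioc 0 1, (‖c k‖ / r i - 1)) *
              (∏ i ∈ Finset.Ioc 1 K, (‖c k‖ / r i - 1)) *
              (∏ i ∈ Finset.Ioc K (k-1), (‖c k‖ / r i - 1)) := by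
            have hp1 : (0:ℝ) ≤ r k/(4*r 1) := by positivity
            have hp2 : (0:ℝ) ≤ (2:ℝ)^sN * ((4:ℝ)⁻¹)^M := by positivity
            have hq1' : (0:ℝ) ≤ ∏ i ∈ Finset.Ioc 0 1, (‖c k‖ / r i - 1) :=
              le_trans hp1 hf1
            have hq2' : (0:ℝ) ≤ ∏ i ∈ Finset.Ioc 1 K, (‖c k‖ / r i - 1) :=
              le_trans zero_le_one hf2
            have hstep2 : (r k/(4*r 1)) * 1
                ≤ (∏ i ∈ Finset.Ioc 0 1, (‖c k‖ / r i - 1)) *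
                  (∏ i ∈ Finset.Ioc 1 K, (‖c k‖ / r i - 1)) :=
              mul_le_mul hf1 hf2 zero_le_one hq1'
            exact mul_le_mul hstep2 hf3 hp2 (mul_nonneg hq1' hq2')
      -- tail factor
      have htail : Real.exp (-(8 * ρ k)) ≤ ∏ i ∈ Finset.Ioc k n, ‖1 - c k / a i‖ := by
        have hpt : ∀ i ∈ Finset.Ioc k n, Real.exp (-(2 * (‖c k‖ * (r i)⁻¹)))
            ≤ ‖1 - c k / a i‖ := by
          intro i hi; rw [Finset.mem_Ioc] at hi
          have hi1 : 1 ≤ i := by omega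
          have hipos := hrpos i hi1
          have hri : r (k+1) ≤ r i := by
            have h25 := mono (k+1) (by omega) i (by omega)
            have h26 : (1:ℝ) ≤ 2^(i-(k+1)) := one_le_pow₀ one_le_two
            nlinarith
          have hv : ‖c k‖ * (r i)⁻¹ ≤ 1/2 := by
            rw [← div_eq_mul_inv]
            calc ‖c k‖ / r i ≤ 2 * r k / r i := by
                  exact div_le_div_of_nonneg_right hzle hipos.le
            _ ≤ 2 * r k / r (k+1) := by
                  apply div_le_div_of_nonneg_left (by linarith) hrk1 hri
            _ = 2 * ρ k := by rw [hρdef]; ring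
            _ ≤ 1/2 := by linarith
          have hvnn : 0 ≤ ‖c k‖ * (r i)⁻¹ := by positivity
          calc Real.exp (-(2 * (‖c k‖ * (r i)⁻¹)))
              ≤ 1 - ‖c k‖ * (r i)⁻¹ := exp_neg_le _ hvnn hv
          _ = 1 - ‖c k‖ / r i := by rw [div_eq_mul_inv]
          _ ≤ ‖1 - c k / a i‖ := habs_lb2 (c k) i hi1
        calc Real.exp (-(8 * ρ k))
            ≤ Real.exp (∑ i ∈ Finset.Ioc k n, -(2 * (‖c k‖ * (r i)⁻¹))) := by
              rw [Real.exp_le_exp]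
              have h11 := sum_rinv_le r K h2 hposK k (by omega) n
              have hsnn : 0 ≤ ∑ i ∈ Finset.Ioc k n, (r i)⁻¹ := by
                apply Finset.sum_nonneg
                intro i hi; rw [Finset.mem_Ioc] at hi
                have := hrpos i (by omega)
                positivity
              have h27 : ∑ i ∈ Finset.Ioc k n, -(2 * (‖c k‖ * (r i)⁻¹))
                  = -(2 * (‖c k‖ * ∑ i ∈ Finset.Ioc k n, (r i)⁻¹)) := by
                rw [Finset.sum_neg_distrib, Finset.mul_sum, Finset.mul_sum]
              rw [h27]
              have h12 : ‖c k‖ * ∑ i ∈ Finset.Ioc k n, (r i)⁻¹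
                  ≤ (2 * r k) * (2 * (r (k+1))⁻¹) :=
                mul_le_mul hzle h11 hsnn (by positivity)
              have h13 : (2 * r k) * (2 * (r (k+1))⁻¹) = 4 * ρ k := by
                rw [hρdef]
                field_simp
                ring
              rw [h13] at h12
              linarith
        _ = ∏ i ∈ Finset.Ioc k n, Real.exp (-(2 * (‖c k‖ * (r i)⁻¹))) :=
              Real.exp_sum _ _
        _ ≤ ∏ i ∈ Finset.Ioc k n, ‖1 - c k / a i‖ :=
              Finset.prod_le_prod (fun i _ => (Real.exp_pos _).le) hpt
      have hexp18 : (1/8:ℝ) ≤ Real.exp (-(8 * ρ k)) := by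
        have := Real.add_one_le_exp (-(8 * ρ k))
        linarith
      -- combine three factors
      have hA1 : (0:ℝ) ≤ (r k/(4*r 1)) * ((2:ℝ)^sN * ((4:ℝ)⁻¹)^M) := by positivity
      calc (1/(2*(k:ℝ))) * ((r k/(4*r 1)) * ((2:ℝ)^sN * ((4:ℝ)⁻¹)^M)) * (1/8)
          = ((r k/(4*r 1)) * ((2:ℝ)^sN * ((4:ℝ)⁻¹)^M)) * ((1/(2*(k:ℝ))) * (1/8)) := by ring
      _ ≤ (∏ i ∈ Finset.Icc 1 (k-1), ‖1 - c k / a i‖) *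
            (‖1 - c k / a k‖ * ∏ i ∈ Finset.Ioc k n, ‖1 - c k / a i‖) := by
          apply mul_le_mul hfirst
          · calc (1/(2*(k:ℝ))) * (1/8)
                ≤ ‖1 - c k / a k‖ * Real.exp (-(8 * ρ k)) := by
                  apply mul_le_mul hmid hexp18 (by norm_num) (norm_nonneg _)
            _ ≤ ‖1 - c k / a k‖ *
                  ∏ i ∈ Finset.Ioc k n, ‖1 - c k / a i‖ :=
                mul_le_mul_of_nonneg_left htail (norm_nonneg _)
          · positivity
          · exact le_trans hA1 hfirst
    -- numeric conclusion
    have hsN : d + 2*k + 2*M ≤ sN := by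
      have hsub : Finset.Ioc K (k-6) ⊆ Finset.Ioc K (k-1) :=
        Finset.Ioc_subset_Ioc le_rfl (by omega)
      have h2' : ∑ i ∈ Finset.Ioc K (k-6), (k-i) ≤ sN := by
        rw [hsNdef]
        exact Finset.sum_le_sum_of_subset hsub
      have h3' : 6 * (k - 6 - K) ≤ ∑ i ∈ Finset.Ioc K (k-6), (k-i) := by
        calc 6 * (k-6-K) = ∑ _i ∈ Finset.Ioc K (k-6), 6 := by
              rw [Finset.sum_const, Nat.card_Ioc, smul_eq_mul, Nat.mul_comm]
        _ ≤ _ := Finset.sum_le_sum (fun i hi => by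
              rw [Finset.mem_Ioc] at hi; omega)
      omega
    have hpow2 : (2:ℝ)^d * 4^k ≤ (2:ℝ)^sN * ((4:ℝ)⁻¹)^M := by
      have h28 : (2:ℝ)^(d + 2*k + 2*M) ≤ 2^sN := pow_le_pow_right₀ one_le_two hsN
      calc (2:ℝ)^d * 4^k = (2:ℝ)^(d + 2*k + 2*M) * ((4:ℝ)⁻¹)^M := by
            rw [pow_add, pow_add, pow_mul, pow_mul]
            rw [show ((2:ℝ)^2) = 4 by norm_num]
            rw [mul_assoc, mul_assoc, ← mul_pow]
            norm_num
      _ ≤ (2:ℝ)^sN * ((4:ℝ)⁻¹)^M := mul_le_mul_of_nonneg_right h28 (by positivity)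
    have hB : 256 * r 1 ≤ ‖C‖ * (3/4)^N * 2^d := by
      rw [div_le_iff₀ hCpos] at hd256
      calc 256 * r 1 = (256 * r 1 * (4/3:ℝ)^N) * (3/4)^N := by
            rw [mul_assoc, ← mul_pow]
            norm_num
      _ ≤ ((2:ℝ)^d * ‖C‖) * (3/4)^N :=
            mul_le_mul_of_nonneg_right hd256 (by positivity)
      _ = ‖C‖ * (3/4)^N * 2^d := by ring
    have hk2 : (k:ℝ) * (k:ℝ) ≤ 4^k := by
      have h29 : (k:ℝ) ≤ 2^k := by
        have := Nat.lt_two_pow_self (n := k)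
        have h30 : (k:ℝ) < ((2:ℕ)^k : ℕ) := by exact_mod_cast this
        push_cast at h30
        linarith
      calc (k:ℝ) * (k:ℝ) ≤ (2:ℝ)^k * (2:ℝ)^k := by
            apply mul_le_mul h29 h29 hkR.le (by positivity)
      _ = 4^k := by rw [← mul_pow]; norm_num
    have hrN : (1:ℝ) ≤ r k ^ N := one_le_pow₀ (by linarith)
    have hnum : (k:ℝ) * r k < ‖C‖ * ((3/4)^N * r k ^ N) *
        ((1/(2*(k:ℝ))) * ((r k/(4*r 1)) * ((2:ℝ)^d * 4^k)) * (1/8)) := by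
      have hden : (0:ℝ) < 64 * (k:ℝ) * r 1 := by positivity
      rw [← mul_lt_mul_iff_of_pos_right hden]
      have hE : ‖C‖ * ((3/4)^N * r k ^ N) *
          ((1/(2*(k:ℝ))) * ((r k/(4*r 1)) * ((2:ℝ)^d * 4^k)) * (1/8)) * (64 * (k:ℝ) * r 1)
          = (‖C‖ * (3/4)^N * 2^d) * 4^k * r k * r k ^ N := by
        field_simp
        ring
      rw [hE]
      have hBnn : (0:ℝ) ≤ ‖C‖ * (3/4)^N * 2^d := le_trans (by positivity) hB
      have t1 : 256 * r 1 * ((k:ℝ)*(k:ℝ)) ≤ (‖C‖ * (3/4)^N * 2^d) * 4^k :=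
        mul_le_mul hB hk2 (by positivity) hBnn
      have t2 : 256 * r 1 * ((k:ℝ)*(k:ℝ)) * r k ≤ (‖C‖ * (3/4)^N * 2^d) * 4^k * r k :=
        mul_le_mul_of_nonneg_right t1 hrk.le
      have t3 : (‖C‖ * (3/4)^N * 2^d) * 4^k * r k
          ≤ (‖C‖ * (3/4)^N * 2^d) * 4^k * r k * r k ^ N := by
        apply le_mul_of_one_le_right _ hrN
        positivity
      have hpos5 : (0:ℝ) < r 1 * ((k:ℝ)*(k:ℝ)) * r k := by positivity
      nlinarith [t2, t3, hpos5]
    have hNlb : (3/4:ℝ)^N * r k ^ N ≤ ‖c k‖ ^ N := by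
      rw [← mul_pow]
      exact pow_le_pow_left₀ (by positivity) hzge N
    calc (k:ℝ) * r k < ‖C‖ * ((3/4)^N * r k ^ N) *
          ((1/(2*(k:ℝ))) * ((r k/(4*r 1)) * ((2:ℝ)^d * 4^k)) * (1/8)) := hnum
    _ ≤ ‖C‖ * ‖c k‖ ^ N *
          ((1/(2*(k:ℝ))) * ((r k/(4*r 1)) * ((2:ℝ)^sN * ((4:ℝ)⁻¹)^M)) * (1/8)) := by
        have w1 : ‖C‖ * ((3/4)^N * r k ^ N) ≤ ‖C‖ * ‖c k‖ ^ N :=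
          mul_le_mul_of_nonneg_left hNlb hCpos.le
        have w2 : (1/(2*(k:ℝ))) * ((r k/(4*r 1)) * ((2:ℝ)^d * 4^k)) * (1/8)
            ≤ (1/(2*(k:ℝ))) * ((r k/(4*r 1)) * ((2:ℝ)^sN * ((4:ℝ)⁻¹)^M)) * (1/8) := by
          have w3 : (r k/(4*r 1)) * ((2:ℝ)^d * 4^k) ≤ (r k/(4*r 1)) * ((2:ℝ)^sN * ((4:ℝ)⁻¹)^M) :=
            mul_le_mul_of_nonneg_left hpow2 (by positivity)
          have w4 := mul_le_mul_of_nonneg_left w3 (by positivity : (0:ℝ) ≤ 1/(2*(k:ℝ)))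
          exact mul_le_mul_of_nonneg_right w4 (by norm_num)
        apply mul_le_mul w1 w2 (by positivity) (by positivity)
    _ ≤ ‖C‖ * ‖c k‖ ^ N *
          ‖∏' j : ℕ, (1 - c k / a (j+1))‖ :=
        mul_le_mul_of_nonneg_left hLlb (by positivity)
    _ = ‖f (c k)‖ := (habs (c k)).symm
  -- final assembly
  obtain ⟨x, hx1, hx2⟩ := exists_between hsup
  have hxbot : x ≠ ⊥ := ne_bot_of_gt hx1
  have hxtop : x ≠ ⊤ := by
    intro h
    rw [h] at hx2
    exact absurd hx2 (by simp)
  set b := x.toReal with hbdef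
  have hxb : (b : EReal) = x := EReal.coe_toReal hxtop hxbot
  set l := ‖C‖ / (2 * Real.exp 1) with hldef
  have hl0 : (0:ℝ) ≤ l := by rw [hldef]; positivity
  have hlb : l < b := by
    rw [← EReal.coe_lt_coe_iff, hxb]
    exact hx1
  have hbpos : 0 < b := lt_of_le_of_lt hl0 hlb
  have hfreq : ∃ᶠ k : ℕ in atTop, b < (k:ℝ) * P k := by
    have h := frequently_lt_of_lt_limsup (by isBoundedDefault) (hxb ▸ hx2)
    apply h.mono
    intro k hk
    exact_mod_cast hk
  set b' := (l + b)/2 with hb'def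
  have hb'l : l < b' := by rw [hb'def]; linarith
  have hb'b : b' < b := by rw [hb'def]; linarith
  have hb'pos : 0 < b' := lt_of_le_of_lt hl0 hb'l
  have hε : 0 < 1 - b'/b := by
    have : b'/b < 1 := (div_lt_one hbpos).2 hb'b
    linarith
  refine ⟨1 - b'/b, hε, ?_⟩
  have hgev : ∀ᶠ k : ℕ in atTop, g k < b' := hgtend.eventually (eventually_lt_nhds hb'l)
  apply Frequently.mono (hfreq.and_eventually (hgev.and (hupper.and (hlower.and
    (eventually_ge_atTop 1)))))
  rintro k ⟨hkb, hgk, hup, hlo, hk1⟩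
  refine ⟨hlo, ?_⟩
  have hkP : 0 < (k:ℝ) * P k := lt_trans hbpos hkb
  have hrk1 : 0 < r (k+1) := hrpos (k+1) (by omega)
  calc ‖f (c k)‖ ≤ g k * (r (k+1) / ((k:ℝ) * P k)) := hup
  _ < b' * (r (k+1) / ((k:ℝ) * P k)) := by
      apply mul_lt_mul_of_pos_right hgk (by positivity)
  _ ≤ b' * (r (k+1) / b) := by
      apply mul_le_mul_of_nonneg_left _ hb'pos.le
      apply div_le_div_of_nonneg_left hrk1.le hbpos hkb.le
  _ = (1 - (1 - b'/b)) * r (k+1) := by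
      field_simp
      ring
end
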